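/- arXiv:2604.10428 — 7 statements merged into one kernel-verified Lean document; each statement's English description precedes it below -/
import Mathlib

section
/- Let η1, η2 ∈ [0,1] and let (A_i)_{i∈I} be a finite family of N×N complex matrices with Σ_i A_i† A_i = 1 (Kraus operators of a quantum channel C on ℂ^N). If (1/N) Σ_{k∈ZMod N} Σ_i |(A_i F)_{k,k}|² ≥ 1 − η1 (i.e. C ∈ S1(η1)) and (1/N) Σ_{k∈ZMod N} Σ_i |(F A_i)_{k,k}|² ≥ 1 − η2 (i.e. C ∈ S2(η2)), then Σ_i |Tr(A_i F)/N|² ≥ 1 − (η1 + η2) (i.e. C ∈ S3(η1+η2)). -/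
open scoped BigOperators ComplexConjugate
open Finset Matrix

/-- The `N × N` quantum Fourier transform matrix, with entries `F j k = ω^{jk} / √N`,
where `ω = exp(2πi/N)`. -/
noncomputable def QFT (N : ℕ) [NeZero N] : Matrix (ZMod N) (ZMod N) ℂ :=
  fun j k => Complex.exp (2 * (Real.pi : ℂ) * Complex.I * (j.val : ℂ) * (k.val : ℂ) / (N : ℂ))
    / (Real.sqrt N : ℂ)

noncomputable def zeta (N : ℕ) : ℂ := Complex.exp (2 * (Real.pi:ℂ) * Complex.I / N)

noncomputable def ec (N : ℕ) (x : ZMod N) : ℂ := zeta N ^ x.val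

section lemmas
variable {N : ℕ} [NeZero N]

lemma zmod_sum_pow (x : ℂ) : ∑ d : ZMod N, x ^ d.val = ∑ k ∈ Finset.range N, x ^ k :=
  Finset.sum_nbij' (fun d => d.val) (fun k => (k : ZMod N))
    (fun d _ => Finset.mem_range.mpr (ZMod.val_lt d)) (fun _ _ => Finset.mem_univ _)
    (fun d _ => ZMod.natCast_rightInverse d)
    (fun k hk => ZMod.val_cast_of_lt (Finset.mem_range.mp hk))
    (fun _ _ => rfl)

lemma zeta_pow_N : zeta N ^ N = 1 := (Complex.isPrimitiveRoot_exp N (NeZero.ne N)).pow_eq_one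

lemma zeta_pow_mod (m : ℕ) : zeta N ^ m = zeta N ^ (m % N) := by
  conv_lhs => rw [← Nat.mod_add_div m N, pow_add, pow_mul, zeta_pow_N, one_pow, mul_one]

lemma ec_add (x y : ZMod N) : ec N (x + y) = ec N x * ec N y := by
  rw [ec, ZMod.val_add, ← zeta_pow_mod, pow_add]; rfl

omit [NeZero N] in
lemma ec_zero : ec N (0 : ZMod N) = 1 := by
  rw [ec, ZMod.val_zero, pow_zero]

omit [NeZero N] in
lemma abs_ec (x : ZMod N) : ‖ec N x‖ = 1 := by
  rw [ec, norm_pow, zeta]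
  have : 2 * (Real.pi:ℂ) * Complex.I / N = ((2 * Real.pi / N : ℝ):ℂ) * Complex.I := by
    push_cast; ring
  rw [this, Complex.norm_exp_ofReal_mul_I, one_pow]

omit [NeZero N] in
lemma ec_ne_zero (x : ZMod N) : ec N x ≠ 0 := by
  intro h; have := abs_ec (N := N) x; rw [h] at this; simp at this

lemma conj_ec (x : ZMod N) : conj (ec N x) = ec N (-x) := by
  have h1 : ec N x * ec N (-x) = 1 := by rw [← ec_add]; simp [ec_zero]
  have h2 : ec N x * conj (ec N x) = 1 := by
    rw [Complex.mul_conj, ← Complex.sq_norm, abs_ec]; norm_num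
  exact mul_left_cancel₀ (ec_ne_zero x) (h2.trans h1.symm)

lemma ec_sum_eq_zero {a : ZMod N} (ha : a ≠ 0) : ∑ d : ZMod N, ec N (d * a) = 0 := by
  have hprim := Complex.isPrimitiveRoot_exp N (NeZero.ne N)
  have hform : ∀ d : ZMod N, ec N (d * a) = (zeta N ^ a.val) ^ d.val := by
    intro d; rw [ec, ZMod.val_mul, ← zeta_pow_mod, ← pow_mul, mul_comm]
  have hne : zeta N ^ a.val ≠ 1 := by
    apply hprim.pow_ne_one_of_pos_of_lt
    · exact (Nat.pos_of_ne_zero fun h => ha (by rwa [← ZMod.val_eq_zero])).ne'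
    · exact ZMod.val_lt a
  simp_rw [hform]
  rw [zmod_sum_pow, geom_sum_eq hne, ← pow_mul, mul_comm a.val N, pow_mul, zeta_pow_N,
    one_pow, sub_self, zero_div]

lemma ec_sum_delta (a : ZMod N) : ∑ d : ZMod N, ec N (d * a) = if a = 0 then (N : ℂ) else 0 := by
  split_ifs with h
  · subst h; simp [ec_zero]
  · exact ec_sum_eq_zero h

end lemmas

section lemmas2
variable {N : ℕ} [NeZero N]

lemma QFT_eq (j k : ZMod N) : QFT N j k = ec N (j * k) / (Real.sqrt N : ℂ) := by
  rw [QFT, ec, ZMod.val_mul, ← zeta_pow_mod, zeta, ← Complex.exp_nat_mul]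
  congr 2
  push_cast
  ring

lemma normSq_QFT (j k : ZMod N) : Complex.normSq (QFT N j k) = 1 / N := by
  rw [← Complex.sq_norm, QFT_eq, norm_div, abs_ec, Complex.norm_real, Real.norm_eq_abs,
    abs_of_nonneg (Real.sqrt_nonneg _)]
  rw [div_pow, one_pow, Real.sq_sqrt (Nat.cast_nonneg N)]

/-- Parseval over the additive characters. -/
lemma parseval (g : ZMod N → ℂ) :
    ∑ k : ZMod N, Complex.normSq (∑ d : ZMod N, ec N (k * d) * g d)
      = N * ∑ d : ZMod N, Complex.normSq (g d) := by
  have key : (∑ k : ZMod N, ((∑ d : ZMod N, ec N (k * d) * g d) *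
      conj (∑ d : ZMod N, ec N (k * d) * g d)) : ℂ)
      = (N : ℂ) * ∑ d : ZMod N, g d * conj (g d) := by
    have expand : ∀ k : ZMod N, (∑ d : ZMod N, ec N (k * d) * g d) *
        conj (∑ d : ZMod N, ec N (k * d) * g d)
        = ∑ d : ZMod N, ∑ d' : ZMod N, (g d * conj (g d')) * ec N (k * (d - d')) := by
      intro k
      rw [map_sum, Finset.sum_mul_sum]
      refine Finset.sum_congr rfl fun d _ => Finset.sum_congr rfl fun d' _ => ?_
      rw [_root_.map_mul, conj_ec, mul_sub]
      have : ec N (k * d - k * d') = ec N (k * d) * ec N (-(k * d')) := by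
        rw [← ec_add]; ring_nf
      rw [this]; ring
    simp_rw [expand]
    rw [Finset.sum_comm]
    have inner : ∀ d : ZMod N, ∑ k : ZMod N, ∑ d' : ZMod N,
        (g d * conj (g d')) * ec N (k * (d - d'))
        = ∑ d' : ZMod N, (g d * conj (g d')) * ∑ k : ZMod N, ec N (k * (d - d')) := by
      intro d
      rw [Finset.sum_comm]
      exact Finset.sum_congr rfl fun d' _ => by rw [Finset.mul_sum]
    simp_rw [inner, ec_sum_delta, mul_ite, mul_zero, sub_eq_zero]
    rw [Finset.mul_sum]
    refine Finset.sum_congr rfl fun d _ => ?_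
    rw [Finset.sum_eq_single d]
    · simp [mul_comm]
    · intro d' _ hne; rw [if_neg (fun h => hne h.symm)]
    · intro h; exact absurd (Finset.mem_univ d) h
  have : ∀ z : ℂ, z * conj z = (Complex.normSq z : ℂ) := fun z => by
    rw [Complex.mul_conj]
  simp_rw [this] at key
  exact_mod_cast key

end lemmas2

/-- If a quantum channel with Kraus operators `A i` is in `S1(η1)` and `S2(η2)`,
then it is in `S3(η1 + η2)`. -/
theorem s1_and_s2_implies_s3 (N : ℕ) [NeZero N] (η1 η2 : ℝ)
    (hη1 : η1 ∈ Set.Icc (0 : ℝ) 1) (hη2 : η2 ∈ Set.Icc (0 : ℝ) 1)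
    (I : Type) [Fintype I] (A : I → Matrix (ZMod N) (ZMod N) ℂ)
    (hK : ∑ i : I, (A i)ᴴ * A i = 1)
    (hS1 : (1 / N : ℝ) * ∑ k : ZMod N, ∑ i : I,
      ‖(A i * QFT N) k k‖ ^ 2 ≥ 1 - η1)
    (hS2 : (1 / N : ℝ) * ∑ k : ZMod N, ∑ i : I,
      ‖(QFT N * A i) k k‖ ^ 2 ≥ 1 - η2) :
    ∑ i : I, ‖(A i * QFT N).trace / (N : ℂ)‖ ^ 2 ≥ 1 - (η1 + η2) := by
  have hN : (0 : ℝ) < N := Nat.cast_pos.mpr (Nat.pos_of_ne_zero (NeZero.ne N))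
  set B : I → Matrix (ZMod N) (ZMod N) ℂ := fun i => A i * QFT N with hBdef
  set c : I → ZMod N → ℂ := fun i d => ∑ l : ZMod N, B i l (l - d) with hcdef
  -- total Frobenius mass is N
  have hBsum : ∑ i : I, ((B i)ᴴ * B i) = (QFT N)ᴴ * QFT N := by
    have : ∑ i : I, ((B i)ᴴ * B i) = (QFT N)ᴴ * (∑ i : I, (A i)ᴴ * A i) * QFT N := by
      rw [Matrix.mul_sum, Matrix.sum_mul]
      refine Finset.sum_congr rfl fun i _ => ?_
      simp [hBdef, Matrix.conjTranspose_mul, Matrix.mul_assoc]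
    rw [this, hK, Matrix.mul_one]
  have hmassC : (∑ i : I, ∑ k : ZMod N, ∑ m : ZMod N,
      (Complex.normSq (B i m k) : ℂ)) = (N : ℂ) := by
    have h1 : ∑ i : I, Matrix.trace ((B i)ᴴ * B i) = Matrix.trace ((QFT N)ᴴ * QFT N) := by
      rw [← Matrix.trace_sum, hBsum]
    have lhs_eq : ∑ i : I, Matrix.trace ((B i)ᴴ * B i)
        = ∑ i : I, ∑ k : ZMod N, ∑ m : ZMod N, (Complex.normSq (B i m k) : ℂ) := by
      refine Finset.sum_congr rfl fun i _ => ?_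
      rw [Matrix.trace]
      refine Finset.sum_congr rfl fun k _ => ?_
      rw [Matrix.diag_apply, Matrix.mul_apply]
      refine Finset.sum_congr rfl fun m _ => ?_
      rw [Matrix.conjTranspose_apply, Complex.star_def, ← Complex.normSq_eq_conj_mul_self]
    have rhs_eq : Matrix.trace ((QFT N)ᴴ * QFT N) = (N : ℂ) := by
      rw [Matrix.trace]
      have : ∀ k : ZMod N, ((QFT N)ᴴ * QFT N).diag k = ((1 : ℝ) : ℂ) := by
        intro k
        rw [Matrix.diag_apply, Matrix.mul_apply]
        have : ∀ m : ZMod N, (QFT N)ᴴ k m * QFT N m k = ((1 / N : ℝ) : ℂ) := by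
          intro m
          rw [Matrix.conjTranspose_apply, Complex.star_def, ← Complex.normSq_eq_conj_mul_self, normSq_QFT]
        simp_rw [this]
        rw [Finset.sum_const, Finset.card_univ, ZMod.card, nsmul_eq_mul]
        push_cast
        try field_simp
        exact div_self (Nat.cast_ne_zero.mpr (NeZero.ne N))
      simp_rw [this]
      rw [Finset.sum_const, Finset.card_univ, ZMod.card, nsmul_eq_mul]
      push_cast
      ring
    rw [← lhs_eq, h1, rhs_eq]
  have hmass : (∑ i : I, ∑ k : ZMod N, ∑ m : ZMod N, Complex.normSq (B i m k)) = (N : ℝ) := by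
    exact_mod_cast hmassC
  -- the y-identity
  have hy : ∀ (i : I) (k : ZMod N),
      (N : ℂ) * (QFT N * A i) k k = ∑ d : ZMod N, ec N (k * d) * c i d := by
    intro i k
    have hB : ∀ l d : ZMod N, B i l d = ∑ j : ZMod N, A i l j * (ec N (j * d) / (Real.sqrt N : ℂ)) := by
      intro l d
      rw [hBdef]
      simp only [Matrix.mul_apply]
      exact Finset.sum_congr rfl fun j _ => by rw [QFT_eq]
    symm
    calc ∑ d : ZMod N, ec N (k * d) * c i d
        = ∑ d : ZMod N, ∑ l : ZMod N, ∑ j : ZMod N,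
            (A i l j * (ec N (j * l) / (Real.sqrt N : ℂ))) * ec N (d * (k - j)) := by
          refine Finset.sum_congr rfl fun d _ => ?_
          rw [hcdef]
          simp only
          rw [Finset.mul_sum]
          refine Finset.sum_congr rfl fun l _ => ?_
          rw [hB, Finset.mul_sum]
          refine Finset.sum_congr rfl fun j _ => ?_
          have h1 : ec N (j * (l - d)) = ec N (j * l) * ec N (-(j * d)) := by
            rw [← ec_add]; ring_nf
          have h2 : ec N (k * d) * ec N (-(j * d)) = ec N (d * (k - j)) := by
            rw [← ec_add]; ring_nf
          rw [h1, ← h2]; ring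
      _ = ∑ l : ZMod N, ∑ j : ZMod N,
            (A i l j * (ec N (j * l) / (Real.sqrt N : ℂ))) * ∑ d : ZMod N, ec N (d * (k - j)) := by
          rw [Finset.sum_comm]
          refine Finset.sum_congr rfl fun l _ => ?_
          rw [Finset.sum_comm]
          exact Finset.sum_congr rfl fun j _ => by rw [Finset.mul_sum]
      _ = ∑ l : ZMod N, (A i l k * (ec N (k * l) / (Real.sqrt N : ℂ))) * (N : ℂ) := by
          refine Finset.sum_congr rfl fun l _ => ?_
          simp_rw [ec_sum_delta, sub_eq_zero, mul_ite, mul_zero]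
          rw [Finset.sum_eq_single k]
          · rw [if_pos rfl]
          · intro j _ hne; rw [if_neg (fun h => hne h.symm)]
          · intro h; exact absurd (Finset.mem_univ k) h
      _ = (N : ℂ) * (QFT N * A i) k k := by
          rw [Matrix.mul_apply, Finset.mul_sum]
          refine Finset.sum_congr rfl fun l _ => ?_
          rw [QFT_eq]
          ring
  -- per-i Parseval
  have hyNorm : ∀ i : I, ∑ k : ZMod N, Complex.normSq ((QFT N * A i) k k)
      = (1 / N) * ∑ d : ZMod N, Complex.normSq (c i d) := by
    intro i
    have h1 : ∀ k : ZMod N, Complex.normSq ((QFT N * A i) k k)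
        = (1 / (N : ℝ)^2) * Complex.normSq (∑ d : ZMod N, ec N (k * d) * c i d) := by
      intro k
      rw [← hy i k, Complex.normSq_mul, Complex.normSq_natCast]
      field_simp
    simp_rw [h1]
    rw [← Finset.mul_sum, parseval]
    field_simp
  -- Cauchy-Schwarz
  have hCS : ∀ (i : I) (d : ZMod N), Complex.normSq (c i d)
      ≤ N * ∑ l : ZMod N, Complex.normSq (B i l (l - d)) := by
    intro i d
    rw [hcdef]
    simp only
    rw [← Complex.sq_norm]
    calc ‖∑ l : ZMod N, B i l (l - d)‖ ^ 2
        ≤ (∑ l : ZMod N, ‖B i l (l - d)‖) ^ 2 := by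
          apply pow_le_pow_left₀ (norm_nonneg _)
          exact norm_sum_le _ _
      _ ≤ (Finset.univ.card : ℝ) * ∑ l : ZMod N, ‖B i l (l - d)‖ ^ 2 :=
          sq_sum_le_card_mul_sum_sq
      _ = N * ∑ l : ZMod N, Complex.normSq (B i l (l - d)) := by
          rw [Finset.card_univ, ZMod.card]
          simp_rw [Complex.sq_norm]
  -- reindexing: sum over all d of shifted diagonals is the full mass
  have hreindex : ∀ i : I, ∑ d : ZMod N, ∑ l : ZMod N, Complex.normSq (B i l (l - d))
      = ∑ k : ZMod N, ∑ m : ZMod N, Complex.normSq (B i m k) := by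
    intro i
    calc ∑ d : ZMod N, ∑ l : ZMod N, Complex.normSq (B i l (l - d))
        = ∑ l : ZMod N, ∑ d : ZMod N, Complex.normSq (B i l (l - d)) := Finset.sum_comm
      _ = ∑ l : ZMod N, ∑ m : ZMod N, Complex.normSq (B i l m) := by
          refine Finset.sum_congr rfl fun l _ => ?_
          exact Fintype.sum_equiv (Equiv.subLeft l) _ _ (fun d => rfl)
      _ = ∑ k : ZMod N, ∑ m : ZMod N, Complex.normSq (B i m k) := Finset.sum_comm
  -- real quantities
  set D := ∑ i : I, ∑ l : ZMod N, Complex.normSq (B i l l) with hDdef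
  set P := ∑ i : I, ∑ d : ZMod N, Complex.normSq (c i d) with hPdef
  set T := ∑ i : I, Complex.normSq (c i 0) with hTdef
  have hD : (N:ℝ) * (1 - η1) ≤ D := by
    have hswap : ∑ k : ZMod N, ∑ i : I, ‖(A i * QFT N) k k‖ ^ 2 = D := by
      rw [Finset.sum_comm]
      exact Finset.sum_congr rfl fun i _ => Finset.sum_congr rfl fun k _ => Complex.sq_norm _
    rw [hswap] at hS1
    have := mul_le_mul_of_nonneg_left hS1 hN.le
    rw [← mul_assoc, mul_one_div_cancel hN.ne', one_mul] at this
    exact this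
  have hP : (N:ℝ)^2 * (1 - η2) ≤ P := by
    have hswap : ∑ k : ZMod N, ∑ i : I, ‖(QFT N * A i) k k‖ ^ 2 = (1/N) * P := by
      rw [Finset.sum_comm]
      have : ∀ i : I, ∑ k : ZMod N, ‖(QFT N * A i) k k‖ ^ 2
          = (1/(N:ℝ)) * ∑ d : ZMod N, Complex.normSq (c i d) := by
        intro i
        rw [← hyNorm i]
        exact Finset.sum_congr rfl fun k _ => Complex.sq_norm _
      simp_rw [this]
      rw [← Finset.mul_sum, hPdef]
    rw [hswap] at hS2
    have := mul_le_mul_of_nonneg_left hS2 (mul_nonneg hN.le hN.le)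
    have hh : (N:ℝ) * N * (1/N * (1/N * P)) = P := by field_simp
    rw [hh] at this
    nlinarith [this]
  have hPT : P - T ≤ (N:ℝ) * ((N:ℝ) - D) := by
    have hper : ∀ i : I, ∑ d : ZMod N, Complex.normSq (c i d) - Complex.normSq (c i 0)
        ≤ (N:ℝ) * (∑ k : ZMod N, ∑ m : ZMod N, Complex.normSq (B i m k))
          - (N:ℝ) * ∑ l : ZMod N, Complex.normSq (B i l l) := by
      intro i
      have h0 : ∑ d : ZMod N, Complex.normSq (c i d)
          = Complex.normSq (c i 0) + ∑ d ∈ Finset.univ.erase 0, Complex.normSq (c i d) :=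
        (Finset.add_sum_erase _ _ (Finset.mem_univ (0 : ZMod N))).symm
      have h1 : ∑ d ∈ Finset.univ.erase 0, Complex.normSq (c i d)
          ≤ ∑ d ∈ Finset.univ.erase 0, (N:ℝ) * ∑ l : ZMod N, Complex.normSq (B i l (l - d)) :=
        Finset.sum_le_sum fun d _ => hCS i d
      have h2 : ∑ d ∈ Finset.univ.erase 0, (N:ℝ) * ∑ l : ZMod N, Complex.normSq (B i l (l - d))
          = (∑ d : ZMod N, (N:ℝ) * ∑ l : ZMod N, Complex.normSq (B i l (l - d)))
            - (N:ℝ) * ∑ l : ZMod N, Complex.normSq (B i l (l - 0)) := by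
        have := Finset.sum_erase_add Finset.univ
          (fun d : ZMod N => (N:ℝ) * ∑ l : ZMod N, Complex.normSq (B i l (l - d)))
          (Finset.mem_univ (0 : ZMod N))
        linarith [this]
      have h3 : (∑ d : ZMod N, (N:ℝ) * ∑ l : ZMod N, Complex.normSq (B i l (l - d)))
          = (N:ℝ) * (∑ k : ZMod N, ∑ m : ZMod N, Complex.normSq (B i m k)) := by
        rw [← Finset.mul_sum, hreindex i]
      have h4 : (N:ℝ) * ∑ l : ZMod N, Complex.normSq (B i l (l - 0))
          = (N:ℝ) * ∑ l : ZMod N, Complex.normSq (B i l l) := by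
        simp
      rw [h0]
      calc Complex.normSq (c i 0) + ∑ d ∈ Finset.univ.erase 0, Complex.normSq (c i d)
            - Complex.normSq (c i 0)
          = ∑ d ∈ Finset.univ.erase 0, Complex.normSq (c i d) := by ring
        _ ≤ ∑ d ∈ Finset.univ.erase 0, (N:ℝ) * ∑ l : ZMod N, Complex.normSq (B i l (l - d)) := h1
        _ = _ := by rw [h2, h3, h4]
    calc P - T = ∑ i : I, (∑ d : ZMod N, Complex.normSq (c i d) - Complex.normSq (c i 0)) := by
          rw [Finset.sum_sub_distrib]
      _ ≤ ∑ i : I, ((N:ℝ) * (∑ k : ZMod N, ∑ m : ZMod N, Complex.normSq (B i m k))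
            - (N:ℝ) * ∑ l : ZMod N, Complex.normSq (B i l l)) := Finset.sum_le_sum fun i _ => hper i
      _ = (N:ℝ) * (∑ i : I, ∑ k : ZMod N, ∑ m : ZMod N, Complex.normSq (B i m k)) - (N:ℝ) * D := by
          rw [Finset.sum_sub_distrib, ← Finset.mul_sum, ← Finset.mul_sum]
      _ = (N:ℝ) * ((N:ℝ) - D) := by rw [hmass]; ring
  -- conclude
  have hT : (N:ℝ)^2 * (1 - (η1 + η2)) ≤ T := by nlinarith [hP, hD, hPT]
  have hgoal : ∑ i : I, ‖(A i * QFT N).trace / (N : ℂ)‖ ^ 2 = T / (N:ℝ)^2 := by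
    have htr : ∀ i : I, (A i * QFT N).trace = c i 0 := by
      intro i
      rw [Matrix.trace, hcdef]
      exact Finset.sum_congr rfl fun l _ => by rw [Matrix.diag_apply, sub_zero]
    have : ∀ i : I, ‖(A i * QFT N).trace / (N : ℂ)‖ ^ 2
        = Complex.normSq (c i 0) / (N:ℝ)^2 := by
      intro i
      rw [Complex.sq_norm, htr i, Complex.normSq_div, Complex.normSq_natCast]
      ring
    simp_rw [this]
    rw [← Finset.sum_div, hTdef]
  rw [hgoal, ge_iff_le, le_div_iff₀ (by positivity)]
  nlinarith [hT]
end

section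
/- Let η ∈ [0,1] and let (A_i)_{i∈I} be a finite family of N×N complex matrices with Σ_i A_i† A_i = 1. If Σ_i |Tr(A_i F)/N|² ≥ 1 − η (i.e. C ∈ S3(η)), then both (1/N) Σ_{k∈ZMod N} Σ_i |(A_i F)_{k,k}|² ≥ 1 − η (C ∈ S1(η)) and (1/N) Σ_{k∈ZMod N} Σ_i |(F A_i)_{k,k}|² ≥ 1 − η (C ∈ S2(η)). -/
open scoped BigOperators ComplexConjugate
open Finset Matrix

lemma trace_abs_sq_le (N : ℕ) [NeZero N] (B : Matrix (ZMod N) (ZMod N) ℂ) :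
    ‖B.trace / (N : ℂ)‖ ^ 2 ≤ (1 / N : ℝ) * ∑ k : ZMod N, ‖B k k‖ ^ 2 := by
  have hN : (0 : ℝ) < N := Nat.cast_pos.mpr (NeZero.pos N)
  have h1 : ‖B.trace‖ ≤ ∑ k : ZMod N, ‖B k k‖ := by
    rw [Matrix.trace]
    exact norm_sum_le _ _
  have h2 : (∑ k : ZMod N, ‖B k k‖) ^ 2
      ≤ (N : ℝ) * ∑ k : ZMod N, ‖B k k‖ ^ 2 := by
    have := sq_sum_le_card_mul_sum_sq (s := (Finset.univ : Finset (ZMod N)))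
      (f := fun k => ‖B k k‖)
    simpa [ZMod.card N] using this
  have habs : ‖B.trace / (N : ℂ)‖ = ‖B.trace‖ / N := by
    rw [norm_div]
    simp
  rw [habs, div_pow]
  rw [div_le_iff₀ (by positivity)]
  calc ‖B.trace‖ ^ 2 ≤ (∑ k : ZMod N, ‖B k k‖) ^ 2 := by
        apply pow_le_pow_left₀ (norm_nonneg _) h1
    _ ≤ (N : ℝ) * ∑ k : ZMod N, ‖B k k‖ ^ 2 := h2
    _ = (1 / N : ℝ) * (∑ k : ZMod N, ‖B k k‖ ^ 2) * (N : ℝ) ^ 2 := by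
        field_simp

/-- If a quantum channel with Kraus operators `A i` is in `S3(η)`, then it is in
`S1(η)` and in `S2(η)`. -/
theorem s3_implies_s1_and_s2 (N : ℕ) [NeZero N] (η : ℝ)
    (hη : η ∈ Set.Icc (0 : ℝ) 1)
    (I : Type) [Fintype I] (A : I → Matrix (ZMod N) (ZMod N) ℂ)
    (hK : ∑ i : I, (A i)ᴴ * A i = 1)
    (hS3 : ∑ i : I, ‖(A i * QFT N).trace / (N : ℂ)‖ ^ 2 ≥ 1 - η) :
    ((1 / N : ℝ) * ∑ k : ZMod N, ∑ i : I,
      ‖(A i * QFT N) k k‖ ^ 2 ≥ 1 - η) ∧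
    ((1 / N : ℝ) * ∑ k : ZMod N, ∑ i : I,
      ‖(QFT N * A i) k k‖ ^ 2 ≥ 1 - η) := by
  constructor
  · calc (1 - η : ℝ) ≤ ∑ i : I, ‖(A i * QFT N).trace / (N : ℂ)‖ ^ 2 := hS3
      _ ≤ ∑ i : I, (1 / N : ℝ) * ∑ k : ZMod N, ‖(A i * QFT N) k k‖ ^ 2 :=
          Finset.sum_le_sum fun i _ => trace_abs_sq_le N _
      _ = (1 / N : ℝ) * ∑ k : ZMod N, ∑ i : I, ‖(A i * QFT N) k k‖ ^ 2 := by
          rw [← Finset.mul_sum, Finset.sum_comm]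
  · calc (1 - η : ℝ) ≤ ∑ i : I, ‖(A i * QFT N).trace / (N : ℂ)‖ ^ 2 := hS3
      _ = ∑ i : I, ‖(QFT N * A i).trace / (N : ℂ)‖ ^ 2 := by
          exact Finset.sum_congr rfl fun i _ => by rw [Matrix.trace_mul_comm]
      _ ≤ ∑ i : I, (1 / N : ℝ) * ∑ k : ZMod N, ‖(QFT N * A i) k k‖ ^ 2 :=
          Finset.sum_le_sum fun i _ => trace_abs_sq_le N _
      _ = (1 / N : ℝ) * ∑ k : ZMod N, ∑ i : I, ‖(QFT N * A i) k k‖ ^ 2 := by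
          rw [← Finset.mul_sum, Finset.sum_comm]
end

section
/- Let M ≥ 1 be an integer, η ∈ [0,1], and for each p ∈ Fin M let x_p = r_p·e^{iθ_p} ∈ ℂ with r_p ∈ [0,1] and θ_p ∈ ℝ. If |(1/M) Σ_{p} x_p|² ≥ 1 − η, then |(1/M) Σ_p e^{iθ_p}|² ≥ 1 − 2η; equivalently, (1/M²) Σ_{p,q} cos(θ_p − θ_q) ≥ 1 − 2η. -/
open scoped BigOperators
open Finset

lemma abs_sq_sum_exp (M : ℕ) (θ : Fin M → ℝ) :
    ‖∑ p : Fin M, Complex.exp ((θ p : ℂ) * Complex.I)‖ ^ 2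
      = ∑ p : Fin M, ∑ q : Fin M, Real.cos (θ p - θ q) := by
  set S := ∑ p : Fin M, Complex.exp ((θ p : ℂ) * Complex.I) with hS
  have h1 : (‖S‖) ^ 2 = (S * (starRingEnd ℂ) S).re := by
    rw [Complex.mul_conj]; simp [Complex.sq_norm]
  have h2 : S * (starRingEnd ℂ) S
      = ∑ p : Fin M, ∑ q : Fin M, Complex.exp (((θ p - θ q : ℝ) : ℂ) * Complex.I) := by
    rw [hS, map_sum, Finset.sum_mul_sum]
    refine Finset.sum_congr rfl fun p _ => Finset.sum_congr rfl fun q _ => ?_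
    rw [← Complex.exp_conj, ← Complex.exp_add]
    congr 1
    simp [Complex.conj_I]
    ring
  rw [h1, h2, Complex.re_sum]
  refine Finset.sum_congr rfl fun p _ => ?_
  rw [Complex.re_sum]
  exact Finset.sum_congr rfl fun q _ => Complex.exp_ofReal_mul_I_re _

/-- If complex numbers `x p = r p · e^{i θ p}` with moduli `r p ∈ [0,1]` have an
average of modulus close to 1, then the phases `θ p` are close to each other on
average: `|E_p[e^{iθ_p}]|² = E_{p,q}[cos(θ_p − θ_q)] ≥ 1 − 2η`. -/
theorem phases_close_on_average (M : ℕ) (hM : 1 ≤ M) (η : ℝ)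
    (hη : η ∈ Set.Icc (0 : ℝ) 1)
    (r θ : Fin M → ℝ) (hr : ∀ p, r p ∈ Set.Icc (0 : ℝ) 1)
    (x : Fin M → ℂ)
    (hx : ∀ p, x p = (r p : ℂ) * Complex.exp ((θ p : ℂ) * Complex.I))
    (h : ‖(1 / M : ℂ) * ∑ p : Fin M, x p‖ ^ 2 ≥ 1 - η) :
    (‖(1 / M : ℂ) * ∑ p : Fin M, Complex.exp ((θ p : ℂ) * Complex.I)‖ ^ 2
      ≥ 1 - 2 * η) ∧
    ((1 / (M : ℝ) ^ 2) * ∑ p : Fin M, ∑ q : Fin M, Real.cos (θ p - θ q) ≥ 1 - 2 * η) := by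
  have hMpos : (0 : ℝ) < M := by exact_mod_cast hM
  set S := ∑ p : Fin M, x p with hSdef
  set T := ∑ p : Fin M, Complex.exp ((θ p : ℂ) * Complex.I) with hTdef
  -- |S| ≤ Σ r
  have habs_exp : ∀ p : Fin M, ‖Complex.exp ((θ p : ℂ) * Complex.I)‖ = 1 := by
    intro p; exact Complex.norm_exp_ofReal_mul_I _
  have hS_le : ‖S‖ ≤ ∑ p : Fin M, r p := by
    refine (norm_sum_le univ x).trans ?_
    apply Finset.sum_le_sum
    intro p _
    rw [hx p, norm_mul, habs_exp p, mul_one, Complex.norm_real, Real.norm_eq_abs,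
      abs_of_nonneg (hr p).1]
  -- |T - S| ≤ M - Σ r
  have hTS : ‖T - S‖ ≤ (M : ℝ) - ∑ p : Fin M, r p := by
    have : T - S = ∑ p : Fin M, (((1 : ℂ) - r p) * Complex.exp ((θ p : ℂ) * Complex.I)) := by
      rw [hTdef, hSdef, ← Finset.sum_sub_distrib]
      refine Finset.sum_congr rfl fun p _ => ?_
      rw [hx p]; ring
    rw [this]
    refine (norm_sum_le univ _).trans ?_
    have : ∀ p : Fin M, ‖((1 : ℂ) - r p) * Complex.exp ((θ p : ℂ) * Complex.I)‖
        = 1 - r p := by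
      intro p
      rw [norm_mul, habs_exp p, mul_one]
      have : ((1 : ℂ) - r p) = ((1 - r p : ℝ) : ℂ) := by push_cast; ring
      rw [this, Complex.norm_real, Real.norm_eq_abs, abs_of_nonneg (by linarith [(hr p).2])]
    rw [Finset.sum_congr rfl fun p _ => this p, Finset.sum_sub_distrib]
    simp
  -- |T| ≥ 2|S| - M
  have hT_ge : ‖T‖ ≥ 2 * ‖S‖ - M := by
    have h1 : ‖S‖ ≤ ‖T‖ + ‖T - S‖ := by
      have := norm_add_le T (S - T)
      rw [add_sub_cancel, norm_sub_rev (S) T] at this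
      linarith
    linarith
  -- reduce to scalar inequalities
  have habsM : ‖1 / (M : ℂ)‖ = 1 / (M : ℝ) := by
    rw [norm_div, norm_one, Complex.norm_natCast]
  have hb : ‖(1 / M : ℂ) * S‖ = (1 / M : ℝ) * ‖S‖ := by
    rw [norm_mul, habsM]
  have ha : ‖(1 / M : ℂ) * T‖ = (1 / M : ℝ) * ‖T‖ := by
    rw [norm_mul, habsM]
  set a := ‖T‖ with hadef
  set b := ‖S‖ with hbdef
  have hbsq : ((1 / M : ℝ) * b) ^ 2 ≥ 1 - η := by rw [← hb]; exact h
  have ha0 : 0 ≤ a := norm_nonneg _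
  have hb0 : 0 ≤ b := norm_nonneg _
  have key : ((1 / M : ℝ) * a) ^ 2 ≥ 1 - 2 * η := by
    set a' := (1 / M : ℝ) * a with ha'
    set b' := (1 / M : ℝ) * b with hb'
    have ha'0 : 0 ≤ a' := by positivity
    have hb'0 : 0 ≤ b' := by positivity
    have hge : a' ≥ 2 * b' - 1 := by
      have h1 : a' * M = a := by rw [ha']; field_simp
      have h2 : b' * M = b := by rw [hb']; field_simp
      nlinarith [hT_ge, hMpos]
    obtain ⟨hη0, hη1⟩ := hη
    by_cases hcase : η ≥ 1/2
    · nlinarith [sq_nonneg a']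
    · push_neg at hcase
      have hb'half : b' ≥ 1/2 := by nlinarith
      have ha'nn : a' ≥ 0 := by linarith
      nlinarith [sq_nonneg (b' - 1), sq_nonneg (a' - (2*b' - 1))]
  constructor
  · rw [ha]; exact key
  · have hcos : ∑ p : Fin M, ∑ q : Fin M, Real.cos (θ p - θ q) = a ^ 2 := by
      rw [hadef, hTdef, ← abs_sq_sum_exp]
    rw [hcos]
    calc (1 / (M : ℝ) ^ 2) * a ^ 2 = ((1 / M : ℝ) * a) ^ 2 := by ring
      _ ≥ 1 - 2 * η := key
end

section
/- Let η1, η2, η ∈ [0,1] and let (B_j)_{j∈J} be a finite family of N×N complex matrices with Σ_j B_j† B_j = 1 (Kraus operators of a quantum channel P on ℂ^N). (i) If (1/N) Σ_{k∈ZMod N} Σ_j |(B_j F)_{−k,k}|² ≥ 1 − η1 (P ∈ T1(η1)) and (1/N) Σ_k Σ_j |(F† B_j)_{k,k}|² ≥ 1 − η2 (P ∈ T2(η2)), then Σ_j |Tr(F† B_j)/N|² ≥ 1 − (η1 + η2) (P ∈ T3(η1+η2)). (ii) Conversely, if Σ_j |Tr(F† B_j)/N|² ≥ 1 − η (P ∈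 T3(η)), then P ∈ T1(η) and P ∈ T2(η). -/
open scoped BigOperators ComplexConjugate
open Finset Matrix

namespace T123Aux

noncomputable def eps {N : ℕ} [NeZero N] (x : ZMod N) : ℂ :=
  Complex.exp (2 * (Real.pi : ℂ) * Complex.I * (x.val : ℂ) / (N : ℂ))

variable {N : ℕ} [NeZero N]

lemma hNC : (N : ℂ) ≠ 0 := Nat.cast_ne_zero.2 (NeZero.ne N)

lemma eps_natCast (a : ℕ) :
    eps ((a : ZMod N) : ZMod N) = Complex.exp (2 * (Real.pi : ℂ) * Complex.I * (a : ℂ) / (N : ℂ)) := by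
  have hval : ((a : ZMod N)).val = a % N := ZMod.val_natCast N a
  have ha : a = N * (a / N) + a % N := (Nat.div_add_mod a N).symm
  rw [eps, hval]
  conv_rhs => rw [ha]
  have hcast : ((N * (a / N) + a % N : ℕ) : ℂ) = (N : ℂ) * ((a / N : ℕ) : ℂ) + ((a % N : ℕ) : ℂ) := by
    push_cast; ring
  rw [hcast]
  have harg : 2 * (Real.pi : ℂ) * Complex.I * ((N : ℂ) * ((a / N : ℕ) : ℂ) + ((a % N : ℕ) : ℂ)) / (N : ℂ)
      = ((a / N : ℕ) : ℂ) * (2 * Real.pi * Complex.I)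
        + 2 * Real.pi * Complex.I * ((a % N : ℕ) : ℂ) / N := by
    have := hNC (N := N)
    field_simp
  rw [harg, show ((a / N : ℕ) : ℂ) = (((a / N : ℕ) : ℤ) : ℂ) from (Int.cast_natCast _).symm,
    Complex.exp_add, Complex.exp_int_mul_two_pi_mul_I, one_mul]

lemma eps_add (x y : ZMod N) : eps (x + y) = eps x * eps y := by
  have hx : ((x.val + y.val : ℕ) : ZMod N) = x + y := by
    push_cast
    rw [ZMod.natCast_val, ZMod.natCast_val, ZMod.cast_id, ZMod.cast_id]
  rw [← hx, eps_natCast, eps, eps, ← Complex.exp_add]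
  congr 1
  push_cast
  ring

lemma eps_zero : eps (0 : ZMod N) = 1 := by
  simp [eps, ZMod.val_zero]

lemma conj_eps (x : ZMod N) : conj (eps x) = eps (-x) := by
  have h1 : eps x * eps (-x) = 1 := by rw [← eps_add]; simp [eps_zero]
  have habs : ‖eps x‖ = 1 := by
    have : eps x = Complex.exp (((2 * Real.pi * x.val / N : ℝ) : ℂ) * Complex.I) := by
      rw [eps]; congr 1; push_cast; ring
    rw [this, Complex.norm_exp_ofReal_mul_I]
  have h2 : eps x * conj (eps x) = 1 := by
    rw [Complex.mul_conj, ← Complex.sq_norm, habs]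
    norm_num
  have := h1.trans h2.symm
  exact mul_left_cancel₀ (fun h => by simp [h] at h1) this.symm

lemma eps_ne_one {d : ZMod N} (hd : d ≠ 0) : eps d ≠ 1 := by
  intro h
  rw [eps, Complex.exp_eq_one_iff] at h
  obtain ⟨n, hn⟩ := h
  have hv : (d.val : ℂ) = (n : ℂ) * N := by
    have hπ : (Real.pi : ℂ) ≠ 0 := by exact_mod_cast Real.pi_ne_zero
    have h' := (div_eq_iff (hNC (N := N))).1 hn
    have hne : (2 * (Real.pi : ℂ) * Complex.I) ≠ 0 := by
      simp [Real.pi_ne_zero, Complex.I_ne_zero, hπ]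
    have key : (2 * (Real.pi : ℂ) * Complex.I) * (d.val : ℂ)
        = (2 * (Real.pi : ℂ) * Complex.I) * ((n : ℂ) * N) := by linear_combination h'
    exact mul_left_cancel₀ hne key
  have hvz : (d.val : ℤ) = n * N := by exact_mod_cast hv
  have h1 : 0 < d.val := Nat.pos_of_ne_zero (fun h0 => hd ((ZMod.val_eq_zero d).1 h0))
  have h2 : d.val < N := ZMod.val_lt d
  have hN : 0 < (N : ℤ) := by exact_mod_cast Nat.pos_of_ne_zero (NeZero.ne N)
  have h1' : 0 < (d.val : ℤ) := by exact_mod_cast h1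
  have h2' : (d.val : ℤ) < N := by exact_mod_cast h2
  rcases lt_trichotomy n 0 with hn0 | hn0 | hn0
  · nlinarith
  · rw [hn0, zero_mul] at hvz
    exact absurd hvz (by exact_mod_cast h1.ne')
  · nlinarith

lemma sum_eps (d : ZMod N) :
    ∑ k : ZMod N, eps (d * k) = if d = 0 then (N : ℂ) else 0 := by
  split_ifs with h
  · simp [h, eps_zero, ZMod.card]
  · have key : eps d * ∑ k : ZMod N, eps (d * k) = ∑ k : ZMod N, eps (d * k) := by
      rw [Finset.mul_sum]
      refine Fintype.sum_equiv (Equiv.addRight 1) _ _ (fun k => ?_)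
      rw [← eps_add]
      congr 1
      simp [Equiv.coe_addRight]
      ring
    have : (eps d - 1) * ∑ k : ZMod N, eps (d * k) = 0 := by ring_nf; linear_combination key
    rcases mul_eq_zero.1 this with h' | h'
    · exact absurd (by linear_combination h') (eps_ne_one h)
    · exact h'

section Layer2

variable {N : ℕ} [NeZero N]

lemma sqrtN_ne_zero : ((Real.sqrt N : ℝ) : ℂ) ≠ 0 := by
  have : (0 : ℝ) < Real.sqrt N := Real.sqrt_pos.2 (by exact_mod_cast Nat.pos_of_ne_zero (NeZero.ne N))
  exact_mod_cast this.ne'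

lemma sqrtN_sq : ((Real.sqrt N : ℝ) : ℂ) * ((Real.sqrt N : ℝ) : ℂ) = (N : ℂ) := by
  have : Real.sqrt N * Real.sqrt N = (N : ℝ) := Real.mul_self_sqrt (by positivity)
  exact_mod_cast congrArg (Complex.ofReal) this

lemma QFT_apply (j k : ZMod N) : QFT N j k = eps (j * k) / ((Real.sqrt N : ℝ) : ℂ) := by
  rw [QFT]
  congr 1
  have : ((j.val * k.val : ℕ) : ZMod N) = j * k := by
    push_cast
    rw [ZMod.natCast_val, ZMod.natCast_val, ZMod.cast_id, ZMod.cast_id]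
  rw [← this, eps_natCast]
  congr 1
  push_cast
  ring

lemma QFT_conj_apply (k m : ZMod N) :
    (QFT N)ᴴ k m = eps (-(m * k)) / ((Real.sqrt N : ℝ) : ℂ) := by
  rw [Matrix.conjTranspose_apply, QFT_apply]
  rw [star_div₀, ← conj_eps]
  · congr 1
    simp

lemma F_mul_Fh : QFT N * (QFT N)ᴴ = 1 := by
  ext p q
  rw [Matrix.mul_apply, Matrix.one_apply]
  have : ∀ k : ZMod N, QFT N p k * (QFT N)ᴴ k q = eps ((p - q) * k) / (N : ℂ) := by
    intro k
    rw [QFT_apply, QFT_conj_apply]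
    rw [div_mul_div_comm, sqrtN_sq, ← eps_add]
    congr 2
    ring
  rw [Finset.sum_congr rfl (fun k _ => this k), ← Finset.sum_div, sum_eps]
  by_cases h : p = q
  · rw [if_pos (by rw [h, sub_self]), if_pos h, div_self (hNC (N := N))]
  · rw [if_neg (fun hh => h (sub_eq_zero.1 hh)), if_neg h, zero_div]

/-- Cauchy–Schwarz for averages. -/
lemma abs_avg_sq_le (z : ZMod N → ℂ) :
    ‖(∑ k : ZMod N, z k) / (N : ℂ)‖ ^ 2
      ≤ (1 / N : ℝ) * ∑ k : ZMod N, ‖z k‖ ^ 2 := by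
  have hN0 : (0 : ℝ) < N := by exact_mod_cast Nat.pos_of_ne_zero (NeZero.ne N)
  have h1 : ‖∑ k : ZMod N, z k‖ ≤ ∑ k : ZMod N, ‖z k‖ := by
    simpa using norm_sum_le Finset.univ z
  have h2 : (∑ k : ZMod N, ‖z k‖) ^ 2
      ≤ (N : ℝ) * ∑ k : ZMod N, ‖z k‖ ^ 2 := by
    have := Finset.sum_mul_sq_le_sq_mul_sq Finset.univ (fun _ : ZMod N => (1 : ℝ))
      (fun k => ‖z k‖)
    simpa [ZMod.card] using this
  have habs : ‖(∑ k : ZMod N, z k) / (N : ℂ)‖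
      = ‖∑ k : ZMod N, z k‖ / N := by
    rw [norm_div]
    congr 1
    simp [Complex.norm_natCast]
  rw [habs, div_pow]
  rw [div_le_iff₀ (by positivity)]
  have h3 : ‖∑ k : ZMod N, z k‖ ^ 2 ≤ (∑ k : ZMod N, ‖z k‖) ^ 2 := by
    apply pow_le_pow_left₀ (norm_nonneg _) h1
  calc ‖∑ k : ZMod N, z k‖ ^ 2 ≤ (N : ℝ) * ∑ k, ‖z k‖ ^ 2 :=
        h3.trans h2
    _ = (1 / N : ℝ) * (∑ k, ‖z k‖ ^ 2) * (N : ℝ) ^ 2 := by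
        field_simp

end Layer2

section Layer3

variable {N : ℕ} [NeZero N]

lemma trace_eq_sum_diag (M : Matrix (ZMod N) (ZMod N) ℂ) :
    M.trace = ∑ k : ZMod N, M k k := rfl

lemma sum_a_eq_trace (C : Matrix (ZMod N) (ZMod N) ℂ) :
    ∑ k : ZMod N, (C * QFT N) (-k) k = ((QFT N)ᴴ * C).trace := by
  have h1 : ∑ k : ZMod N, (C * QFT N) (-k) k = ∑ k : ZMod N, (C * QFT N) k (-k) :=
    Fintype.sum_equiv (Equiv.neg (ZMod N)) _ _ (fun k => by simp)
  rw [h1, trace_eq_sum_diag]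
  simp only [Matrix.mul_apply]
  rw [Finset.sum_comm]
  refine Finset.sum_congr rfl fun k _ => Finset.sum_congr rfl fun m _ => ?_
  rw [QFT_apply, QFT_conj_apply]
  rw [show k * (-m) = -(m * k) by ring]
  ring

lemma FhFh_apply (p q : ZMod N) :
    ((QFT N)ᴴ * (QFT N)ᴴ) p q = if q = -p then 1 else 0 := by
  rw [Matrix.mul_apply]
  have h : ∀ m : ZMod N, (QFT N)ᴴ p m * (QFT N)ᴴ m q = eps ((-(p + q)) * m) / (N : ℂ) := by
    intro m
    rw [QFT_conj_apply, QFT_conj_apply, div_mul_div_comm, sqrtN_sq, ← eps_add]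
    congr 2
    ring
  rw [Finset.sum_congr rfl (fun m _ => h m), ← Finset.sum_div, sum_eps]
  by_cases hq : q = -p
  · rw [if_pos (by rw [hq]; ring), if_pos hq, div_self (hNC (N := N))]
  · rw [if_neg (fun hh => hq (by linear_combination -hh)), if_neg hq, zero_div]

lemma a_as_fdiag (C : Matrix (ZMod N) (ZMod N) ℂ) (k : ZMod N) :
    (C * QFT N) (-k) k = ((QFT N)ᴴ * ((QFT N)ᴴ * C) * QFT N) k k := by
  have hassoc : (QFT N)ᴴ * ((QFT N)ᴴ * C) * QFT N
      = ((QFT N)ᴴ * (QFT N)ᴴ) * (C * QFT N) := by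
    rw [Matrix.mul_assoc, Matrix.mul_assoc, Matrix.mul_assoc]
  have key : ((QFT N)ᴴ * (QFT N)ᴴ * (C * QFT N)) k k = (C * QFT N) (-k) k := by
    rw [Matrix.mul_apply]
    have : ∀ m : ZMod N, ((QFT N)ᴴ * (QFT N)ᴴ) k m * (C * QFT N) m k
        = if m = -k then (C * QFT N) m k else 0 := by
      intro m
      rw [FhFh_apply]
      split_ifs <;> simp
    rw [Finset.sum_congr rfl fun m _ => this m]
    simp
  rw [hassoc, key]

lemma fdiag_eq (M : Matrix (ZMod N) (ZMod N) ℂ) (k : ZMod N) :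
    ((QFT N)ᴴ * M * QFT N) k k
      = ∑ d : ZMod N, eps (d * k) * ((∑ m : ZMod N, M m (m + d)) / (N : ℂ)) := by
  have lhs_eq : ((QFT N)ᴴ * M * QFT N) k k
      = ∑ q : ZMod N, ∑ p : ZMod N, eps ((q - p) * k) * M p q / (N : ℂ) := by
    rw [Matrix.mul_apply]
    refine Finset.sum_congr rfl fun q _ => ?_
    rw [Matrix.mul_apply, Finset.sum_mul]
    refine Finset.sum_congr rfl fun p _ => ?_
    rw [QFT_conj_apply, QFT_apply]
    have : eps (-(p * k)) / ((Real.sqrt N : ℝ) : ℂ) * M p q * (eps (q * k) / ((Real.sqrt N : ℝ) : ℂ))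
        = (eps (-(p * k)) * eps (q * k)) * M p q / (((Real.sqrt N : ℝ) : ℂ) * ((Real.sqrt N : ℝ) : ℂ)) := by
      ring
    rw [this, sqrtN_sq, ← eps_add]
    congr 2
    ring
  have rhs_eq : ∑ d : ZMod N, eps (d * k) * ((∑ m : ZMod N, M m (m + d)) / (N : ℂ))
      = ∑ m : ZMod N, ∑ q : ZMod N, eps ((q - m) * k) * M m q / (N : ℂ) := by
    have step1 : ∀ d : ZMod N, eps (d * k) * ((∑ m : ZMod N, M m (m + d)) / (N : ℂ))
        = ∑ m : ZMod N, eps (d * k) * M m (m + d) / (N : ℂ) := by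
      intro d
      rw [Finset.sum_div, Finset.mul_sum]
      exact Finset.sum_congr rfl fun m _ => (mul_div_assoc _ _ _).symm
    rw [Finset.sum_congr rfl fun d _ => step1 d, Finset.sum_comm]
    refine Finset.sum_congr rfl fun m _ => ?_
    refine (Fintype.sum_equiv (Equiv.subRight m) _ _ fun q => ?_).symm
    simp only [Equiv.subRight_apply]
    rw [add_sub_cancel]
  rw [lhs_eq, rhs_eq, Finset.sum_comm]

end Layer3

section Layer4

variable {N : ℕ} [NeZero N]

lemma parseval (c : ZMod N → ℂ) :
    ∑ k : ZMod N, Complex.normSq (∑ d : ZMod N, eps (d * k) * c d)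
      = (N : ℝ) * ∑ d : ZMod N, Complex.normSq (c d) := by
  have hC : ∑ k : ZMod N, ((∑ d : ZMod N, eps (d * k) * c d)
        * conj (∑ d : ZMod N, eps (d * k) * c d))
      = (N : ℂ) * ∑ d : ZMod N, (c d * conj (c d)) := by
    have expand : ∀ k : ZMod N, (∑ d : ZMod N, eps (d * k) * c d)
          * conj (∑ d : ZMod N, eps (d * k) * c d)
        = ∑ d : ZMod N, ∑ e : ZMod N, eps ((d - e) * k) * (c d * conj (c e)) := by
      intro k
      rw [map_sum, Finset.sum_mul_sum]
      refine Finset.sum_congr rfl fun d _ => Finset.sum_congr rfl fun e _ => ?_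
      rw [_root_.map_mul, conj_eps, show (d - e) * k = d * k + -(e * k) by ring, eps_add]
      ring
    rw [Finset.sum_congr rfl fun k _ => expand k]
    rw [Finset.sum_comm]
    have inner : ∀ d : ZMod N,
        ∑ k : ZMod N, ∑ e : ZMod N, eps ((d - e) * k) * (c d * conj (c e))
          = (N : ℂ) * (c d * conj (c d)) := by
      intro d
      rw [Finset.sum_comm]
      have h1 : ∀ e : ZMod N, ∑ k : ZMod N, eps ((d - e) * k) * (c d * conj (c e))
          = (if e = d then (N : ℂ) else 0) * (c d * conj (c e)) := by
        intro e
        rw [← Finset.sum_mul, sum_eps]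
        congr 1
        simp only [sub_eq_zero]
        by_cases h : e = d
        · rw [if_pos h, if_pos (by rw [h])]
        · rw [if_neg h, if_neg (fun hh => h hh.symm)]
      rw [Finset.sum_congr rfl fun e _ => h1 e]
      simp [Finset.sum_ite_eq']
    rw [Finset.sum_congr rfl fun d _ => inner d, ← Finset.mul_sum]
  have cast1 : ∀ z : ℂ, z * conj z = ((Complex.normSq z : ℝ) : ℂ) := fun z => Complex.mul_conj z
  rw [Finset.sum_congr rfl fun k _ => cast1 _, Finset.sum_congr rfl fun d _ => cast1 _] at hC
  exact_mod_cast hC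

lemma frob_reindex (M : Matrix (ZMod N) (ZMod N) ℂ) :
    ∑ p : ZMod N, ∑ q : ZMod N, ‖M p q‖ ^ 2
      = ∑ d : ZMod N, ∑ m : ZMod N, ‖M m (m + d)‖ ^ 2 := by
  refine Eq.symm ?_
  calc ∑ d : ZMod N, ∑ m : ZMod N, ‖M m (m + d)‖ ^ 2
      = ∑ m : ZMod N, ∑ d : ZMod N, ‖M m (m + d)‖ ^ 2 := Finset.sum_comm
    _ = ∑ m : ZMod N, ∑ q : ZMod N, ‖M m q‖ ^ 2 := by
        refine Finset.sum_congr rfl fun m _ => ?_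
        refine (Fintype.sum_equiv (Equiv.subRight m) _ _ fun q => ?_).symm
        simp only [Equiv.subRight_apply]
        rw [add_sub_cancel]

lemma kraus_frob {J : Type} [Fintype J] (B : J → Matrix (ZMod N) (ZMod N) ℂ)
    (hK : ∑ j : J, (B j)ᴴ * B j = 1) :
    ∑ j : J, ∑ p : ZMod N, ∑ q : ZMod N, ‖((QFT N)ᴴ * B j) p q‖ ^ 2 = (N : ℝ) := by
  have hM : ∑ j : J, ((QFT N)ᴴ * B j)ᴴ * ((QFT N)ᴴ * B j) = 1 := by
    have : ∀ j : J, ((QFT N)ᴴ * B j)ᴴ * ((QFT N)ᴴ * B j) = (B j)ᴴ * B j := by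
      intro j
      rw [Matrix.conjTranspose_mul, Matrix.conjTranspose_conjTranspose,
        Matrix.mul_assoc, ← Matrix.mul_assoc (QFT N), F_mul_Fh, Matrix.one_mul]
    rw [Finset.sum_congr rfl fun j _ => this j, hK]
  have htr : ∑ j : J, (((QFT N)ᴴ * B j)ᴴ * ((QFT N)ᴴ * B j)).trace = (N : ℂ) := by
    rw [← Matrix.trace_sum, hM, Matrix.trace_one, ZMod.card]
  have hentry : ∀ j : J, (((QFT N)ᴴ * B j)ᴴ * ((QFT N)ᴴ * B j)).trace
      = ∑ p : ZMod N, ∑ q : ZMod N,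
          ((‖((QFT N)ᴴ * B j) p q‖ ^ 2 : ℝ) : ℂ) := by
    intro j
    rw [trace_eq_sum_diag]
    have hq : ∀ q : ZMod N, (((QFT N)ᴴ * B j)ᴴ * ((QFT N)ᴴ * B j)) q q
        = ∑ p : ZMod N, ((‖((QFT N)ᴴ * B j) p q‖ ^ 2 : ℝ) : ℂ) := by
      intro q
      rw [Matrix.mul_apply]
      refine Finset.sum_congr rfl fun p _ => ?_
      rw [Matrix.conjTranspose_apply, mul_comm,
        show star (((QFT N)ᴴ * B j) p q) = conj (((QFT N)ᴴ * B j) p q) from rfl,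
        Complex.mul_conj]
      norm_cast
      rw [Complex.sq_norm]
    rw [Finset.sum_congr rfl fun q _ => hq q, Finset.sum_comm]
  have hcast : ((∑ j : J, ∑ p : ZMod N, ∑ q : ZMod N,
      ‖((QFT N)ᴴ * B j) p q‖ ^ 2 : ℝ) : ℂ) = ((N : ℝ) : ℂ) := by
    rw [show ((N : ℝ) : ℂ) = (N : ℂ) by norm_cast, ← htr,
      Finset.sum_congr rfl fun j _ => hentry j]
    push_cast
    rfl
  exact_mod_cast hcast

end Layer4

section Layer5

variable {N : ℕ} [NeZero N]

lemma key_j (C : Matrix (ZMod N) (ZMod N) ℂ) :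
    (1 / N : ℝ) * (∑ k : ZMod N, ‖(C * QFT N) (-k) k‖ ^ 2)
      + (1 / N : ℝ) * (∑ k : ZMod N, ‖((QFT N)ᴴ * C) k k‖ ^ 2)
      - (1 / N : ℝ) * (∑ p : ZMod N, ∑ q : ZMod N, ‖((QFT N)ᴴ * C) p q‖ ^ 2)
    ≤ ‖((QFT N)ᴴ * C).trace / (N : ℂ)‖ ^ 2 := by
  set M : Matrix (ZMod N) (ZMod N) ℂ := (QFT N)ᴴ * C with hM
  set c : ZMod N → ℂ := fun d => (∑ m : ZMod N, M m (m + d)) / (N : ℂ) with hc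
  have hNR : (0 : ℝ) < N := by exact_mod_cast Nat.pos_of_ne_zero (NeZero.ne N)
  have ha : ∀ k : ZMod N, (C * QFT N) (-k) k = ∑ d : ZMod N, eps (d * k) * c d := fun k => by
    rw [a_as_fdiag, fdiag_eq]
  have hA : ∑ k : ZMod N, ‖(C * QFT N) (-k) k‖ ^ 2
      = (N : ℝ) * ∑ d : ZMod N, ‖c d‖ ^ 2 := by
    calc ∑ k : ZMod N, ‖(C * QFT N) (-k) k‖ ^ 2
        = ∑ k : ZMod N, Complex.normSq (∑ d : ZMod N, eps (d * k) * c d) := by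
          refine Finset.sum_congr rfl fun k _ => ?_
          rw [ha k, Complex.sq_norm]
      _ = (N : ℝ) * ∑ d : ZMod N, Complex.normSq (c d) := parseval c
      _ = (N : ℝ) * ∑ d : ZMod N, ‖c d‖ ^ 2 := by
          congr 1
          exact Finset.sum_congr rfl fun d _ => (Complex.sq_norm _).symm
  have hc0 : M.trace / (N : ℂ) = c 0 := by
    rw [trace_eq_sum_diag, hc]
    congr 1
    exact Finset.sum_congr rfl fun m _ => by rw [add_zero]
  have hsplit : ∑ d : ZMod N, ‖c d‖ ^ 2
      = ‖c 0‖ ^ 2 + ∑ d ∈ Finset.univ.erase 0, ‖c d‖ ^ 2 :=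
    (Finset.add_sum_erase _ _ (Finset.mem_univ 0)).symm
  have hbound : ∀ d : ZMod N,
      ‖c d‖ ^ 2 ≤ (1 / N : ℝ) * ∑ m : ZMod N, ‖M m (m + d)‖ ^ 2 :=
    fun d => abs_avg_sq_le _
  have hfrob : ∑ p : ZMod N, ∑ q : ZMod N, ‖M p q‖ ^ 2
      = ∑ d : ZMod N, ∑ m : ZMod N, ‖M m (m + d)‖ ^ 2 := frob_reindex M
  have hsplit2 : ∑ d : ZMod N, ∑ m : ZMod N, ‖M m (m + d)‖ ^ 2
      = (∑ m : ZMod N, ‖M m m‖ ^ 2)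
        + ∑ d ∈ Finset.univ.erase 0, ∑ m : ZMod N, ‖M m (m + d)‖ ^ 2 := by
    rw [← Finset.add_sum_erase _ _ (Finset.mem_univ (0 : ZMod N))]
    congr 1
    exact Finset.sum_congr rfl fun m _ => by rw [add_zero]
  have hEr : ∑ d ∈ Finset.univ.erase 0, ‖c d‖ ^ 2
      ≤ (1 / N : ℝ) * ∑ d ∈ Finset.univ.erase 0, ∑ m : ZMod N, ‖M m (m + d)‖ ^ 2 := by
    rw [Finset.mul_sum]
    exact Finset.sum_le_sum fun d _ => hbound d
  have hdiag : ∑ k : ZMod N, ‖M k k‖ ^ 2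
      = ∑ m : ZMod N, ‖M m m‖ ^ 2 := rfl
  rw [hc0, hA, hfrob, hsplit2]
  have h1N : (1 / N : ℝ) * ((N : ℝ) * ∑ d : ZMod N, ‖c d‖ ^ 2)
      = ∑ d : ZMod N, ‖c d‖ ^ 2 := by
    field_simp
  rw [h1N, hsplit]
  rw [mul_add]
  linarith [hEr]

end Layer5

end T123Aux

open T123Aux

/-- For a quantum channel `P` with Kraus operators `B j`:
(i) if `P ∈ T1(η1)` and `P ∈ T2(η2)` then `P ∈ T3(η1 + η2)`;
(ii) if `P ∈ T3(η)` then `P ∈ T1(η)` and `P ∈ T2(η)`. -/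
theorem t1_t2_t3_equivalences (N : ℕ) [NeZero N] (η1 η2 η : ℝ)
    (hη1 : η1 ∈ Set.Icc (0 : ℝ) 1) (hη2 : η2 ∈ Set.Icc (0 : ℝ) 1)
    (hη : η ∈ Set.Icc (0 : ℝ) 1)
    (J : Type) [Fintype J] (B : J → Matrix (ZMod N) (ZMod N) ℂ)
    (hK : ∑ j : J, (B j)ᴴ * B j = 1) :
    ((((1 / N : ℝ) * ∑ k : ZMod N, ∑ j : J,
        ‖(B j * QFT N) (-k) k‖ ^ 2 ≥ 1 - η1) ∧
      ((1 / N : ℝ) * ∑ k : ZMod N, ∑ j : J,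
        ‖((QFT N)ᴴ * B j) k k‖ ^ 2 ≥ 1 - η2)) →
      ∑ j : J, ‖((QFT N)ᴴ * B j).trace / (N : ℂ)‖ ^ 2 ≥ 1 - (η1 + η2)) ∧
    ((∑ j : J, ‖((QFT N)ᴴ * B j).trace / (N : ℂ)‖ ^ 2 ≥ 1 - η) →
      (((1 / N : ℝ) * ∑ k : ZMod N, ∑ j : J,
        ‖(B j * QFT N) (-k) k‖ ^ 2 ≥ 1 - η) ∧
      ((1 / N : ℝ) * ∑ k : ZMod N, ∑ j : J,
        ‖((QFT N)ᴴ * B j) k k‖ ^ 2 ≥ 1 - η))) := by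
  have hNR : (0 : ℝ) < N := by exact_mod_cast Nat.pos_of_ne_zero (NeZero.ne N)
  have hswap1 : ∑ k : ZMod N, ∑ j : J, ‖(B j * QFT N) (-k) k‖ ^ 2
      = ∑ j : J, ∑ k : ZMod N, ‖(B j * QFT N) (-k) k‖ ^ 2 := Finset.sum_comm
  have hswap2 : ∑ k : ZMod N, ∑ j : J, ‖((QFT N)ᴴ * B j) k k‖ ^ 2
      = ∑ j : J, ∑ k : ZMod N, ‖((QFT N)ᴴ * B j) k k‖ ^ 2 := Finset.sum_comm
  -- per-j Cauchy-Schwarz bounds (for part (ii))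
  have hcs1 : ∀ j : J, ‖((QFT N)ᴴ * B j).trace / (N : ℂ)‖ ^ 2
      ≤ (1 / N : ℝ) * ∑ k : ZMod N, ‖(B j * QFT N) (-k) k‖ ^ 2 := by
    intro j
    have := abs_avg_sq_le (fun k : ZMod N => (B j * QFT N) (-k) k)
    rwa [sum_a_eq_trace] at this
  have hcs2 : ∀ j : J, ‖((QFT N)ᴴ * B j).trace / (N : ℂ)‖ ^ 2
      ≤ (1 / N : ℝ) * ∑ k : ZMod N, ‖((QFT N)ᴴ * B j) k k‖ ^ 2 := by
    intro j
    have := abs_avg_sq_le (fun k : ZMod N => ((QFT N)ᴴ * B j) k k)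
    rwa [← trace_eq_sum_diag] at this
  constructor
  · rintro ⟨h1, h2⟩
    have hsum : ∑ j : J,
        ((1 / N : ℝ) * (∑ k : ZMod N, ‖(B j * QFT N) (-k) k‖ ^ 2)
          + (1 / N : ℝ) * (∑ k : ZMod N, ‖((QFT N)ᴴ * B j) k k‖ ^ 2)
          - (1 / N : ℝ) * (∑ p : ZMod N, ∑ q : ZMod N, ‖((QFT N)ᴴ * B j) p q‖ ^ 2))
        ≤ ∑ j : J, ‖((QFT N)ᴴ * B j).trace / (N : ℂ)‖ ^ 2 :=
      Finset.sum_le_sum fun j _ => key_j (B j)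
    have hexp : ∑ j : J,
        ((1 / N : ℝ) * (∑ k : ZMod N, ‖(B j * QFT N) (-k) k‖ ^ 2)
          + (1 / N : ℝ) * (∑ k : ZMod N, ‖((QFT N)ᴴ * B j) k k‖ ^ 2)
          - (1 / N : ℝ) * (∑ p : ZMod N, ∑ q : ZMod N, ‖((QFT N)ᴴ * B j) p q‖ ^ 2))
        = (1 / N : ℝ) * (∑ j : J, ∑ k : ZMod N, ‖(B j * QFT N) (-k) k‖ ^ 2)
          + (1 / N : ℝ) * (∑ j : J, ∑ k : ZMod N, ‖((QFT N)ᴴ * B j) k k‖ ^ 2)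
          - (1 / N : ℝ) * (∑ j : J, ∑ p : ZMod N, ∑ q : ZMod N,
              ‖((QFT N)ᴴ * B j) p q‖ ^ 2) := by
      rw [Finset.sum_sub_distrib, Finset.sum_add_distrib, ← Finset.mul_sum, ← Finset.mul_sum,
        ← Finset.mul_sum]
    have hkr : (1 / N : ℝ) * (∑ j : J, ∑ p : ZMod N, ∑ q : ZMod N,
        ‖((QFT N)ᴴ * B j) p q‖ ^ 2) = 1 := by
      rw [kraus_frob B hK]
      field_simp
    rw [hexp, hkr] at hsum
    rw [hswap1] at h1
    rw [hswap2] at h2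
    linarith
  · intro h3
    constructor
    · have : ∑ j : J, ‖((QFT N)ᴴ * B j).trace / (N : ℂ)‖ ^ 2
          ≤ ∑ j : J, (1 / N : ℝ) * ∑ k : ZMod N, ‖(B j * QFT N) (-k) k‖ ^ 2 :=
        Finset.sum_le_sum fun j _ => hcs1 j
      rw [← Finset.mul_sum, ← hswap1] at this
      linarith
    · have : ∑ j : J, ‖((QFT N)ᴴ * B j).trace / (N : ℂ)‖ ^ 2
          ≤ ∑ j : J, (1 / N : ℝ) * ∑ k : ZMod N, ‖((QFT N)ᴴ * B j) k k‖ ^ 2 :=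
        Finset.sum_le_sum fun j _ => hcs2 j
      rw [← Finset.mul_sum, ← hswap2] at this
      linarith
end

section
/- Let η1, η2 ∈ [0,1] and let (A_i)_{i∈I} be a finite family of N×N complex matrices with Σ_i A_i† A_i = 1. Assume the S1(η1) condition (1/N) Σ_{k∈ZMod N} Σ_i |(A_i F)_{k,k}|² ≥ 1 − η1 and the S2(η2) condition (1/N) Σ_k Σ_i |(F A_i)_{k,k}|² ≥ 1 − η2. Then the threefold-composed channel C³, whose Kraus operators are the triple products (A_i A_j A_m)_{(i,j,m)∈I³}, satisfies: (i) the T1 condition (1/N) Σ_{k∈ZMod N} Σ_{i,j,m} |(A_i A_j A_m F)_{−k,k}|² ≥ 1 − (√η1 + √(√η1 + √η2)); and (ii) the T2 condition (1/N) Σ_k Σ_{i,j,m} |(F† A_i A_j A_m)_{k,k}|² ≥ 1 − (√η2 + √(√η1 + √η2)). -/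
open scoped BigOperators ComplexConjugate
open Finset Matrix

set_option linter.unusedSectionVars false

namespace CubeAux

variable {n : Type} [Fintype n]

noncomputable def cdot {n : Type} [Fintype n] (x y : n → ℂ) : ℂ :=
  ∑ j, (starRingEnd ℂ) (x j) * y j

noncomputable def nsq {n : Type} [Fintype n] (x : n → ℂ) : ℝ := ∑ j, ‖x j‖ ^ 2

lemma nsq_nonneg (x : n → ℂ) : 0 ≤ nsq x :=
  Finset.sum_nonneg fun _ _ => by positivity

lemma cdot_self (x : n → ℂ) : cdot x x = (nsq x : ℝ) := by
  simp only [cdot, nsq, Complex.conj_mul']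
  push_cast
  rfl

lemma cdot_conj (x y : n → ℂ) : cdot x y = (starRingEnd ℂ) (cdot y x) := by
  simp only [cdot, map_sum, _root_.map_mul, Complex.conj_conj]
  exact Finset.sum_congr rfl fun j _ => (mul_comm _ _)

lemma abs_cdot_symm (x y : n → ℂ) : ‖cdot x y‖ = ‖cdot y x‖ := by
  rw [cdot_conj]; exact RCLike.norm_conj _

/-- Cauchy–Schwarz for `cdot`. -/
lemma cdot_cs (x y : n → ℂ) : ‖cdot x y‖ ^ 2 ≤ nsq x * nsq y := by
  have h1 : ‖cdot x y‖ ≤ ∑ j, ‖x j‖ * ‖y j‖ := by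
    refine (norm_sum_le _ _).trans ?_
    refine Finset.sum_le_sum fun j _ => ?_
    rw [norm_mul, RCLike.norm_conj]
  have h2 : (∑ j, ‖x j‖ * ‖y j‖) ^ 2 ≤ nsq x * nsq y :=
    Finset.sum_mul_sq_le_sq_mul_sq _ _ _
  calc ‖cdot x y‖ ^ 2 ≤ (∑ j, ‖x j‖ * ‖y j‖) ^ 2 := by
        apply pow_le_pow_left₀ (norm_nonneg _) h1
    _ ≤ nsq x * nsq y := h2

lemma cdot_mulVec (M : Matrix n n ℂ) (x y : n → ℂ) :
    cdot (M *ᵥ x) y = cdot x (Mᴴ *ᵥ y) := by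
  simp only [cdot, Matrix.mulVec, dotProduct, Matrix.conjTranspose_apply, map_sum,
    _root_.map_mul, Complex.star_def, Finset.sum_mul, Finset.mul_sum]
  rw [Finset.sum_comm]
  exact Finset.sum_congr rfl fun a _ => Finset.sum_congr rfl fun b _ => by ring

lemma cdot_add_right (x y z : n → ℂ) : cdot x (y + z) = cdot x y + cdot x z := by
  simp only [cdot, Pi.add_apply, mul_add, Finset.sum_add_distrib]

lemma cdot_sub_right (x y z : n → ℂ) : cdot x (y - z) = cdot x y - cdot x z := by
  simp only [cdot, Pi.sub_apply, mul_sub, Finset.sum_sub_distrib]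

lemma cdot_smul_right (c : ℂ) (x y : n → ℂ) : cdot x (c • y) = c * cdot x y := by
  simp only [cdot, Pi.smul_apply, smul_eq_mul, Finset.mul_sum]
  exact Finset.sum_congr rfl fun j _ => by ring

lemma cdot_smul_left (c : ℂ) (x y : n → ℂ) :
    cdot (c • x) y = (starRingEnd ℂ) c * cdot x y := by
  simp only [cdot, Pi.smul_apply, smul_eq_mul, _root_.map_mul, Finset.mul_sum]
  exact Finset.sum_congr rfl fun j _ => by ring

lemma cdot_sum_right {S : Type} (s : Finset S) (x : n → ℂ) (w : S → n → ℂ) :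
    cdot x (∑ t ∈ s, w t) = ∑ t ∈ s, cdot x (w t) := by
  simp only [cdot, Finset.sum_apply, Finset.mul_sum]
  exact Finset.sum_comm

lemma sum_mulVec {S : Type} [Fintype S] (X : S → Matrix n n ℂ) (v : n → ℂ) :
    (∑ t : S, X t) *ᵥ v = ∑ t : S, (X t) *ᵥ v := by
  ext a
  simp only [Matrix.mulVec, dotProduct, Matrix.sum_apply, Finset.sum_apply,
    Finset.sum_mul]
  exact Finset.sum_comm

/-- Kraus families preserve the total squared norm. -/
lemma kraus_norm {J : Type} [DecidableEq n] [Fintype J] (M : J → Matrix n n ℂ)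
    (hM : ∑ t : J, (M t)ᴴ * M t = 1) (v : n → ℂ) :
    ∑ t : J, nsq ((M t) *ᵥ v) = nsq v := by
  have h : ∀ t : J, (nsq ((M t) *ᵥ v) : ℂ) = cdot v (((M t)ᴴ * (M t)) *ᵥ v) := by
    intro t
    rw [← cdot_self, cdot_mulVec, Matrix.mulVec_mulVec]
  have h2 : ((∑ t : J, nsq ((M t) *ᵥ v) : ℝ) : ℂ) = (nsq v : ℂ) := by
    push_cast
    rw [Finset.sum_congr rfl (fun t _ => h t), ← cdot_sum_right, ← sum_mulVec, hM,
      Matrix.one_mulVec, cdot_self]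
  exact_mod_cast h2

/-- The quadratic-form bound `q(x) ≤ ‖x‖²`. -/
lemma qbound {J : Type} [DecidableEq n] [Fintype J] (M : J → Matrix n n ℂ)
    (hM : ∑ t : J, (M t)ᴴ * M t = 1) (χ : n → ℂ) (hχ : nsq χ = 1) (x : n → ℂ) :
    ∑ t : J, ‖cdot χ ((M t) *ᵥ x)‖ ^ 2 ≤ nsq x := by
  calc ∑ t : J, ‖cdot χ ((M t) *ᵥ x)‖ ^ 2
      ≤ ∑ t : J, nsq ((M t) *ᵥ x) := by
        refine Finset.sum_le_sum fun t _ => ?_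
        have := cdot_cs χ ((M t) *ᵥ x)
        rwa [hχ, one_mul] at this
    _ = nsq x := kraus_norm M hM x


lemma scalarB (ε c R : ℝ) (hε0 : 0 ≤ ε) (hε1 : ε ≤ 1) (hc0 : 0 ≤ c) (hc1 : c ≤ 1)
    (hR0 : 0 ≤ R) (hR : R ^ 2 ≤ ε * (1 - c ^ 2)) :
    c ^ 2 - (c * Real.sqrt (1 - ε) - R) ^ 2 ≤ Real.sqrt ε := by
  set s := Real.sqrt ε with hs
  set t := Real.sqrt (1 - ε) with ht
  have hs0 : 0 ≤ s := Real.sqrt_nonneg _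
  have ht0 : 0 ≤ t := Real.sqrt_nonneg _
  have hs2 : s ^ 2 = ε := Real.sq_sqrt hε0
  have ht2 : t ^ 2 = 1 - ε := Real.sq_sqrt (by linarith)
  rcases le_or_gt (c ^ 2) ε with hcase | hcase
  · have hεs : ε ≤ s := by nlinarith
    nlinarith [sq_nonneg (c * t - R)]
  · set u := Real.sqrt (1 - c ^ 2) with hu
    have hu0 : 0 ≤ u := Real.sqrt_nonneg _
    have hu2 : u ^ 2 = 1 - c ^ 2 := Real.sq_sqrt (by nlinarith)
    have hRsu : R ≤ s * u := by nlinarith [mul_nonneg hs0 hu0, sq_nonneg (s * u - R), sq_nonneg (s * u + R)]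
    have hsu_ct : s * u ≤ c * t := by
      nlinarith [mul_nonneg hs0 hu0, mul_nonneg hc0 ht0, sq_nonneg (c * t - s * u), sq_nonneg (c * t + s * u)]
    have step1 : c ^ 2 - (c * t - R) ^ 2 ≤ c ^ 2 - (c * t - s * u) ^ 2 := by nlinarith
    have key : s * (c ^ 2 - u ^ 2) + 2 * t * c * u ≤ 1 := by
      nlinarith [sq_nonneg (s - (c ^ 2 - u ^ 2)), sq_nonneg (t - 2 * c * u)]
    have step2 : c ^ 2 - (c * t - s * u) ^ 2 ≤ s := by nlinarith
    linarith

lemma cdot_sub_left {n : Type} [Fintype n] (x y z : n → ℂ) :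
    cdot (x - y) z = cdot x z - cdot y z := by
  simp only [cdot, Pi.sub_apply, map_sub, sub_mul, Finset.sum_sub_distrib]

lemma cdot_one_of_nsq {n : Type} [Fintype n] (φ : n → ℂ) (hφ : nsq φ = 1) :
    cdot φ φ = 1 := by rw [cdot_self, hφ]; norm_num

lemma nsq_sub_proj {n : Type} [Fintype n] (φ x : n → ℂ) (hφ : cdot φ φ = 1) :
    nsq (x - (cdot φ x) • φ) = nsq x - ‖cdot φ x‖ ^ 2 := by
  set a := cdot φ x with ha
  have hxφ : cdot x φ = (starRingEnd ℂ) a := by rw [ha, ← cdot_conj]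
  have h : ((nsq (x - a • φ) : ℝ) : ℂ) = ((nsq x - ‖a‖ ^ 2 : ℝ) : ℂ) := by
    rw [← cdot_self]
    simp only [cdot_sub_left, cdot_sub_right, cdot_smul_left, cdot_smul_right,
      hφ, hxφ, ← ha, mul_one]
    rw [cdot_self x]
    push_cast
    rw [← Complex.mul_conj' a]
    ring
  exact_mod_cast h

/-- `ℓ²`-triangle-type lower bound: `∑ ‖X s + Y s‖² ≥ (√∑‖X‖² - √∑‖Y‖²)²`. -/
lemma sum_normsq_add_ge {S : Type} [Fintype S] (X Y : S → ℂ) :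
    (Real.sqrt (∑ s : S, ‖X s‖ ^ 2) - Real.sqrt (∑ s : S, ‖Y s‖ ^ 2)) ^ 2
      ≤ ∑ s : S, ‖X s + Y s‖ ^ 2 := by
  let x : EuclideanSpace ℂ S := WithLp.toLp 2 X
  let y : EuclideanSpace ℂ S := WithLp.toLp 2 Y
  have hx : ‖x‖ = Real.sqrt (∑ s : S, ‖X s‖ ^ 2) := EuclideanSpace.norm_eq x
  have hy : ‖y‖ = Real.sqrt (∑ s : S, ‖Y s‖ ^ 2) := EuclideanSpace.norm_eq y
  have hxy : ‖x + y‖ ^ 2 = ∑ s : S, ‖X s + Y s‖ ^ 2 := by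
    rw [EuclideanSpace.norm_eq]
    rw [Real.sq_sqrt (Finset.sum_nonneg fun _ _ => by positivity)]
    exact Finset.sum_congr rfl fun s _ => by rw [PiLp.add_apply]
  have tri : |‖x‖ - ‖y‖| ≤ ‖x + y‖ := by
    have := abs_norm_sub_norm_le x (-y)
    simpa [sub_neg_eq_add] using this
  calc (Real.sqrt (∑ s : S, ‖X s‖ ^ 2) - Real.sqrt (∑ s : S, ‖Y s‖ ^ 2)) ^ 2
      = (‖x‖ - ‖y‖) ^ 2 := by rw [hx, hy]
    _ ≤ ‖x + y‖ ^ 2 := by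
        rw [← sq_abs (‖x‖ - ‖y‖)]
        exact pow_le_pow_left₀ (abs_nonneg _) tri 2
    _ = ∑ s : S, ‖X s + Y s‖ ^ 2 := hxy


lemma cdot_add_left {n : Type} [Fintype n] (x y z : n → ℂ) :
    cdot (x + y) z = cdot x z + cdot y z := by
  simp only [cdot, Pi.add_apply, map_add, add_mul, Finset.sum_add_distrib]

/-- The key per-vector quadratic form bound (pure-state Fuchs–van de Graaf type). -/
lemma quadform_le {n S : Type} [Fintype n] [Fintype S] (w : S → n → ℂ)
    (hw : ∑ s : S, nsq (w s) = 1) (φ : n → ℂ) (hφ : nsq φ = 1) (z : n → ℂ) (hz : nsq z = 1) :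
    ‖cdot φ z‖ ^ 2 - ∑ s : S, ‖cdot (w s) z‖ ^ 2
      ≤ Real.sqrt (1 - ∑ s : S, ‖cdot φ (w s)‖ ^ 2) := by
  have hφφ : cdot φ φ = 1 := cdot_one_of_nsq φ hφ
  have hsum_nonneg : (0:ℝ) ≤ ∑ s : S, ‖cdot φ (w s)‖ ^ 2 :=
    Finset.sum_nonneg fun _ _ => by positivity
  have hcsle : ∀ s : S, ‖cdot φ (w s)‖ ^ 2 ≤ nsq (w s) := fun s => by
    have := cdot_cs φ (w s); rwa [hφ, one_mul] at this
  have hsum_le : ∑ s : S, ‖cdot φ (w s)‖ ^ 2 ≤ 1 := by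
    rw [← hw]; exact Finset.sum_le_sum (fun s _ => hcsle s)
  set ε : ℝ := 1 - ∑ s : S, ‖cdot φ (w s)‖ ^ 2 with hε
  set a : ℂ := cdot φ z with ha
  set c : ℝ := ‖a‖ with hc
  set zp : n → ℂ := z - a • φ with hzp
  have hε0 : 0 ≤ ε := by rw [hε]; linarith
  have hε1 : ε ≤ 1 := by rw [hε]; linarith
  have hc0 : 0 ≤ c := norm_nonneg _
  have hc1sq : c ^ 2 ≤ 1 := by
    have h := cdot_cs φ z; rw [hφ, hz, one_mul] at h; rw [hc, ha]; exact h
  have hc1 : c ≤ 1 := by nlinarith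
  have hzpφ : cdot φ zp = 0 := by
    rw [hzp, cdot_sub_right, cdot_smul_right, hφφ, mul_one, ← ha, sub_self]
  have hnzp : nsq zp = 1 - c ^ 2 := by
    have h := nsq_sub_proj φ z hφφ
    rw [← ha] at h; rw [hzp, h, hz, hc]
  have hnzp0 : 0 ≤ 1 - c ^ 2 := by rw [← hnzp]; exact nsq_nonneg _
  set cs : S → ℂ := fun s => cdot φ (w s) with hcs
  set r : S → n → ℂ := fun s => w s - (cs s) • φ with hr
  have hφr : ∀ s : S, cdot φ (r s) = 0 := by
    intro s
    rw [hr]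
    simp only
    rw [cdot_sub_right, cdot_smul_right, hφφ, mul_one, hcs, sub_self]
  have hnr : ∑ s : S, nsq (r s) = ε := by
    have h : ∀ s : S, nsq (r s) = nsq (w s) - ‖cs s‖ ^ 2 := fun s =>
      nsq_sub_proj φ (w s) hφφ
    rw [Finset.sum_congr rfl fun s _ => h s, Finset.sum_sub_distrib, hw, hε, hcs]
  have hdec : ∀ s : S, cdot (w s) z = a * (starRingEnd ℂ) (cs s) + cdot (r s) zp := by
    intro s
    have hws : w s = r s + (cs s) • φ := by rw [hr]; simp
    have hzz : z = zp + a • φ := by rw [hzp]; simp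
    calc cdot (w s) z = cdot (r s + (cs s) • φ) (zp + a • φ) := by rw [← hws, ← hzz]
      _ = cdot (r s) zp + a * cdot (r s) φ + ((starRingEnd ℂ) (cs s) * cdot φ zp
            + (starRingEnd ℂ) (cs s) * (a * cdot φ φ)) := by
          simp only [cdot_add_left, cdot_add_right, cdot_smul_left, cdot_smul_right]
          ring
      _ = a * (starRingEnd ℂ) (cs s) + cdot (r s) zp := by
          have h1 : cdot (r s) φ = 0 := by
            rw [cdot_conj, hφr s, map_zero]
          rw [h1, hzpφ, hφφ]
          ring
  -- sums of squares
  have hXsum : ∑ s : S, ‖a * (starRingEnd ℂ) (cs s)‖ ^ 2 = c ^ 2 * (1 - ε) := by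
    have : ∀ s : S, ‖a * (starRingEnd ℂ) (cs s)‖ ^ 2 = c ^ 2 * ‖cs s‖ ^ 2 := by
      intro s; rw [norm_mul, RCLike.norm_conj, mul_pow, hc]
    rw [Finset.sum_congr rfl fun s _ => this s, ← Finset.mul_sum]
    congr 1
    rw [hε, hcs]; ring
  have hYsum : ∑ s : S, ‖cdot (r s) zp‖ ^ 2 ≤ ε * (1 - c ^ 2) := by
    calc ∑ s : S, ‖cdot (r s) zp‖ ^ 2 ≤ ∑ s : S, nsq (r s) * (1 - c ^ 2) := by
          refine Finset.sum_le_sum fun s _ => ?_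
          have := cdot_cs (r s) zp
          rwa [hnzp] at this
      _ = ε * (1 - c ^ 2) := by rw [← Finset.sum_mul, hnr]
  set R : ℝ := Real.sqrt (∑ s : S, ‖cdot (r s) zp‖ ^ 2) with hR
  have hR0 : 0 ≤ R := Real.sqrt_nonneg _
  have hR2 : R ^ 2 = ∑ s : S, ‖cdot (r s) zp‖ ^ 2 :=
    Real.sq_sqrt (Finset.sum_nonneg fun _ _ => by positivity)
  have hRle : R ^ 2 ≤ ε * (1 - c ^ 2) := by rw [hR2]; exact hYsum
  have lower : (c * Real.sqrt (1 - ε) - R) ^ 2 ≤ ∑ s : S, ‖cdot (w s) z‖ ^ 2 := by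
    have h := sum_normsq_add_ge (fun s => a * (starRingEnd ℂ) (cs s)) (fun s => cdot (r s) zp)
    rw [hXsum] at h
    have hcsqrt : Real.sqrt (c ^ 2 * (1 - ε)) = c * Real.sqrt (1 - ε) := by
      rw [Real.sqrt_mul (sq_nonneg c), Real.sqrt_sq hc0]
    rw [hcsqrt] at h
    calc (c * Real.sqrt (1 - ε) - R) ^ 2
        ≤ ∑ s : S, ‖a * (starRingEnd ℂ) (cs s) + cdot (r s) zp‖ ^ 2 := h
      _ = ∑ s : S, ‖cdot (w s) z‖ ^ 2 := by
          exact Finset.sum_congr rfl fun s _ => by rw [hdec s]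
  have final := scalarB ε c R hε0 hε1 hc0 hc1 hR0 hRle
  have : ‖cdot φ z‖ ^ 2 = c ^ 2 := by rw [hc, ha]
  rw [this]
  linarith

lemma spectral_decomp {n : Type} [Fintype n] [DecidableEq n] (Δ : Matrix n n ℂ)
    (hΔ : Δ.IsHermitian) :
    ∃ (lam : n → ℝ) (u : n → n → ℂ),
      (∀ i j, cdot (u i) (u j) = if i = j then 1 else 0) ∧
      (∀ a b, Δ a b = ∑ i, (lam i : ℂ) * (u i a * (starRingEnd ℂ) (u i b))) := by
  refine ⟨hΔ.eigenvalues, fun i a => (hΔ.eigenvectorUnitary : Matrix n n ℂ) a i, ?_, ?_⟩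
  · intro i j
    have hU : (star (hΔ.eigenvectorUnitary : Matrix n n ℂ)) *
        (hΔ.eigenvectorUnitary : Matrix n n ℂ) = 1 := hΔ.eigenvectorUnitary.2.1
    have h := congrFun (congrFun hU i) j
    simp only [Matrix.mul_apply, Matrix.star_eq_conjTranspose, Matrix.conjTranspose_apply,
      Matrix.one_apply, RCLike.star_def] at h
    rw [← h]
    rfl
  · intro a b
    have h := hΔ.spectral_theorem
    rw [Unitary.conjStarAlgAut_apply] at h
    have h2 := congrFun (congrFun h a) b
    rw [Matrix.mul_apply] at h2
    rw [h2]
    refine Finset.sum_congr rfl fun i _ => ?_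
    rw [Matrix.mul_diagonal]
    simp only [Matrix.star_eq_conjTranspose, Matrix.conjTranspose_apply, RCLike.star_def,
      Function.comp_apply]
    have hco : (RCLike.ofReal (hΔ.eigenvalues i) : ℂ) = ((hΔ.eigenvalues i : ℝ) : ℂ) := rfl
    rw [hco]
    ring

lemma vecMulVec_mulVec' {n : Type} [Fintype n] (x v : n → ℂ) :
    (vecMulVec x (star x)) *ᵥ v = (cdot x v) • x := by
  ext a
  simp only [Matrix.mulVec, dotProduct, Matrix.vecMulVec_apply, Pi.smul_apply,
    smul_eq_mul, cdot, Pi.star_apply, RCLike.star_def]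
  rw [Finset.sum_mul]
  exact Finset.sum_congr rfl fun b _ => by ring

lemma qform_vecMulVec {n : Type} [Fintype n] (x v : n → ℂ) :
    cdot v ((vecMulVec x (star x)) *ᵥ v) = ((‖cdot x v‖ ^ 2 : ℝ) : ℂ) := by
  rw [vecMulVec_mulVec', cdot_smul_right, cdot_conj v x, Complex.mul_conj']
  norm_cast

/-- Fidelity transfer lemma. -/
lemma L1 {n J S : Type} [Fintype n] [DecidableEq n] [Fintype J] [Fintype S]
    (M : J → Matrix n n ℂ) (hM : ∑ t : J, (M t)ᴴ * M t = 1)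
    (χ : n → ℂ) (hχ : nsq χ = 1)
    (w : S → n → ℂ) (hw : ∑ s : S, nsq (w s) = 1)
    (φ : n → ℂ) (hφ : nsq φ = 1) :
    ∑ t : J, ‖cdot χ ((M t) *ᵥ φ)‖ ^ 2
      - Real.sqrt (1 - ∑ s : S, ‖cdot φ (w s)‖ ^ 2)
      ≤ ∑ t : J, ∑ s : S, ‖cdot χ ((M t) *ᵥ (w s))‖ ^ 2 := by
  classical
  set ψ : J → n → ℂ := fun t => (M t)ᴴ *ᵥ χ with hψ
  have habs : ∀ (t : J) (x : n → ℂ), ‖cdot χ ((M t) *ᵥ x)‖ = ‖cdot (ψ t) x‖ := by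
    intro t x
    rw [abs_cdot_symm χ ((M t) *ᵥ x), cdot_mulVec, abs_cdot_symm]
  set Δ : Matrix n n ℂ :=
    vecMulVec φ (star φ) - ∑ s : S, vecMulVec (w s) (star (w s)) with hΔdef
  have hherm : Δ.IsHermitian := by
    show Δᴴ = Δ
    rw [hΔdef]
    ext a b
    simp only [Matrix.conjTranspose_apply, Matrix.sub_apply, Matrix.sum_apply,
      Matrix.vecMulVec_apply, Pi.star_apply, star_sub, star_sum, star_mul', star_star]
    congr 1
    · exact mul_comm _ _
    · exact Finset.sum_congr rfl fun s _ => mul_comm _ _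
  obtain ⟨lam, u, hortho, hdecomp⟩ := spectral_decomp Δ hherm
  have hu_nsq : ∀ i, nsq (u i) = 1 := by
    intro i
    have h := hortho i i
    rw [cdot_self, if_pos rfl] at h
    exact_mod_cast h
  have hQ1 : ∀ v : n → ℂ, cdot v (Δ *ᵥ v)
      = ((‖cdot φ v‖ ^ 2 - ∑ s : S, ‖cdot (w s) v‖ ^ 2 : ℝ) : ℂ) := by
    intro v
    rw [hΔdef, Matrix.sub_mulVec, cdot_sub_right, sum_mulVec, cdot_sum_right,
      qform_vecMulVec, Finset.sum_congr rfl (fun s _ => qform_vecMulVec (w s) v)]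
    push_cast
    try ring
  have hΔsum : Δ = ∑ i, (lam i : ℂ) • vecMulVec (u i) (star (u i)) := by
    ext a b
    rw [hdecomp a b, Matrix.sum_apply]
    refine Finset.sum_congr rfl fun i _ => ?_
    simp only [Matrix.smul_apply, Matrix.vecMulVec_apply, Pi.star_apply, RCLike.star_def,
      smul_eq_mul]
    try ring
  have hQ2 : ∀ v : n → ℂ, cdot v (Δ *ᵥ v)
      = ∑ i, (lam i : ℂ) * ((‖cdot (u i) v‖ ^ 2 : ℝ) : ℂ) := by
    intro v
    calc cdot v (Δ *ᵥ v)
        = cdot v ((∑ i, (lam i : ℂ) • vecMulVec (u i) (star (u i))) *ᵥ v) := by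
          rw [← hΔsum]
      _ = ∑ i, (lam i : ℂ) * ((‖cdot (u i) v‖ ^ 2 : ℝ) : ℂ) := by
          rw [sum_mulVec, cdot_sum_right]
          refine Finset.sum_congr rfl fun i _ => ?_
          rw [Matrix.smul_mulVec, cdot_smul_right, qform_vecMulVec]
  have heigen : ∀ i, (lam i : ℝ)
      = ‖cdot φ (u i)‖ ^ 2 - ∑ s : S, ‖cdot (w s) (u i)‖ ^ 2 := by
    intro i
    have h1 := hQ1 (u i)
    have h2 := hQ2 (u i)
    have h3 : ∑ j, (lam j : ℂ) * ((‖cdot (u j) (u i)‖ ^ 2 : ℝ) : ℂ) = (lam i : ℂ) := by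
      rw [Finset.sum_eq_single i]
      · rw [hortho i i, if_pos rfl]; norm_num
      · intro j _ hji
        rw [hortho j i, if_neg hji]
        norm_num
      · intro h; exact absurd (Finset.mem_univ i) h
    rw [h3] at h2
    have h4 : (lam i : ℂ)
        = ((‖cdot φ (u i)‖ ^ 2 - ∑ s : S, ‖cdot (w s) (u i)‖ ^ 2 : ℝ) : ℂ) := by
      rw [← h2, h1]
    exact_mod_cast h4
  set ε : ℝ := 1 - ∑ s : S, ‖cdot φ (w s)‖ ^ 2 with hε
  have hlam_le : ∀ i, lam i ≤ Real.sqrt ε := by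
    intro i
    rw [heigen i, hε]
    exact quadform_le w hw φ hφ (u i) (hu_nsq i)
  -- at most one positive eigenvalue
  have hpos : ∀ i j, i ≠ j → 0 < lam i → 0 < lam j → False := by
    intro i j hij hi hj
    by_cases hzero : cdot φ (u i) = 0
    · have h5 := heigen i
      rw [hzero] at h5
      simp only [norm_zero] at h5
      have : (0:ℝ) ≤ ∑ s : S, ‖cdot (w s) (u i)‖ ^ 2 :=
        Finset.sum_nonneg fun _ _ => by positivity
      nlinarith
    · set α : ℂ := cdot φ (u j) with hα
      set β : ℂ := - cdot φ (u i) with hβ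
      set z : n → ℂ := α • u i + β • u j with hz
      have hφz : cdot φ z = 0 := by
        rw [hz, cdot_add_right, cdot_smul_right, cdot_smul_right, hα, hβ]
        ring
      have hcdz : ∀ k, cdot (u k) z
          = α * (if k = i then 1 else 0) + β * (if k = j then 1 else 0) := by
        intro k
        rw [hz, cdot_add_right, cdot_smul_right, cdot_smul_right, hortho k i, hortho k j]
      have hterm : ∀ k ∈ Finset.univ, (lam k : ℂ) * ((‖cdot (u k) z‖ ^ 2 : ℝ) : ℂ)
          = ((if k = i then ((lam i * ‖α‖ ^ 2 : ℝ) : ℂ) else 0)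
            + (if k = j then ((lam j * ‖β‖ ^ 2 : ℝ) : ℂ) else 0)) := by
        intro k _
        rw [hcdz k]
        by_cases hk : k = i
        · subst hk
          rw [if_pos rfl, if_neg hij, if_pos rfl, if_neg hij]
          push_cast
          ring_nf
          try simp
        · by_cases hk2 : k = j
          · subst hk2
            rw [if_neg hk, if_pos rfl, if_neg hk, if_pos rfl]
            push_cast
            ring_nf
            try simp
          · rw [if_neg hk, if_neg hk2, if_neg hk, if_neg hk2]
            simp
      have hsum : ∑ k, (lam k : ℂ) * ((‖cdot (u k) z‖ ^ 2 : ℝ) : ℂ)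
          = ((lam i * ‖α‖ ^ 2 + lam j * ‖β‖ ^ 2 : ℝ) : ℂ) := by
        rw [Finset.sum_congr rfl hterm, Finset.sum_add_distrib,
          Finset.sum_ite_eq' Finset.univ i, Finset.sum_ite_eq' Finset.univ j]
        simp only [Finset.mem_univ, if_pos]
        push_cast
        ring
      have h1 := hQ1 z
      have h2 := hQ2 z
      rw [hsum] at h2
      rw [hφz] at h1
      simp only [norm_zero] at h1
      have hre : lam i * ‖α‖ ^ 2 + lam j * ‖β‖ ^ 2
          = 0 ^ 2 - ∑ s : S, ‖cdot (w s) z‖ ^ 2 := by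
        have := h1.symm.trans h2
        exact_mod_cast this.symm
      have hβpos : 0 < ‖β‖ ^ 2 := by
        have hβne : β ≠ 0 := by
          rw [hβ]; simpa using hzero
        exact pow_pos (norm_pos_iff.2 hβne) 2
      have hαnn : (0:ℝ) ≤ ‖α‖ ^ 2 := by positivity
      have hsnn : (0:ℝ) ≤ ∑ s : S, ‖cdot (w s) z‖ ^ 2 :=
        Finset.sum_nonneg fun _ _ => by positivity
      nlinarith
  -- the real identity D - T = ∑ lam i * q i
  set q : n → ℝ := fun i => ∑ t : J, ‖cdot (ψ t) (u i)‖ ^ 2 with hq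
  have hkey : ∑ t : J, ‖cdot χ ((M t) *ᵥ φ)‖ ^ 2
      - ∑ t : J, ∑ s : S, ‖cdot χ ((M t) *ᵥ (w s))‖ ^ 2 = ∑ i, lam i * q i := by
    have hC : ((∑ t : J, ‖cdot χ ((M t) *ᵥ φ)‖ ^ 2
        - ∑ t : J, ∑ s : S, ‖cdot χ ((M t) *ᵥ (w s))‖ ^ 2 : ℝ) : ℂ)
        = ((∑ i, lam i * q i : ℝ) : ℂ) := by
      have e1 : ∑ t : J, cdot (ψ t) (Δ *ᵥ (ψ t))
          = ((∑ t : J, ‖cdot χ ((M t) *ᵥ φ)‖ ^ 2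
            - ∑ t : J, ∑ s : S, ‖cdot χ ((M t) *ᵥ (w s))‖ ^ 2 : ℝ) : ℂ) := by
        push_cast
        rw [Finset.sum_congr rfl (fun t _ => hQ1 (ψ t))]
        push_cast
        rw [Finset.sum_sub_distrib]
        congr 1
        · exact Finset.sum_congr rfl fun t _ => by
            rw [habs t φ, abs_cdot_symm (ψ t) φ]
        · exact Finset.sum_congr rfl fun t _ => Finset.sum_congr rfl fun s _ => by
            rw [habs t (w s), abs_cdot_symm (ψ t) (w s)]
      have e2 : ∑ t : J, cdot (ψ t) (Δ *ᵥ (ψ t)) = ((∑ i, lam i * q i : ℝ) : ℂ) := by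
        rw [Finset.sum_congr rfl (fun t _ => hQ2 (ψ t))]
        rw [Finset.sum_comm]
        push_cast
        refine Finset.sum_congr rfl fun i _ => ?_
        rw [hq]
        push_cast
        rw [Finset.mul_sum]
        refine Finset.sum_congr rfl fun t _ => by
          rw [abs_cdot_symm (u i) (ψ t)]
      rw [← e1, e2]
    exact_mod_cast hC
  -- bound ∑ lam i * q i ≤ √ε
  have hq0 : ∀ i, 0 ≤ q i := fun i => Finset.sum_nonneg fun _ _ => by positivity
  have hq1 : ∀ i, q i ≤ 1 := by
    intro i
    have h := qbound M hM χ hχ (u i)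
    rw [hu_nsq i] at h
    calc q i = ∑ t : J, ‖cdot χ ((M t) *ᵥ (u i))‖ ^ 2 := by
          exact Finset.sum_congr rfl fun t _ => by rw [habs t (u i)]
      _ ≤ 1 := h
  set P : Finset n := Finset.univ.filter (fun i => 0 < lam i) with hP
  have hcard : P.card ≤ 1 := by
    rw [Finset.card_le_one]
    intro x hx y hy
    by_contra hxy
    exact hpos x y hxy (Finset.mem_filter.1 hx).2 (Finset.mem_filter.1 hy).2
  have hPsum : ∑ i ∈ P, lam i ≤ Real.sqrt ε := by
    rcases Finset.eq_empty_or_nonempty P with hPe | ⟨x, hx⟩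
    · rw [hPe, Finset.sum_empty]
      exact Real.sqrt_nonneg _
    · have hPx : P = {x} := by
        apply Finset.eq_singleton_iff_unique_mem.2
        exact ⟨hx, fun y hy => by
          rw [Finset.card_le_one] at hcard
          exact hcard y hy x hx⟩
      rw [hPx, Finset.sum_singleton]
      exact hlam_le x
  have hbound : ∑ i, lam i * q i ≤ Real.sqrt ε := by
    have hsplit : ∑ i, lam i * q i = ∑ i ∈ P, lam i * q i + ∑ i ∈ Pᶜ, lam i * q i :=
      (Finset.sum_add_sum_compl P _).symm
    have h1 : ∑ i ∈ Pᶜ, lam i * q i ≤ 0 := by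
      refine Finset.sum_nonpos fun i hi => ?_
      have : ¬ (0 < lam i) := by
        intro h
        have : i ∈ P := Finset.mem_filter.2 ⟨Finset.mem_univ i, h⟩
        exact (Finset.mem_compl.1 hi) this
      exact mul_nonpos_of_nonpos_of_nonneg (le_of_not_gt this) (hq0 i)
    have h2 : ∑ i ∈ P, lam i * q i ≤ ∑ i ∈ P, lam i := by
      refine Finset.sum_le_sum fun i hi => ?_
      have hl : 0 < lam i := (Finset.mem_filter.1 hi).2
      nlinarith [hq1 i, hq0 i]
    linarith
  linarith [hkey, hbound]

/-- Per-`k` chain bound: the three-step fidelity is controlled by the one-step ones. -/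
lemma triple_chain {n I K : Type} [Fintype n] [DecidableEq n] [Fintype I] [Fintype K]
    (A : I → Matrix n n ℂ) (hK : ∑ i : I, (A i)ᴴ * A i = 1)
    (e f : K → n → ℂ) (he : ∀ k, nsq (e k) = 1) (hf : ∀ k, nsq (f k) = 1)
    (σ : K ≃ K) (hσ : ∀ k, σ (σ k) = k) (k : K) :
    (∑ i : I, ∑ j : I, ∑ m : I, ‖cdot (f k) ((A i * A j * A m) *ᵥ (e k))‖ ^ 2)
      ≥ (∑ i : I, ‖cdot (f k) (A i *ᵥ (e (σ k)))‖ ^ 2)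
        - Real.sqrt ((1 - ∑ i : I, ‖cdot (e (σ k)) (A i *ᵥ (f (σ k)))‖ ^ 2)
          + Real.sqrt (1 - ∑ i : I, ‖cdot (f (σ k)) (A i *ᵥ (e k))‖ ^ 2)) := by
  classical
  have hK2 : ∑ p : I × I, (A p.1 * A p.2)ᴴ * (A p.1 * A p.2) = 1 := by
    rw [Fintype.sum_prod_type]
    have hre : ∀ j m : I, (A j * A m)ᴴ * (A j * A m)
        = (A m)ᴴ * ((A j)ᴴ * A j) * (A m) := by
      intro j m
      simp only [Matrix.conjTranspose_mul, Matrix.mul_assoc]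
    calc ∑ j : I, ∑ m : I, (A j * A m)ᴴ * (A j * A m)
        = ∑ j : I, ∑ m : I, (A m)ᴴ * ((A j)ᴴ * A j) * (A m) :=
          Finset.sum_congr rfl fun j _ => Finset.sum_congr rfl fun m _ => hre j m
      _ = ∑ m : I, ∑ j : I, (A m)ᴴ * ((A j)ᴴ * A j) * (A m) := Finset.sum_comm
      _ = ∑ m : I, (A m)ᴴ * (∑ j : I, (A j)ᴴ * A j) * (A m) := by
          refine Finset.sum_congr rfl fun m _ => ?_
          rw [Finset.mul_sum, Finset.sum_mul]
      _ = 1 := by rw [hK]; simp only [Matrix.mul_one]; exact hK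
  set gval : ℝ := ∑ p : I × I, ‖cdot (e (σ k)) ((A p.1 * A p.2) *ᵥ (e k))‖ ^ 2 with hgval
  -- step 1
  have step1 : (∑ i : I, ‖cdot (e (σ k)) (A i *ᵥ (f (σ k)))‖ ^ 2)
      - Real.sqrt (1 - ∑ i : I, ‖cdot (f (σ k)) (A i *ᵥ (e k))‖ ^ 2) ≤ gval := by
    have h := L1 A hK (e (σ k)) (he _) (fun m => A m *ᵥ (e k))
      (by rw [kraus_norm A hK (e k)]; exact he k) (f (σ k)) (hf _)
    calc (∑ i : I, ‖cdot (e (σ k)) (A i *ᵥ (f (σ k)))‖ ^ 2)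
        - Real.sqrt (1 - ∑ i : I, ‖cdot (f (σ k)) (A i *ᵥ (e k))‖ ^ 2)
        ≤ ∑ t : I, ∑ m : I, ‖cdot (e (σ k)) (A t *ᵥ (A m *ᵥ (e k)))‖ ^ 2 := h
      _ = gval := by
          rw [hgval, Fintype.sum_prod_type]
          exact Finset.sum_congr rfl fun t _ => Finset.sum_congr rfl fun m _ => by
            rw [Matrix.mulVec_mulVec]
  -- step 2
  have step2 : (∑ i : I, ‖cdot (f k) (A i *ᵥ (e (σ k)))‖ ^ 2)
      - Real.sqrt (1 - gval)
      ≤ ∑ i : I, ∑ j : I, ∑ m : I, ‖cdot (f k) ((A i * A j * A m) *ᵥ (e k))‖ ^ 2 := by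
    have h := L1 A hK (f k) (hf _) (fun p : I × I => (A p.1 * A p.2) *ᵥ (e k))
      (by rw [kraus_norm (fun p : I × I => A p.1 * A p.2) hK2 (e k)]; exact he k)
      (e (σ k)) (he _)
    have hg2 : ∑ p : I × I, ‖cdot (e (σ k)) ((fun p : I × I => (A p.1 * A p.2) *ᵥ (e k)) p)‖ ^ 2
        = gval := rfl
    rw [hg2] at h
    calc (∑ i : I, ‖cdot (f k) (A i *ᵥ (e (σ k)))‖ ^ 2) - Real.sqrt (1 - gval)
        ≤ ∑ t : I, ∑ p : I × I, ‖cdot (f k) (A t *ᵥ ((A p.1 * A p.2) *ᵥ (e k)))‖ ^ 2 := h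
      _ = ∑ i : I, ∑ j : I, ∑ m : I, ‖cdot (f k) ((A i * A j * A m) *ᵥ (e k))‖ ^ 2 := by
          refine Finset.sum_congr rfl fun t _ => ?_
          rw [Fintype.sum_prod_type]
          refine Finset.sum_congr rfl fun j _ => Finset.sum_congr rfl fun m _ => ?_
          simp only [Matrix.mulVec_mulVec, Matrix.mul_assoc]
  have hmono : Real.sqrt (1 - gval)
      ≤ Real.sqrt ((1 - ∑ i : I, ‖cdot (e (σ k)) (A i *ᵥ (f (σ k)))‖ ^ 2)
        + Real.sqrt (1 - ∑ i : I, ‖cdot (f (σ k)) (A i *ᵥ (e k))‖ ^ 2)) := by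
    apply Real.sqrt_le_sqrt
    linarith [step1]
  linarith [step2, hmono]

lemma sum_sqrt_le {K : Type} [Fintype K] (g : K → ℝ) (hg : ∀ k, 0 ≤ g k) :
    ∑ k : K, Real.sqrt (g k) ≤ Real.sqrt ((Fintype.card K : ℝ) * ∑ k : K, g k) := by
  have h := Finset.sum_mul_sq_le_sq_mul_sq Finset.univ (fun _ : K => (1:ℝ))
    (fun k => Real.sqrt (g k))
  simp only [one_mul, one_pow] at h
  have h2 : ∑ k : K, Real.sqrt (g k) ^ 2 = ∑ k : K, g k :=
    Finset.sum_congr rfl fun k _ => Real.sq_sqrt (hg k)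
  have h3 : (∑ _k : K, (1:ℝ)) = (Fintype.card K : ℝ) := by
    simp [Finset.card_univ]
  rw [h2, h3] at h
  have h4 : 0 ≤ ∑ k : K, Real.sqrt (g k) :=
    Finset.sum_nonneg fun k _ => Real.sqrt_nonneg _
  calc ∑ k : K, Real.sqrt (g k) = Real.sqrt ((∑ k : K, Real.sqrt (g k)) ^ 2) :=
        (Real.sqrt_sq h4).symm
    _ ≤ _ := Real.sqrt_le_sqrt h

lemma avg_sqrt_le {K : Type} [Fintype K] [Nonempty K] (g : K → ℝ) (hg : ∀ k, 0 ≤ g k) :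
    (1 / (Fintype.card K : ℝ)) * ∑ k : K, Real.sqrt (g k)
      ≤ Real.sqrt ((1 / (Fintype.card K : ℝ)) * ∑ k : K, g k) := by
  set Nr : ℝ := (Fintype.card K : ℝ) with hNr
  have hN0 : 0 < Nr := by
    rw [hNr]
    exact_mod_cast Fintype.card_pos
  have h1 := sum_sqrt_le g hg
  have h2 : Real.sqrt ((1 / Nr) * ∑ k : K, g k)
      = (1 / Nr) * Real.sqrt (Nr * ∑ k : K, g k) := by
    have he : (1 / Nr) * ∑ k : K, g k = (1 / Nr) ^ 2 * (Nr * ∑ k : K, g k) := by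
      field_simp
    rw [he, Real.sqrt_mul (sq_nonneg _), Real.sqrt_sq (by positivity : (0:ℝ) ≤ 1 / Nr)]
  rw [h2]
  apply mul_le_mul_of_nonneg_left h1 (by positivity)

/-- Abstract averaging step. -/
lemma avg_final {K : Type} [Fintype K] [Nonempty K] (t a b : K → ℝ) (σ : K ≃ K)
    (ha1 : ∀ k, a k ≤ 1) (hb1 : ∀ k, b k ≤ 1)
    (η ζ : ℝ) (hη0 : (0:ℝ) ≤ η) (hη1 : η ≤ 1) (hζ0 : (0:ℝ) ≤ ζ) (hζ1 : ζ ≤ 1)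
    (hSa : (1 / (Fintype.card K : ℝ)) * ∑ k : K, a k ≥ 1 - η)
    (hSb : (1 / (Fintype.card K : ℝ)) * ∑ k : K, b k ≥ 1 - ζ)
    (ht : ∀ k, t k ≥ b (σ k)
      - Real.sqrt ((1 - a (σ k)) + Real.sqrt (1 - b k))) :
    (1 / (Fintype.card K : ℝ)) * ∑ k : K, t k
      ≥ 1 - (Real.sqrt ζ + Real.sqrt (Real.sqrt η + Real.sqrt ζ)) := by
  set Nr : ℝ := (Fintype.card K : ℝ) with hNr
  have hN0 : 0 < Nr := by
    rw [hNr]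
    exact_mod_cast Fintype.card_pos
  set x : K → ℝ := fun k => (1 - a (σ k)) + Real.sqrt (1 - b k) with hx
  have hx0 : ∀ k, 0 ≤ x k := fun k => by
    have := ha1 (σ k)
    have := Real.sqrt_nonneg (1 - b k)
    rw [hx]
    dsimp only
    linarith
  have hsum_t : ∑ k : K, t k ≥ ∑ k : K, b (σ k) - ∑ k : K, Real.sqrt (x k) := by
    have := Finset.sum_le_sum (fun k (_ : k ∈ Finset.univ) => ht k)
    rw [Finset.sum_sub_distrib] at this
    linarith [this]
  have hreindex_b : ∑ k : K, b (σ k) = ∑ k : K, b k := Equiv.sum_comp σ b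
  have hreindex_a : ∑ k : K, a (σ k) = ∑ k : K, a k := Equiv.sum_comp σ a
  -- average of x
  have havg_b : (1 / Nr) * ∑ k : K, (1 - b k) ≤ ζ := by
    rw [Finset.sum_sub_distrib]
    have h3 : (∑ _k : K, (1:ℝ)) = Nr := by simp [Finset.card_univ, hNr]
    rw [h3]
    have : (1 / Nr) * (Nr - ∑ k : K, b k) = 1 - (1 / Nr) * ∑ k : K, b k := by
      field_simp
    rw [this]
    linarith [hSb]
  have havg_a : (1 / Nr) * ∑ k : K, (1 - a k) ≤ η := by
    rw [Finset.sum_sub_distrib]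
    have h3 : (∑ _k : K, (1:ℝ)) = Nr := by simp [Finset.card_univ, hNr]
    rw [h3]
    have : (1 / Nr) * (Nr - ∑ k : K, a k) = 1 - (1 / Nr) * ∑ k : K, a k := by
      field_simp
    rw [this]
    linarith [hSa]
  have havg_sqrt_b : (1 / Nr) * ∑ k : K, Real.sqrt (1 - b k) ≤ Real.sqrt ζ := by
    have h1 := avg_sqrt_le (fun k => 1 - b k) (fun k => by linarith [hb1 k])
    calc (1 / Nr) * ∑ k : K, Real.sqrt (1 - b k)
        ≤ Real.sqrt ((1 / Nr) * ∑ k : K, (1 - b k)) := h1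
      _ ≤ Real.sqrt ζ := Real.sqrt_le_sqrt havg_b
  have havg_x : (1 / Nr) * ∑ k : K, x k ≤ η + Real.sqrt ζ := by
    have hxsum : ∑ k : K, x k = ∑ k : K, (1 - a (σ k)) + ∑ k : K, Real.sqrt (1 - b k) := by
      rw [hx, Finset.sum_add_distrib]
    have hre : ∑ k : K, (1 - a (σ k)) = ∑ k : K, (1 - a k) := by
      rw [Finset.sum_sub_distrib, Finset.sum_sub_distrib, hreindex_a]
    rw [hxsum, hre, mul_add]
    linarith [havg_a, havg_sqrt_b]
  have havg_sqrt_x : (1 / Nr) * ∑ k : K, Real.sqrt (x k)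
      ≤ Real.sqrt (Real.sqrt η + Real.sqrt ζ) := by
    have h1 := avg_sqrt_le x hx0
    have h2 : Real.sqrt ((1 / Nr) * ∑ k : K, x k) ≤ Real.sqrt (η + Real.sqrt ζ) :=
      Real.sqrt_le_sqrt havg_x
    have hηsq : η ≤ Real.sqrt η := by
      nlinarith [Real.sq_sqrt hη0, Real.sqrt_nonneg η, Real.sqrt_le_sqrt hη1,
        Real.sqrt_one]
    have h3 : Real.sqrt (η + Real.sqrt ζ) ≤ Real.sqrt (Real.sqrt η + Real.sqrt ζ) :=
      Real.sqrt_le_sqrt (by linarith)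
    linarith
  have hζsq : ζ ≤ Real.sqrt ζ := by
    nlinarith [Real.sq_sqrt hζ0, Real.sqrt_nonneg ζ, Real.sqrt_le_sqrt hζ1, Real.sqrt_one]
  have hfinal : (1 / Nr) * ∑ k : K, t k
      ≥ (1 / Nr) * ∑ k : K, b k - (1 / Nr) * ∑ k : K, Real.sqrt (x k) := by
    rw [← hreindex_b, ← mul_sub]
    apply mul_le_mul_of_nonneg_left _ (by positivity)
    linarith [hsum_t]
  have : (1 / Nr) * ∑ k : K, b k ≥ 1 - ζ := hSb
  linarith [havg_sqrt_x]

section QFTFacts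

variable (N : ℕ) [NeZero N]

noncomputable def fv (k : ZMod N) : ZMod N → ℂ := fun j => QFT N j k

noncomputable def ev (k : ZMod N) : ZMod N → ℂ := fun j => if j = k then 1 else 0

lemma qft_apply (j k : ZMod N) : QFT N j k
    = Complex.exp (((2 * Real.pi * (j.val * k.val) / N : ℝ) : ℂ) * Complex.I)
      / (Real.sqrt N : ℂ) := by
  unfold QFT
  rw [show (2 * (Real.pi : ℂ) * Complex.I * (j.val : ℂ) * (k.val : ℂ) / (N : ℂ))
    = ((2 * Real.pi * (j.val * k.val) / N : ℝ) : ℂ) * Complex.I by push_cast; ring]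

lemma norm_qft (j k : ZMod N) : ‖QFT N j k‖ = 1 / Real.sqrt N := by
  rw [qft_apply, norm_div, Complex.norm_exp_ofReal_mul_I,
    Complex.norm_real, Real.norm_eq_abs, abs_of_nonneg (Real.sqrt_nonneg _)]

lemma nsq_fv (k : ZMod N) : nsq (fv N k) = 1 := by
  have hN0 : (0:ℝ) < N := by
    have := Nat.pos_of_ne_zero (NeZero.ne N)
    exact_mod_cast this
  unfold nsq fv
  rw [Finset.sum_congr rfl (fun j _ => by rw [norm_qft])]
  rw [Finset.sum_const, Finset.card_univ, ZMod.card, div_pow, one_pow,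
    Real.sq_sqrt (le_of_lt hN0), nsmul_eq_mul]
  field_simp

lemma nsq_ev (k : ZMod N) : nsq (ev N k) = 1 := by
  unfold nsq ev
  have hj : ∀ j : ZMod N, ‖if j = k then (1:ℂ) else 0‖ ^ 2 = if j = k then (1:ℝ) else 0 := by
    intro j; by_cases h : j = k <;> simp [h]
  rw [Finset.sum_congr rfl fun j _ => hj j,
    Finset.sum_ite_eq' Finset.univ k (fun _ => (1:ℝ))]
  simp

lemma conj_qft (j k : ZMod N) : (starRingEnd ℂ) (QFT N j (-k)) = QFT N j k := by
  have hNne : (N : ℂ) ≠ 0 := by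
    exact_mod_cast Nat.cast_ne_zero.2 (NeZero.ne N)
  have hdvd : (N : ℕ) ∣ ((-k).val + k.val) := by
    have h0 : (((-k).val + k.val : ℕ) : ZMod N) = 0 := by
      push_cast
      simp [ZMod.natCast_val, ZMod.cast_id]
    exact (ZMod.natCast_eq_zero_iff _ N).1 h0
  obtain ⟨c, hc⟩ := hdvd
  have hsum : (((-k).val : ℕ) : ℂ) + ((k.val : ℕ) : ℂ) = (N : ℂ) * (c : ℂ) := by
    exact_mod_cast congrArg (fun m : ℕ => (m : ℂ)) hc
  have hprod : Complex.exp (2 * (Real.pi:ℂ) * Complex.I * (j.val : ℂ) * ((-k).val : ℂ) / (N:ℂ))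
      * Complex.exp (2 * (Real.pi:ℂ) * Complex.I * (j.val : ℂ) * ((k).val : ℂ) / (N:ℂ)) = 1 := by
    rw [← Complex.exp_add]
    have harg : 2 * (Real.pi:ℂ) * Complex.I * (j.val : ℂ) * ((-k).val : ℂ) / (N:ℂ)
        + 2 * (Real.pi:ℂ) * Complex.I * (j.val : ℂ) * ((k).val : ℂ) / (N:ℂ)
        = ((j.val * c : ℕ) : ℂ) * (2 * (Real.pi:ℂ) * Complex.I) := by
      rw [← add_div, Nat.cast_mul]
      rw [show 2 * (Real.pi:ℂ) * Complex.I * (j.val : ℂ) * ((-k).val : ℂ)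
          + 2 * (Real.pi:ℂ) * Complex.I * (j.val : ℂ) * ((k).val : ℂ)
          = (2 * (Real.pi:ℂ) * Complex.I * (j.val : ℂ)) * (((-k).val : ℂ) + ((k).val : ℂ))
          by ring]
      rw [hsum]
      rw [show (2 * (Real.pi:ℂ) * Complex.I * (j.val : ℂ)) * ((N:ℂ) * (c:ℂ)) / (N:ℂ)
          = (2 * (Real.pi:ℂ) * Complex.I * (j.val : ℂ)) * (c:ℂ) * ((N:ℂ) / (N:ℂ)) by ring]
      rw [div_self hNne, mul_one]
      ring
    rw [harg, Complex.exp_nat_mul_two_pi_mul_I]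
  unfold QFT
  rw [map_div₀, Complex.conj_ofReal]
  congr 1
  rw [← Complex.exp_conj]
  have hconj : (starRingEnd ℂ)
      (2 * (Real.pi:ℂ) * Complex.I * (j.val : ℂ) * ((-k).val : ℂ) / (N : ℂ))
      = -(2 * (Real.pi:ℂ) * Complex.I * (j.val : ℂ) * ((-k).val : ℂ) / (N:ℂ)) := by
    simp only [map_div₀, _root_.map_mul, Complex.conj_I, Complex.conj_ofReal,
      map_ofNat, Complex.conj_natCast]
    ring
  rw [hconj, Complex.exp_neg]
  exact inv_eq_of_mul_eq_one_right hprod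

lemma symm_qft (j k : ZMod N) : QFT N k j = QFT N j k := by
  unfold QFT
  rw [show 2 * (Real.pi:ℂ) * Complex.I * (k.val : ℂ) * (j.val : ℂ) / (N:ℂ)
    = 2 * (Real.pi:ℂ) * Complex.I * (j.val : ℂ) * (k.val : ℂ) / (N:ℂ) by ring]

lemma mulVec_ev (B : Matrix (ZMod N) (ZMod N) ℂ) (k j : ZMod N) :
    (B *ᵥ ev N k) j = B j k := by
  unfold ev
  simp only [Matrix.mulVec, dotProduct, mul_ite, mul_one, mul_zero]
  rw [Finset.sum_ite_eq' Finset.univ k (fun m => B j m)]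
  simp

lemma cdot_ev (k : ZMod N) (v : ZMod N → ℂ) : cdot (ev N k) v = v k := by
  unfold cdot ev
  have hj : ∀ j : ZMod N, (starRingEnd ℂ) (if j = k then (1:ℂ) else 0) * v j
      = if j = k then v j else 0 := by
    intro j; by_cases h : j = k <;> simp [h]
  rw [Finset.sum_congr rfl fun j _ => hj j,
    Finset.sum_ite_eq' Finset.univ k (fun j => v j)]
  simp

lemma entry_right (B : Matrix (ZMod N) (ZMod N) ℂ) (l k : ZMod N) :
    (B * QFT N) l k = cdot (ev N l) (B *ᵥ fv N k) := by
  rw [cdot_ev, Matrix.mul_apply]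
  rfl

lemma entry_left (B : Matrix (ZMod N) (ZMod N) ℂ) (k : ZMod N) :
    (QFT N * B) k k = cdot (fv N (-k)) (B *ᵥ ev N k) := by
  rw [Matrix.mul_apply]
  unfold cdot fv
  refine Finset.sum_congr rfl fun j _ => ?_
  rw [conj_qft, mulVec_ev, symm_qft]

lemma entry_T2 (B : Matrix (ZMod N) (ZMod N) ℂ) (k : ZMod N) :
    ((QFT N)ᴴ * B) k k = cdot (fv N k) (B *ᵥ ev N k) := by
  rw [Matrix.mul_apply]
  unfold cdot fv
  refine Finset.sum_congr rfl fun j _ => ?_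
  rw [Matrix.conjTranspose_apply, mulVec_ev]
  rfl

end QFTFacts

end CubeAux

open CubeAux

/-- If a quantum channel `C` with Kraus operators `A i` satisfies `S1(η1)` and
`S2(η2)`, then the cube `C³`, with Kraus operators `A i * A j * A m`, satisfies
`T1(√η1 + √(√η1 + √η2))` and `T2(√η2 + √(√η1 + √η2))`. -/
theorem cube_in_t1_t2 (N : ℕ) [NeZero N] (η1 η2 : ℝ)
    (hη1 : η1 ∈ Set.Icc (0 : ℝ) 1) (hη2 : η2 ∈ Set.Icc (0 : ℝ) 1)
    (I : Type) [Fintype I] (A : I → Matrix (ZMod N) (ZMod N) ℂ)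
    (hK : ∑ i : I, (A i)ᴴ * A i = 1)
    (hS1 : (1 / N : ℝ) * ∑ k : ZMod N, ∑ i : I,
      ‖(A i * QFT N) k k‖ ^ 2 ≥ 1 - η1)
    (hS2 : (1 / N : ℝ) * ∑ k : ZMod N, ∑ i : I,
      ‖(QFT N * A i) k k‖ ^ 2 ≥ 1 - η2) :
    ((1 / N : ℝ) * ∑ k : ZMod N, ∑ i : I, ∑ j : I, ∑ m : I,
        ‖(A i * A j * A m * QFT N) (-k) k‖ ^ 2
      ≥ 1 - (Real.sqrt η1 + Real.sqrt (Real.sqrt η1 + Real.sqrt η2))) ∧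
    ((1 / N : ℝ) * ∑ k : ZMod N, ∑ i : I, ∑ j : I, ∑ m : I,
        ‖((QFT N)ᴴ * (A i * A j * A m)) k k‖ ^ 2
      ≥ 1 - (Real.sqrt η2 + Real.sqrt (Real.sqrt η1 + Real.sqrt η2))) := by
  classical
  haveI : Nonempty (ZMod N) := ⟨0⟩
  have hcard : (Fintype.card (ZMod N) : ℝ) = (N : ℝ) := by
    rw [ZMod.card]
  have he : ∀ k : ZMod N, nsq (ev N k) = 1 := nsq_ev N
  have hf : ∀ k : ZMod N, nsq (fv N k) = 1 := nsq_fv N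
  set σ : ZMod N ≃ ZMod N := Equiv.neg (ZMod N) with hσdef
  have hσ : ∀ k : ZMod N, σ k = -k := fun k => rfl
  have ha1 : ∀ k : ZMod N, (∑ i : I, ‖cdot (ev N k) (A i *ᵥ fv N k)‖ ^ 2) ≤ 1 := by
    intro k
    have h := qbound A hK (ev N k) (he k) (fv N k)
    rwa [hf k] at h
  have hb1 : ∀ k : ZMod N, (∑ i : I, ‖cdot (fv N (-k)) (A i *ᵥ ev N k)‖ ^ 2) ≤ 1 := by
    intro k
    have h := qbound A hK (fv N (-k)) (hf (-k)) (ev N k)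
    rwa [he k] at h
  have ha1' : ∀ k : ZMod N, (∑ i : I, ‖cdot (fv N k) (A i *ᵥ ev N (-k))‖ ^ 2) ≤ 1 := by
    intro k
    have h := qbound A hK (fv N k) (hf k) (ev N (-k))
    rwa [he (-k)] at h
  have hS1' : (1 / (Fintype.card (ZMod N) : ℝ))
      * ∑ k : ZMod N, ∑ i : I, ‖cdot (ev N k) (A i *ᵥ fv N k)‖ ^ 2 ≥ 1 - η1 := by
    rw [hcard]
    have hrw : ∑ k : ZMod N, ∑ i : I, ‖cdot (ev N k) (A i *ᵥ fv N k)‖ ^ 2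
        = ∑ k : ZMod N, ∑ i : I, ‖(A i * QFT N) k k‖ ^ 2 := by
      refine Finset.sum_congr rfl fun k _ => Finset.sum_congr rfl fun i _ => ?_
      rw [entry_right]
    rw [hrw]
    exact hS1
  have hS2' : (1 / (Fintype.card (ZMod N) : ℝ))
      * ∑ k : ZMod N, ∑ i : I, ‖cdot (fv N (-k)) (A i *ᵥ ev N k)‖ ^ 2 ≥ 1 - η2 := by
    rw [hcard]
    have hrw : ∑ k : ZMod N, ∑ i : I, ‖cdot (fv N (-k)) (A i *ᵥ ev N k)‖ ^ 2
        = ∑ k : ZMod N, ∑ i : I, ‖(QFT N * A i) k k‖ ^ 2 := by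
      refine Finset.sum_congr rfl fun k _ => Finset.sum_congr rfl fun i _ => ?_
      rw [entry_left]
    rw [hrw]
    exact hS2
  have hS2σ : (1 / (Fintype.card (ZMod N) : ℝ))
      * ∑ k : ZMod N, ∑ i : I, ‖cdot (fv N k) (A i *ᵥ ev N (-k))‖ ^ 2 ≥ 1 - η2 := by
    have hre : ∑ k : ZMod N, ∑ i : I, ‖cdot (fv N k) (A i *ᵥ ev N (-k))‖ ^ 2
        = ∑ k : ZMod N, ∑ i : I, ‖cdot (fv N (-k)) (A i *ᵥ ev N k)‖ ^ 2 := by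
      have h := Equiv.sum_comp σ
        (fun k => ∑ i : I, ‖cdot (fv N (-k)) (A i *ᵥ ev N k)‖ ^ 2)
      rw [← h]
      refine Finset.sum_congr rfl fun k _ => ?_
      simp only [hσ, neg_neg]
    rw [hre]
    exact hS2'
  constructor
  · -- T1
    have main := avg_final
      (fun k => ∑ i : I, ∑ j : I, ∑ m : I,
        ‖cdot (ev N (-k)) ((A i * A j * A m) *ᵥ fv N k)‖ ^ 2)
      (fun k => ∑ i : I, ‖cdot (fv N k) (A i *ᵥ ev N (-k))‖ ^ 2)
      (fun k => ∑ i : I, ‖cdot (ev N k) (A i *ᵥ fv N k)‖ ^ 2)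
      σ ha1' ha1 η2 η1 hη2.1 hη2.2 hη1.1 hη1.2 hS2σ hS1' ?ht
    case ht =>
      intro k
      have h := triple_chain A hK (fun k => fv N k) (fun k => ev N (-k))
        hf (fun k => he (-k)) σ (fun k => by simp [hσ]) k
      simp only [hσ, neg_neg] at h ⊢
      exact h
    have hgoal : ∑ k : ZMod N, ∑ i : I, ∑ j : I, ∑ m : I,
        ‖(A i * A j * A m * QFT N) (-k) k‖ ^ 2
        = ∑ k : ZMod N, ∑ i : I, ∑ j : I, ∑ m : I,
          ‖cdot (ev N (-k)) ((A i * A j * A m) *ᵥ fv N k)‖ ^ 2 := by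
      refine Finset.sum_congr rfl fun k _ => Finset.sum_congr rfl fun i _ =>
        Finset.sum_congr rfl fun j _ => Finset.sum_congr rfl fun m _ => ?_
      rw [entry_right]
    rw [hgoal, show (1 / (N:ℝ)) = (1 / (Fintype.card (ZMod N) : ℝ)) by rw [hcard],
      show Real.sqrt (Real.sqrt η1 + Real.sqrt η2)
        = Real.sqrt (Real.sqrt η2 + Real.sqrt η1) by rw [add_comm]]
    exact main
  · -- T2
    have main := avg_final
      (fun k => ∑ i : I, ∑ j : I, ∑ m : I,
        ‖cdot (fv N k) ((A i * A j * A m) *ᵥ ev N k)‖ ^ 2)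
      (fun k => ∑ i : I, ‖cdot (ev N k) (A i *ᵥ fv N k)‖ ^ 2)
      (fun k => ∑ i : I, ‖cdot (fv N (-k)) (A i *ᵥ ev N k)‖ ^ 2)
      σ ha1 hb1 η1 η2 hη1.1 hη1.2 hη2.1 hη2.2 hS1' hS2' ?ht2
    case ht2 =>
      intro k
      have h := triple_chain A hK (fun k => ev N k) (fun k => fv N k)
        he hf σ (fun k => by simp [hσ]) k
      simp only [hσ, neg_neg] at h ⊢
      exact h
    have hgoal : ∑ k : ZMod N, ∑ i : I, ∑ j : I, ∑ m : I,
        ‖((QFT N)ᴴ * (A i * A j * A m)) k k‖ ^ 2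
        = ∑ k : ZMod N, ∑ i : I, ∑ j : I, ∑ m : I,
          ‖cdot (fv N k) ((A i * A j * A m) *ᵥ ev N k)‖ ^ 2 := by
      refine Finset.sum_congr rfl fun k _ => Finset.sum_congr rfl fun i _ =>
        Finset.sum_congr rfl fun j _ => Finset.sum_congr rfl fun m _ => ?_
      rw [entry_T2]
    rw [hgoal, show (1 / (N:ℝ)) = (1 / (Fintype.card (ZMod N) : ℝ)) by rw [hcard]]
    exact main
end

section
/- Let η ∈ [0,1], let (A_i)_{i∈I} be a finite family of N×N complex matrices with Σ_i A_i† A_i = 1 satisfying Σ_i |Tr(A_i F)/N|² ≥ 1 − η (i.e. C ∈ S3(η)). Let d ≥ 1, let β ∈ ℂ^d with Σ_{k∈Fin d} |β_k|² = 1, and let p : Fin d → ZMod N. Then (1/N) Σ_{l∈ZMod N} Σ_i | Σ_{k∈Fin d} |β_k|² · (A_i F)_{p_k+l, p_k+l} |² ≥ 1 − η. (This quantity equals the average fidelity E_l[F((C⊗I)(|φ_{2,l}⟩⟨φ_{2,l}|), |φ_{3,l}⟩⟨φ_{3,l}|)] between the result of applying the noisy inverse QFT C to the phase-estimation state |φ_{2,l}⟩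 = Σ_k β_k f_{p_k+l} ⊗ e_k and the ideal state |φ_{3,l}⟩ = Σ_k β_k e_{p_k+l} ⊗ e_k; it is the key estimate in the proof of the exact-eigenvalue HHL theorem.) -/
open scoped BigOperators ComplexConjugate
open Finset Matrix

/-- Key estimate for the exact-eigenvalue HHL theorem: if `C ∈ S3(η)` with Kraus
operators `A i`, then the average fidelity
`E_l[F((C⊗I)(|φ_{2,l}⟩⟨φ_{2,l}|), |φ_{3,l}⟩⟨φ_{3,l}|)]
  = (1/N) Σ_l Σ_i |Σ_k |β_k|² (A_i F)_{p_k+l, p_k+l}|²` is at least `1 − η`. -/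
theorem hhl_key_estimate_exact (N : ℕ) [NeZero N] (η : ℝ)
    (hη : η ∈ Set.Icc (0 : ℝ) 1)
    (I : Type) [Fintype I] (A : I → Matrix (ZMod N) (ZMod N) ℂ)
    (hK : ∑ i : I, (A i)ᴴ * A i = 1)
    (hS3 : ∑ i : I, ‖(A i * QFT N).trace / (N : ℂ)‖ ^ 2 ≥ 1 - η)
    (d : ℕ) (hd : 1 ≤ d) (β : Fin d → ℂ)
    (hβ : ∑ k : Fin d, ‖β k‖ ^ 2 = 1)
    (p : Fin d → ZMod N) :
    (1 / N : ℝ) * ∑ l : ZMod N, ∑ i : I,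
      ‖∑ k : Fin d,
        ((‖β k‖ ^ 2 : ℝ) : ℂ) * (A i * QFT N) (p k + l) (p k + l)‖ ^ 2
      ≥ 1 - η := by
  set M : I → Matrix (ZMod N) (ZMod N) ℂ := fun i => A i * QFT N with hM
  set x : I → ZMod N → ℂ := fun i l =>
    ∑ k : Fin d, ((‖β k‖ ^ 2 : ℝ) : ℂ) * M i (p k + l) (p k + l) with hx
  have hN : (0 : ℝ) < N := Nat.cast_pos.mpr (Nat.pos_of_ne_zero (NeZero.ne N))
  have hcard : (Fintype.card (ZMod N) : ℝ) = N := by rw [ZMod.card]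
  -- Sum over l of x i l is the trace
  have htr : ∀ i, ∑ l : ZMod N, x i l = (M i).trace := by
    intro i
    rw [hx]
    simp only
    rw [Finset.sum_comm]
    have h1 : ∀ k : Fin d, ∑ l : ZMod N, ((‖β k‖ ^ 2 : ℝ) : ℂ) * M i (p k + l) (p k + l)
        = ((‖β k‖ ^ 2 : ℝ) : ℂ) * (M i).trace := by
      intro k
      rw [← Finset.mul_sum]
      congr 1
      rw [Matrix.trace]
      exact Fintype.sum_equiv (Equiv.addLeft (p k)) _ _ (fun l => rfl)
    simp_rw [h1, ← Finset.sum_mul]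
    have : (∑ k : Fin d, ((‖β k‖ ^ 2 : ℝ) : ℂ)) = 1 := by
      rw [← Complex.ofReal_sum, hβ, Complex.ofReal_one]
    rw [this, one_mul]
  show (1 / N : ℝ) * ∑ l : ZMod N, ∑ i : I, ‖x i l‖ ^ 2 ≥ 1 - η
  refine le_trans hS3 ?_
  rw [Finset.sum_comm, Finset.mul_sum]
  apply Finset.sum_le_sum
  intro i _
  have key : ‖(M i).trace‖ ^ 2 ≤ N * ∑ l : ZMod N, ‖x i l‖ ^ 2 := by
    calc ‖(M i).trace‖ ^ 2 = ‖∑ l : ZMod N, x i l‖ ^ 2 := by rw [htr]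
    _ ≤ (∑ l : ZMod N, ‖x i l‖) ^ 2 := by
        apply pow_le_pow_left₀ (norm_nonneg _)
        exact norm_sum_le _ _ -- maybe wrong lemma name for Complex.abs
    _ ≤ (Fintype.card (ZMod N) : ℝ) * ∑ l : ZMod N, ‖x i l‖ ^ 2 := by
        simpa using sq_sum_le_card_mul_sum_sq (s := Finset.univ) (f := fun l => ‖x i l‖)
    _ = N * ∑ l : ZMod N, ‖x i l‖ ^ 2 := by rw [hcard]
  have : ‖(M i).trace / N‖ ^ 2 = ‖(M i).trace‖ ^ 2 / (N:ℝ)^2 := by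
    rw [norm_div]
    simp [div_pow, Complex.norm_natCast]
  rw [this, div_le_iff₀ (by positivity)]
  calc ‖(M i).trace‖ ^ 2 ≤ N * ∑ l : ZMod N, ‖x i l‖ ^ 2 := key
    _ = (1 / N : ℝ) * (∑ l : ZMod N, ‖x i l‖ ^ 2) * (N:ℝ)^2 := by
        field_simp
    _ = _ := by rw [Finset.mul_sum]
end

section
/- Let η1, η2 ∈ [0,1]. Let (A_i)_{i∈I} be Kraus operators on ℂ^N with Σ_i A_i† A_i = 1 satisfying Σ_i |Tr(A_i F)/N|² ≥ 1 − η1 (C ∈ S3(η1)), and let (B_j)_{j∈J} be Kraus operators on ℂ^N with Σ_j B_j† B_j = 1 satisfying Σ_j |Tr(F† B_j)/N|² ≥ 1 − η2 (P ∈ T3(η2)). Let d ≥ 1, β ∈ ℂ^d with Σ_k |β_k|² = 1, p : Fin d → ZMod N, and f : ZMod N → [−1,1]. For l ∈ ZMod N define: the unitary R_l = Σ_{t∈ZMod N} (e_t e_t†) ⊗ I_d ⊗ Rot(f(t−l)) on ℂ^N ⊗ ℂ^d ⊗ ℂ²; the input state |φ_{2,l}⟩ = Σ_{k∈Fin d}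 β_k · f_{p_k+l} ⊗ e_k ∈ ℂ^N ⊗ ℂ^d; and the target state |φ_{5,l}⟩ = Σ_k β_k · f_{p_k+l} ⊗ e_k ⊗ (f(p_k)·e_0 + √(1−f(p_k)²)·e_1). Then (1/N) Σ_{l∈ZMod N} Σ_{i∈I, j∈J} | ⟨φ_{5,l}, (B_j ⊗ I_d ⊗ I_2) R_l (A_i ⊗ I_d ⊗ I_2) (|φ_{2,l}⟩ ⊗ e_0)⟩ |² ≥ 1 − √η1 − √η2. (This is Theorem 4.1, the exact-eigenvalue case of worst-case HHL with average-case correct QFT: the left-hand side is the average fidelity E_l[F(ρ_{5,l}, |φ_{5,l}⟩⟨φ_{5,l}|)] of the state produced when F⁻¹ is replaced by C and F by P in the HHL algorithm; since the remaining steps of the algorithm are exact unitaries, the same lower bound holds for the final output states ρ_{7,l} versus |φ_{7,l}⟩.) -/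
open scoped BigOperators ComplexConjugate
open Finset Matrix

/-- The 2×2 rotation `Rot(c)` with columns `(c, √(1−c²))` and `(−√(1−c²), c)`. -/
noncomputable def Rot (c : ℝ) : Matrix (Fin 2) (Fin 2) ℂ :=
  !![(c : ℂ), (-(Real.sqrt (1 - c ^ 2)) : ℝ); ((Real.sqrt (1 - c ^ 2) : ℝ) : ℂ), (c : ℂ)]

/-- `M ⊗ I_d ⊗ I_2` acting on `ℂ^N ⊗ ℂ^d ⊗ ℂ²`. -/
noncomputable def opTens (N d : ℕ) [NeZero N] (M : Matrix (ZMod N) (ZMod N) ℂ) :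
    Matrix (ZMod N × Fin d × Fin 2) (ZMod N × Fin d × Fin 2) ℂ :=
  fun q q' => if q.2 = q'.2 then M q.1 q'.1 else 0

/-- The controlled rotation `Σ_t (e_t e_t†) ⊗ I_d ⊗ Rot(g t)`. -/
noncomputable def ctrlRot (N d : ℕ) [NeZero N] (g : ZMod N → ℝ) :
    Matrix (ZMod N × Fin d × Fin 2) (ZMod N × Fin d × Fin 2) ℂ :=
  fun q q' => if q.1 = q'.1 ∧ q.2.1 = q'.2.1 then Rot (g q.1) q.2.2 q'.2.2 else 0

/-- The state `|φ_{2,l}⟩ ⊗ e_0 = (Σ_k β_k · f_{p_k+l} ⊗ e_k) ⊗ e_0`. -/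
noncomputable def phi2 (N d : ℕ) [NeZero N] (β : Fin d → ℂ) (p : Fin d → ZMod N)
    (l : ZMod N) : ZMod N × Fin d × Fin 2 → ℂ :=
  fun q => β q.2.1 * QFT N q.1 (p q.2.1 + l) * (if q.2.2 = 0 then 1 else 0)

/-- The target state
`|φ_{5,l}⟩ = Σ_k β_k · f_{p_k+l} ⊗ e_k ⊗ (f(p_k)·e_0 + √(1−f(p_k)²)·e_1)`. -/
noncomputable def phi5 (N d : ℕ) [NeZero N] (β : Fin d → ℂ) (p : Fin d → ZMod N)
    (f : ZMod N → ℝ) (l : ZMod N) : ZMod N × Fin d × Fin 2 → ℂ :=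
  fun q => β q.2.1 * QFT N q.1 (p q.2.1 + l) *
    (if q.2.2 = 0 then ((f (p q.2.1) : ℝ) : ℂ)
      else ((Real.sqrt (1 - f (p q.2.1) ^ 2) : ℝ) : ℂ))

namespace HHLaux

noncomputable def nsq {ι : Type*} [Fintype ι] (x : ι → ℂ) : ℝ := ∑ q, Complex.normSq (x q)

noncomputable def ip {ι : Type*} [Fintype ι] (x y : ι → ℂ) : ℂ := ∑ q, conj (x q) * y q

lemma nsq_nonneg {ι : Type*} [Fintype ι] (x : ι → ℂ) : 0 ≤ nsq x :=
  Finset.sum_nonneg fun _ _ => Complex.normSq_nonneg _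

lemma key_lower {ι : Type*} [Fintype ι] (φ Ψ : ι → ℂ) (c : ℂ) (hφ : nsq φ = 1) :
    nsq Ψ - nsq (fun q => Ψ q - c * φ q) ≤ Complex.normSq (ip φ Ψ) := by
  have hexp : nsq (fun q => Ψ q - c * φ q)
      = nsq Ψ - 2 * ((conj c) * ip φ Ψ).re + Complex.normSq c * nsq φ := by
    have hpt : ∀ q, Complex.normSq (Ψ q - c * φ q)
        = Complex.normSq (Ψ q) - 2 * ((conj (c * φ q)) * Ψ q).re
          + Complex.normSq c * Complex.normSq (φ q) := by
      intro q
      simp only [Complex.normSq_sub, Complex.normSq_mul, _root_.map_mul]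
      rw [mul_comm (Ψ q) ((starRingEnd ℂ) c * (starRingEnd ℂ) (φ q))]
      ring
    have h1 : ∑ q, ((conj (c * φ q)) * Ψ q).re = ((conj c) * ip φ Ψ).re := by
      unfold ip
      rw [Finset.mul_sum, ← Complex.re_sum]
      congr 1
      refine Finset.sum_congr rfl fun q _ => ?_
      rw [_root_.map_mul]
      ring
    unfold nsq
    rw [Finset.sum_congr rfl fun q _ => hpt q, Finset.sum_add_distrib, Finset.sum_sub_distrib,
      ← Finset.mul_sum, ← Finset.mul_sum, h1]
  have h0 : 0 ≤ Complex.normSq (ip φ Ψ - c) := Complex.normSq_nonneg _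
  have hexp2 : Complex.normSq (ip φ Ψ - c)
      = Complex.normSq (ip φ Ψ) - 2 * ((conj c) * ip φ Ψ).re + Complex.normSq c := by
    rw [Complex.normSq_sub]
    have : (ip φ Ψ * conj c).re = (conj c * ip φ Ψ).re := by ring_nf
    rw [this]
    ring
  rw [hexp, hφ]
  linarith [h0, hexp2.symm.le]

lemma zmod_sum_val {N : ℕ} [NeZero N] (g : ℕ → ℂ) :
    ∑ t : ZMod N, g t.val = ∑ t ∈ Finset.range N, g t := by
  have hval : ∀ x : ZMod N, ((x.val : ℕ) : ZMod N) = x := fun x => ZMod.natCast_rightInverse x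
  apply Finset.sum_nbij' (fun t => t.val) (fun t => ((t : ℕ) : ZMod N)) <;> intros <;>
    simp_all [ZMod.val_lt, ZMod.val_cast_of_lt, Finset.mem_range, Nat.mod_eq_of_lt]

lemma qft_apply {N : ℕ} [NeZero N] (t a : ZMod N) :
    QFT N t a = (Complex.exp (2 * Real.pi * Complex.I / N)) ^ (t.val * a.val)
      / (Real.sqrt N : ℂ) := by
  unfold QFT
  rw [← Complex.exp_nat_mul]
  congr 1
  push_cast
  ring

lemma qft_col_orth {N : ℕ} [NeZero N] (a b : ZMod N) :
    ∑ t : ZMod N, conj (QFT N t a) * QFT N t b = if a = b then 1 else 0 := by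
  have hNne : (N:ℕ) ≠ 0 := NeZero.ne N
  have hN : (0:ℝ) < N := Nat.cast_pos.mpr (Nat.pos_of_ne_zero hNne)
  have hNC : (N:ℂ) ≠ 0 := Nat.cast_ne_zero.mpr hNne
  have hval : ∀ x : ZMod N, ((x.val : ℕ) : ZMod N) = x := fun x => ZMod.natCast_rightInverse x
  set ξ : ℂ := Complex.exp (2 * Real.pi * Complex.I / N) with hξdef
  have hξ : IsPrimitiveRoot ξ N := by
    have := Complex.isPrimitiveRoot_exp N hNne
    convert this using 2 <;> norm_cast
  have hξ0 : ξ ≠ 0 := Complex.exp_ne_zero _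
  have hsqrt : ((Real.sqrt N : ℝ) : ℂ) * ((Real.sqrt N : ℝ) : ℂ) = (N:ℂ) := by
    rw [← Complex.ofReal_mul, Real.mul_self_sqrt hN.le]
    norm_cast
  set μ : ℂ := ξ ^ ((b.val : ℤ) - (a.val : ℤ)) with hμdef
  have hterm : ∀ t : ZMod N, conj (QFT N t a) * QFT N t b = μ ^ (t.val) / N := by
    intro t
    rw [qft_apply, qft_apply, map_div₀, map_pow]
    have hconj : conj ξ = ξ⁻¹ := by
      rw [hξdef, ← Complex.exp_conj, ← Complex.exp_neg]
      congr 1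
      simp only [map_div₀, _root_.map_mul, Complex.conj_I, Complex.conj_ofReal, map_natCast,
        map_ofNat]
      ring
    rw [hconj, Complex.conj_ofReal]
    rw [div_mul_div_comm, hsqrt]
    congr 1
    rw [hμdef, ← hξdef]
    rw [inv_pow, ← zpow_natCast ξ (t.val * a.val), ← _root_.zpow_neg, ← zpow_natCast ξ (t.val * b.val),
      ← zpow_add₀ hξ0, ← zpow_natCast (ξ ^ ((b.val:ℤ) - (a.val:ℤ))) t.val, ← _root_.zpow_mul]
    congr 1
    push_cast
    ring
  simp_rw [hterm]
  rw [zmod_sum_val (fun n => μ ^ n / N), ← Finset.sum_div]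
  by_cases hab : a = b
  · subst hab
    have hμ1 : μ = 1 := by rw [hμdef, sub_self, zpow_zero]
    simp [hμ1, div_self hNC]
  · have hμN : μ ^ N = 1 := by
      rw [hμdef, ← zpow_natCast (ξ ^ ((b.val:ℤ) - (a.val:ℤ))) N, ← _root_.zpow_mul,
        mul_comm ((b.val:ℤ) - (a.val:ℤ)) (N:ℤ), _root_.zpow_mul,
        zpow_natCast, hξ.pow_eq_one, _root_.one_zpow]
    have hμ1 : μ ≠ 1 := by
      intro h
      rw [hμdef] at h
      have hdvd : (N:ℤ) ∣ ((b.val:ℤ) - (a.val:ℤ)) := (hξ.zpow_eq_one_iff_dvd _).mp h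
      have h0 : (((b.val:ℤ) - (a.val:ℤ) : ℤ) : ZMod N) = 0 :=
        (ZMod.intCast_zmod_eq_zero_iff_dvd _ _).mpr hdvd
      push_cast at h0
      rw [hval, hval, sub_eq_zero] at h0
      exact hab h0.symm
    rw [geom_sum_eq hμ1 N, hμN]
    simp [hab]

lemma dot_star_self {ι : Type*} [Fintype ι] (w : ι → ℂ) :
    star w ⬝ᵥ w = ∑ t, (Complex.normSq (w t) : ℂ) := by
  simp [dotProduct, Pi.star_apply, Complex.star_def, Complex.normSq_eq_conj_mul_self]

lemma sum_vecMul_dot {ι : Type*} [Fintype ι] {n : Type*} [Fintype n]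
    (v : n → ℂ) (X : ι → Matrix n n ℂ) (u : n → ℂ) :
    ∑ i, (v ᵥ* X i) ⬝ᵥ u = (v ᵥ* ∑ i, X i) ⬝ᵥ u := by
  simp only [Matrix.vecMul, dotProduct, Matrix.sum_apply, Finset.sum_mul,
    Finset.mul_sum]
  rw [Finset.sum_comm]
  exact Finset.sum_congr rfl fun t _ => by rw [Finset.sum_comm]

lemma kraus_vec {n : Type*} [Fintype n] [DecidableEq n] {I : Type*} [Fintype I]
    (M : I → Matrix n n ℂ) (h : ∑ i, (M i)ᴴ * M i = 1) (v : n → ℂ) :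
    ∑ i, ∑ t, Complex.normSq ((M i *ᵥ v) t) = ∑ t, Complex.normSq (v t) := by
  have step : ∀ i, star (M i *ᵥ v) ⬝ᵥ (M i *ᵥ v) = (star v ᵥ* ((M i)ᴴ * M i)) ⬝ᵥ v := by
    intro i
    rw [Matrix.star_mulVec, Matrix.dotProduct_mulVec, Matrix.vecMul_vecMul]
  have hsum : (∑ i, ∑ t, (Complex.normSq ((M i *ᵥ v) t) : ℂ)) = ∑ t, (Complex.normSq (v t) : ℂ) := by
    calc ∑ i, ∑ t, (Complex.normSq ((M i *ᵥ v) t) : ℂ)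
        = ∑ i, star (M i *ᵥ v) ⬝ᵥ (M i *ᵥ v) :=
          Finset.sum_congr rfl fun i _ => (dot_star_self _).symm
      _ = ∑ i, (star v ᵥ* ((M i)ᴴ * M i)) ⬝ᵥ v := Finset.sum_congr rfl fun i _ => step i
      _ = (star v ᵥ* (∑ i, (M i)ᴴ * M i)) ⬝ᵥ v := sum_vecMul_dot _ _ _
      _ = star v ⬝ᵥ v := by rw [h, Matrix.vecMul_one]
      _ = ∑ t, (Complex.normSq (v t) : ℂ) := dot_star_self v
  exact_mod_cast hsum

lemma unitary_vec {n : Type*} [Fintype n] [DecidableEq n]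
    (U : Matrix n n ℂ) (h : Uᴴ * U = 1) (v : n → ℂ) :
    ∑ t, Complex.normSq ((U *ᵥ v) t) = ∑ t, Complex.normSq (v t) := by
  have := kraus_vec (fun _ : Fin 1 => U) (by simpa using h) v
  simpa using this

section Main

variable {N d : ℕ} [NeZero N]

lemma opTens_mulVec_apply (M : Matrix (ZMod N) (ZMod N) ℂ) (x : ZMod N × Fin d × Fin 2 → ℂ)
    (q : ZMod N × Fin d × Fin 2) :
    (opTens N d M *ᵥ x) q = ∑ t', M q.1 t' * x (t', q.2) := by
  obtain ⟨t, s⟩ := q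
  show ∑ q' : ZMod N × Fin d × Fin 2, (if s = q'.2 then M t q'.1 else 0) * x q' = _
  rw [Fintype.sum_prod_type]
  refine Finset.sum_congr rfl fun t' _ => ?_
  simp [ite_mul, Finset.sum_ite_eq]

lemma ctrlRot_mulVec_apply (g : ZMod N → ℝ) (x : ZMod N × Fin d × Fin 2 → ℂ)
    (q : ZMod N × Fin d × Fin 2) :
    (ctrlRot N d g *ᵥ x) q = ∑ r', Rot (g q.1) q.2.2 r' * x (q.1, q.2.1, r') := by
  obtain ⟨t, k, r⟩ := q
  show ∑ q' : ZMod N × Fin d × Fin 2,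
      (if t = q'.1 ∧ k = q'.2.1 then Rot (g t) r q'.2.2 else 0) * x q' = _
  rw [Fintype.sum_prod_type]
  rw [Finset.sum_eq_single t ?h1 ?h2]
  · rw [Fintype.sum_prod_type]
    rw [Finset.sum_eq_single k ?h3 ?h4]
    · simp
    · intro k' _ hk'
      simp [Ne.symm hk']
    · intro h
      exact absurd (Finset.mem_univ k) h
  · intro t' _ ht'
    simp [Ne.symm ht']
  · intro h
    exact absurd (Finset.mem_univ t) h

lemma qft_unitary : (QFT N)ᴴ * QFT N = 1 := by
  ext a b
  rw [Matrix.mul_apply, Matrix.one_apply]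
  simp_rw [Matrix.conjTranspose_apply]
  simpa using qft_col_orth a b

lemma qft_symm (t a : ZMod N) : QFT N t a = QFT N a t := by
  unfold QFT
  congr 2
  ring

lemma qft_normSq (t a : ZMod N) : Complex.normSq (QFT N t a) = 1 / N := by
  have hN : (0:ℝ) ≤ N := Nat.cast_nonneg N
  have h1 : QFT N t a = Complex.exp (((2 * Real.pi * t.val * a.val / N : ℝ)) * Complex.I)
      / (Real.sqrt N : ℂ) := by
    unfold QFT
    congr 1
    push_cast
    ring
  rw [h1, Complex.normSq_div]
  rw [Complex.normSq_eq_norm_sq, Complex.norm_exp_ofReal_mul_I]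
  rw [Complex.normSq_ofReal, Real.mul_self_sqrt hN]
  norm_num

lemma qft_colsq (a : ZMod N) : ∑ t : ZMod N, Complex.normSq (QFT N t a) = 1 := by
  simp only [qft_normSq, Finset.sum_const, Finset.card_univ, ZMod.card, nsmul_eq_mul,
    mul_one_div]
  rw [div_self (Nat.cast_ne_zero.mpr (NeZero.ne N))]

lemma sum_shift (h : ZMod N → ℝ) (c : ZMod N) : ∑ l : ZMod N, h (c + l) = ∑ m : ZMod N, h m :=
  Fintype.sum_equiv (Equiv.addLeft c) _ _ fun l => rfl

noncomputable def rho (c : ℝ) : Fin 2 → ℂ :=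
  fun r => if r = 0 then (c : ℂ) else ((Real.sqrt (1 - c ^ 2) : ℝ) : ℂ)

lemma rot_col0 (c : ℝ) (r : Fin 2) : Rot c r 0 = rho c r := by
  fin_cases r <;> simp [Rot, rho]

lemma rho_sumsq (c : ℝ) (hc : c ∈ Set.Icc (-1:ℝ) 1) :
    ∑ r : Fin 2, Complex.normSq (rho c r) = 1 := by
  have h1 : (0:ℝ) ≤ 1 - c ^ 2 := by nlinarith [hc.1, hc.2]
  rw [Fin.sum_univ_two]
  have e0 : rho c 0 = (c : ℂ) := rfl
  have e1 : rho c 1 = ((Real.sqrt (1 - c ^ 2) : ℝ) : ℂ) := rfl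
  rw [e0, e1, Complex.normSq_ofReal, Complex.normSq_ofReal, Real.mul_self_sqrt h1]
  ring

noncomputable def zeta (β : Fin d → ℂ) (p : Fin d → ZMod N) (f : ZMod N → ℝ) (l : ZMod N) :
    ZMod N × Fin d × Fin 2 → ℂ :=
  fun q => β q.2.1 * (if q.1 = p q.2.1 + l then 1 else 0) * rho (f (p q.2.1)) q.2.2

lemma ctrlRot_qftH_phi2 (β : Fin d → ℂ) (p : Fin d → ZMod N) (f : ZMod N → ℝ) (l : ZMod N) :
    ctrlRot N d (fun t => f (t - l)) *ᵥ (opTens N d (QFT N)ᴴ *ᵥ phi2 N d β p l)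
      = zeta β p f l := by
  funext q
  obtain ⟨t, k, r⟩ := q
  have hin : ∀ (t' : ZMod N) (r' : Fin 2),
      (opTens N d (QFT N)ᴴ *ᵥ phi2 N d β p l) (t', k, r')
        = β k * (if r' = 0 then 1 else 0) * (if t' = p k + l then 1 else 0) := by
    intro t' r'
    rw [opTens_mulVec_apply]
    simp only [phi2]
    calc ∑ t'' : ZMod N,
          (QFT N)ᴴ t' t'' * (β k * QFT N t'' (p k + l) * (if r' = 0 then (1:ℂ) else 0))
        = (β k * (if r' = 0 then (1:ℂ) else 0))
            * ∑ t'' : ZMod N, conj (QFT N t'' t') * QFT N t'' (p k + l) := by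
          rw [Finset.mul_sum]
          refine Finset.sum_congr rfl fun t'' _ => ?_
          simp only [Matrix.conjTranspose_apply, Complex.star_def]
          ring
      _ = _ := by rw [qft_col_orth]
  rw [ctrlRot_mulVec_apply]
  simp only [hin]
  rw [Fin.sum_univ_two]
  simp only [if_pos rfl, if_neg (by decide : (1 : Fin 2) ≠ 0)]
  by_cases ht : t = p k + l
  · have htl : t - l = p k := by rw [ht]; ring
    simp only [zeta, ht, htl, if_pos rfl, rot_col0, if_true, eq_self_iff_true]
    ring
  · simp [zeta, ht]

lemma opTens_qft_zeta (β : Fin d → ℂ) (p : Fin d → ZMod N) (f : ZMod N → ℝ) (l : ZMod N) :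
    opTens N d (QFT N) *ᵥ zeta β p f l = phi5 N d β p f l := by
  funext q
  obtain ⟨t, k, r⟩ := q
  rw [opTens_mulVec_apply]
  simp only [zeta]
  rw [Finset.sum_eq_single (p k + l) ?h1 ?h2]
  · simp only [phi5, rho, if_true, eq_self_iff_true, if_pos rfl]
    ring
  · intro t' _ ht'
    simp [ht']
  · intro h
    exact absurd (Finset.mem_univ _) h

lemma nsq_prod (cf : Fin d → ℂ) (u : Fin d → ZMod N → ℂ) (v : Fin d → Fin 2 → ℂ) :
    nsq (fun q : ZMod N × Fin d × Fin 2 => cf q.2.1 * u q.2.1 q.1 * v q.2.1 q.2.2)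
      = ∑ k, Complex.normSq (cf k)
          * ((∑ t, Complex.normSq (u k t)) * (∑ r, Complex.normSq (v k r))) := by
  unfold nsq
  rw [Fintype.sum_prod_type_right, Fintype.sum_prod_type]
  refine Finset.sum_congr rfl fun k _ => ?_
  calc ∑ r : Fin 2, ∑ t : ZMod N, Complex.normSq (cf k * u k t * v k r)
      = ∑ r : Fin 2, Complex.normSq (v k r)
          * (Complex.normSq (cf k) * ∑ t, Complex.normSq (u k t)) := by
        refine Finset.sum_congr rfl fun r _ => ?_
        rw [Finset.mul_sum, Finset.mul_sum]
        refine Finset.sum_congr rfl fun t _ => ?_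
        simp only [Complex.normSq_mul]
        ring
    _ = (∑ r : Fin 2, Complex.normSq (v k r))
          * (Complex.normSq (cf k) * ∑ t, Complex.normSq (u k t)) := by
        rw [← Finset.sum_mul]
    _ = _ := by ring

lemma opTens_prod (M : Matrix (ZMod N) (ZMod N) ℂ) (cf : Fin d → ℂ)
    (u : Fin d → ZMod N → ℂ) (v : Fin d → Fin 2 → ℂ) :
    opTens N d M *ᵥ (fun q => cf q.2.1 * u q.2.1 q.1 * v q.2.1 q.2.2)
      = fun q => cf q.2.1 * (∑ t', M q.1 t' * u q.2.1 t') * v q.2.1 q.2.2 := by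
  funext q
  rw [opTens_mulVec_apply]
  have hpt : ∀ t', M q.1 t' * (cf q.2.1 * u q.2.1 t' * v q.2.1 q.2.2)
      = cf q.2.1 * (M q.1 t' * u q.2.1 t') * v q.2.1 q.2.2 := fun t' => by ring
  rw [Finset.sum_congr rfl fun t' _ => hpt t', ← Finset.sum_mul, ← Finset.mul_sum]

noncomputable def hsSq (X : Matrix (ZMod N) (ZMod N) ℂ) : ℝ :=
  ∑ t, ∑ m, Complex.normSq (X t m)

lemma avg_col (X : Matrix (ZMod N) (ZMod N) ℂ) (c : ZMod N) :
    ∑ l : ZMod N, ∑ t, Complex.normSq (X t (c + l)) = hsSq X := by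
  unfold hsSq
  rw [Finset.sum_comm]
  exact Finset.sum_congr rfl fun t _ => sum_shift (fun m => Complex.normSq (X t m)) c

lemma sum_hsSq_kraus {I : Type*} [Fintype I] (M : I → Matrix (ZMod N) (ZMod N) ℂ)
    (h : ∑ i, (M i)ᴴ * M i = 1) : ∑ i, hsSq (M i) = N := by
  have hcol : ∀ m : ZMod N, ∑ i, ∑ t, Complex.normSq (M i t m) = 1 := by
    intro m
    have hv := kraus_vec M h (Pi.single m 1)
    simp only [Matrix.mulVec_single_one, Matrix.col_apply] at hv
    rw [hv]
    simp [Pi.single_apply, apply_ite Complex.normSq]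
  calc ∑ i, hsSq (M i) = ∑ i, ∑ m, ∑ t, Complex.normSq (M i t m) := by
        exact Finset.sum_congr rfl fun i _ => Finset.sum_comm
    _ = ∑ m : ZMod N, ∑ i, ∑ t, Complex.normSq (M i t m) := Finset.sum_comm
    _ = ∑ _m : ZMod N, (1:ℝ) := Finset.sum_congr rfl fun m _ => hcol m
    _ = N := by simp [Finset.card_univ, ZMod.card]

lemma hsSq_mul_qft (M : Matrix (ZMod N) (ZMod N) ℂ) : hsSq (M * QFT N) = hsSq M := by
  have hrow : ∀ t m, (M * QFT N) t m = (QFT N *ᵥ fun t' => M t t') m := by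
    intro t m
    rw [Matrix.mul_apply]
    show _ = ∑ t', QFT N m t' * M t t'
    refine Finset.sum_congr rfl fun t' _ => ?_
    rw [qft_symm m t']
    ring
  unfold hsSq
  refine Finset.sum_congr rfl fun t _ => ?_
  rw [Finset.sum_congr rfl fun m _ => congrArg Complex.normSq (hrow t m)]
  exact unitary_vec (QFT N) qft_unitary (fun t' => M t t')

lemma hsSq_sub_smul (Y W : Matrix (ZMod N) (ZMod N) ℂ) (b : ℂ) :
    hsSq (Y - b • W) = hsSq Y - 2 * ((conj b) * ∑ t, ∑ m, conj (W t m) * Y t m).re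
      + Complex.normSq b * hsSq W := by
  have hpt : ∀ t m, Complex.normSq ((Y - b • W) t m)
      = Complex.normSq (Y t m) - 2 * ((conj (b * W t m)) * Y t m).re
        + Complex.normSq b * Complex.normSq (W t m) := by
    intro t m
    simp only [Matrix.sub_apply, Matrix.smul_apply, smul_eq_mul]
    simp only [Complex.normSq_sub, Complex.normSq_mul, _root_.map_mul]
    rw [mul_comm (Y t m) _]
    ring
  have h2 : ((conj b) * ∑ t, ∑ m, conj (W t m) * Y t m).re
      = ∑ t, ∑ m, ((conj (b * W t m)) * Y t m).re := by
    rw [Finset.mul_sum, Complex.re_sum]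
    refine Finset.sum_congr rfl fun t _ => ?_
    rw [Finset.mul_sum, Complex.re_sum]
    refine Finset.sum_congr rfl fun m _ => ?_
    rw [_root_.map_mul]
    congr 1
    ring
  unfold hsSq
  rw [Finset.sum_congr rfl fun t _ => Finset.sum_congr rfl fun m _ => hpt t m]
  simp only [Finset.sum_add_distrib, Finset.sum_sub_distrib, ← Finset.mul_sum]
  rw [h2]

lemma hsSq_one : hsSq (1 : Matrix (ZMod N) (ZMod N) ℂ) = N := by
  unfold hsSq
  simp only [Matrix.one_apply, apply_ite Complex.normSq, Complex.normSq_one, Complex.normSq_zero]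
  simp [Finset.sum_ite_eq', Finset.card_univ, ZMod.card]

lemma hsSq_qft : hsSq (QFT N) = N := by
  unfold hsSq
  simp only [qft_normSq]
  rw [Finset.sum_const, Finset.sum_const]
  simp [Finset.card_univ, ZMod.card]

lemma hsSq_sub_smul_one (X : Matrix (ZMod N) (ZMod N) ℂ) (a : ℂ) (htr : X.trace = N * a) :
    hsSq (X - a • 1) = hsSq X - N * Complex.normSq a := by
  rw [hsSq_sub_smul, hsSq_one]
  have hW : ∑ t, ∑ m, conj ((1 : Matrix (ZMod N) (ZMod N) ℂ) t m) * X t m = X.trace := by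
    rw [Matrix.trace]
    refine Finset.sum_congr rfl fun t _ => ?_
    rw [Finset.sum_eq_single t ?ha ?hb]
    · simp [Matrix.one_apply, Matrix.diag]
    · intro m _ hm
      simp [Matrix.one_apply, Ne.symm hm]
    · intro h
      exact absurd (Finset.mem_univ _) h
  rw [hW, htr]
  have : ((conj a) * ((N : ℂ) * a)).re = N * Complex.normSq a := by
    have : (conj a) * ((N:ℂ) * a) = (N:ℂ) * ((Complex.normSq a : ℝ) : ℂ) := by
      rw [Complex.normSq_eq_conj_mul_self]
      ring
    rw [this]
    simp
  rw [this]
  ring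

lemma hsSq_sub_smul_qft (Y : Matrix (ZMod N) (ZMod N) ℂ) (b : ℂ)
    (htr : ((QFT N)ᴴ * Y).trace = N * b) :
    hsSq (Y - b • QFT N) = hsSq Y - N * Complex.normSq b := by
  rw [hsSq_sub_smul, hsSq_qft]
  have hW : ∑ t, ∑ m, conj ((QFT N) t m) * Y t m = ((QFT N)ᴴ * Y).trace := by
    rw [Matrix.trace, Finset.sum_comm]
    refine Finset.sum_congr rfl fun m _ => ?_
    rw [Matrix.diag_apply, Matrix.mul_apply]
    exact Finset.sum_congr rfl fun t _ => by
      simp only [Matrix.conjTranspose_apply, Complex.star_def]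
  rw [hW, htr]
  have : ((conj b) * ((N : ℂ) * b)).re = N * Complex.normSq b := by
    have h3 : (conj b) * ((N:ℂ) * b) = (N:ℂ) * ((Complex.normSq b : ℝ) : ℂ) := by
      rw [Complex.normSq_eq_conj_mul_self]
      ring
    rw [h3]
    simp
  rw [this]
  ring

lemma nsq_shape (x : ZMod N × Fin d × Fin 2 → ℂ) (cf : Fin d → ℂ)
    (u : Fin d → ZMod N → ℂ) (v : Fin d → Fin 2 → ℂ)
    (hx : ∀ q, x q = cf q.2.1 * u q.2.1 q.1 * v q.2.1 q.2.2) :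
    nsq x = ∑ k, Complex.normSq (cf k)
      * ((∑ t, Complex.normSq (u k t)) * (∑ r, Complex.normSq (v k r))) := by
  have h1 : nsq x = nsq (fun q : ZMod N × Fin d × Fin 2
      => cf q.2.1 * u q.2.1 q.1 * v q.2.1 q.2.2) := by
    unfold nsq
    exact Finset.sum_congr rfl fun q _ => by rw [hx q]
  exact h1.trans (nsq_prod cf u v)

lemma sum_ite_one (m : ZMod N) : ∑ t : ZMod N, Complex.normSq (if t = m then (1:ℂ) else 0) = 1 := by
  simp [apply_ite Complex.normSq, Finset.sum_ite_eq']

lemma sum_e0 : ∑ r : Fin 2, Complex.normSq (if r = 0 then (1:ℂ) else 0) = 1 := by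
  rw [Fin.sum_univ_two]
  norm_num

lemma nsq_phi2 (β : Fin d → ℂ) (p : Fin d → ZMod N) (l : ZMod N)
    (hβ : ∑ k, Complex.normSq (β k) = 1) : nsq (phi2 N d β p l) = 1 := by
  have h := nsq_shape (phi2 N d β p l) β (fun k t => QFT N t (p k + l))
    (fun _ r => if r = 0 then (1:ℂ) else 0) (fun q => rfl)
  rw [h, Finset.sum_congr rfl fun k (_ : k ∈ Finset.univ) => by
    rw [qft_colsq, sum_e0, one_mul, mul_one], hβ]

lemma nsq_phi5 (β : Fin d → ℂ) (p : Fin d → ZMod N) (f : ZMod N → ℝ) (l : ZMod N)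
    (hβ : ∑ k, Complex.normSq (β k) = 1) (hf : ∀ t, f t ∈ Set.Icc (-1:ℝ) 1) :
    nsq (phi5 N d β p f l) = 1 := by
  have h := nsq_shape (phi5 N d β p f l) β (fun k t => QFT N t (p k + l))
    (fun k r => rho (f (p k)) r) (fun q => rfl)
  rw [h, Finset.sum_congr rfl fun k (_ : k ∈ Finset.univ) => by
    rw [qft_colsq, rho_sumsq (f (p k)) (hf (p k)), one_mul, mul_one], hβ]

lemma nsq_opTens_phi2 (M : Matrix (ZMod N) (ZMod N) ℂ) (β : Fin d → ℂ) (p : Fin d → ZMod N)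
    (l : ZMod N) :
    nsq (opTens N d M *ᵥ phi2 N d β p l)
      = ∑ k, Complex.normSq (β k) * (∑ t, Complex.normSq ((M * QFT N) t (p k + l))) := by
  have hx : ∀ q : ZMod N × Fin d × Fin 2, (opTens N d M *ᵥ phi2 N d β p l) q
      = β q.2.1 * ((M * QFT N) q.1 (p q.2.1 + l)) * (if q.2.2 = 0 then (1:ℂ) else 0) := by
    intro q
    rw [opTens_mulVec_apply, Matrix.mul_apply, Finset.mul_sum, Finset.sum_mul]
    refine Finset.sum_congr rfl fun t' _ => ?_
    simp only [phi2]
    ring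
  rw [nsq_shape _ β (fun k t => (M * QFT N) t (p k + l)) (fun _ r => if r = 0 then (1:ℂ) else 0) hx]
  exact Finset.sum_congr rfl fun k _ => by rw [sum_e0, mul_one]

lemma nsq_opTens_zeta (M : Matrix (ZMod N) (ZMod N) ℂ) (β : Fin d → ℂ) (p : Fin d → ZMod N)
    (f : ZMod N → ℝ) (l : ZMod N) (hf : ∀ t, f t ∈ Set.Icc (-1:ℝ) 1) :
    nsq (opTens N d M *ᵥ zeta β p f l)
      = ∑ k, Complex.normSq (β k) * (∑ t, Complex.normSq (M t (p k + l))) := by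
  have hx : ∀ q : ZMod N × Fin d × Fin 2, (opTens N d M *ᵥ zeta β p f l) q
      = β q.2.1 * (M q.1 (p q.2.1 + l)) * rho (f (p q.2.1)) q.2.2 := by
    intro q
    rw [opTens_mulVec_apply]
    simp only [zeta]
    rw [Finset.sum_eq_single (p q.2.1 + l) ?ha ?hb]
    · simp only [if_pos rfl, if_true, eq_self_iff_true]
      ring
    · intro t' _ ht'
      simp [ht']
    · intro h
      exact absurd (Finset.mem_univ _) h
  rw [nsq_shape _ β (fun k t => M t (p k + l)) (fun k r => rho (f (p k)) r) hx]
  exact Finset.sum_congr rfl fun k _ => by rw [rho_sumsq (f (p k)) (hf (p k)), mul_one]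

lemma sum_nsq_opTens {I : Type*} [Fintype I] (M : I → Matrix (ZMod N) (ZMod N) ℂ)
    (h : ∑ i, (M i)ᴴ * M i = 1) (x : ZMod N × Fin d × Fin 2 → ℂ) :
    ∑ i, nsq (opTens N d (M i) *ᵥ x) = nsq x := by
  have hre : ∀ i, nsq (opTens N d (M i) *ᵥ x)
      = ∑ s : Fin d × Fin 2, ∑ t, Complex.normSq ((M i *ᵥ fun t' => x (t', s)) t) := by
    intro i
    unfold nsq
    rw [Fintype.sum_prod_type_right]
    refine Finset.sum_congr rfl fun s _ => Finset.sum_congr rfl fun t _ => ?_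
    rw [opTens_mulVec_apply]
    rfl
  rw [Finset.sum_congr rfl fun i (_ : i ∈ Finset.univ) => hre i, Finset.sum_comm]
  calc ∑ s : Fin d × Fin 2, ∑ i, ∑ t, Complex.normSq ((M i *ᵥ fun t' => x (t', s)) t)
      = ∑ s : Fin d × Fin 2, ∑ t, Complex.normSq (x (t, s)) :=
        Finset.sum_congr rfl fun s _ => kraus_vec M h _
    _ = nsq x :=
        (Fintype.sum_prod_type_right
          (f := fun q : ZMod N × Fin d × Fin 2 => Complex.normSq (x q))).symm

lemma rot_scalar (c s : ℝ) (hcs : c ^ 2 + s ^ 2 = 1) (z0 z1 : ℂ) :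
    Complex.normSq ((c:ℂ) * z0 + ((-s : ℝ) : ℂ) * z1)
      + Complex.normSq ((s:ℂ) * z0 + (c:ℂ) * z1)
      = Complex.normSq z0 + Complex.normSq z1 := by
  simp only [Complex.normSq_apply, Complex.add_re, Complex.add_im, Complex.mul_re,
    Complex.mul_im, Complex.ofReal_re, Complex.ofReal_im]
  ring_nf
  nlinarith [hcs, sq_nonneg (z0.re), sq_nonneg (z1.re)]

lemma nsq_ctrlRot (g : ZMod N → ℝ) (hg : ∀ t, g t ∈ Set.Icc (-1:ℝ) 1)
    (x : ZMod N × Fin d × Fin 2 → ℂ) :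
    nsq (ctrlRot N d g *ᵥ x) = nsq x := by
  have expand : ∀ y : ZMod N × Fin d × Fin 2 → ℂ,
      nsq y = ∑ t, ∑ k, ∑ r, Complex.normSq (y (t, k, r)) := by
    intro y
    unfold nsq
    rw [Fintype.sum_prod_type]
    exact Finset.sum_congr rfl fun t _ => Fintype.sum_prod_type _
  rw [expand, expand]
  refine Finset.sum_congr rfl fun t _ => Finset.sum_congr rfl fun k _ => ?_
  have happ : ∀ r : Fin 2, (ctrlRot N d g *ᵥ x) (t, k, r)
      = ∑ r', Rot (g t) r r' * x (t, k, r') := fun r => ctrlRot_mulVec_apply g x (t, k, r)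
  rw [Fin.sum_univ_two, Fin.sum_univ_two, happ 0, happ 1, Fin.sum_univ_two, Fin.sum_univ_two]
  have h1 : (0:ℝ) ≤ 1 - (g t) ^ 2 := by nlinarith [(hg t).1, (hg t).2]
  have hcs : (g t) ^ 2 + (Real.sqrt (1 - (g t) ^ 2)) ^ 2 = 1 := by
    rw [Real.sq_sqrt h1]
    ring
  have e00 : Rot (g t) 0 0 = ((g t : ℝ) : ℂ) := rfl
  have e01 : Rot (g t) 0 1 = ((-(Real.sqrt (1 - (g t) ^ 2)) : ℝ) : ℂ) := rfl
  have e10 : Rot (g t) 1 0 = ((Real.sqrt (1 - (g t) ^ 2) : ℝ) : ℂ) := rfl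
  have e11 : Rot (g t) 1 1 = ((g t : ℝ) : ℂ) := rfl
  rw [e00, e01, e10, e11]
  exact rot_scalar (g t) (Real.sqrt (1 - (g t) ^ 2)) hcs (x (t, k, 0)) (x (t, k, 1))

lemma mulVec_sub_smul {ι : Type*} [Fintype ι] (M : Matrix ι ι ℂ) (x y : ι → ℂ) (c : ℂ) :
    M *ᵥ (fun q => x q - c * y q) = fun q => (M *ᵥ x) q - c * (M *ᵥ y) q := by
  funext q
  show ∑ t, M q t * (x t - c * y t) = ∑ t, M q t * x t - c * ∑ t, M q t * y t
  rw [Finset.mul_sum, ← Finset.sum_sub_distrib]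
  exact Finset.sum_congr rfl fun t _ => by ring

lemma opTens_sub_smul (M M' : Matrix (ZMod N) (ZMod N) ℂ) (c : ℂ)
    (x : ZMod N × Fin d × Fin 2 → ℂ) :
    opTens N d (M - c • M') *ᵥ x
      = fun q => (opTens N d M *ᵥ x) q - c * ((opTens N d M' *ᵥ x) q) := by
  funext q
  rw [opTens_mulVec_apply, opTens_mulVec_apply, opTens_mulVec_apply, Finset.mul_sum,
    ← Finset.sum_sub_distrib]
  refine Finset.sum_congr rfl fun t' _ => ?_
  simp only [Matrix.sub_apply, Matrix.smul_apply, smul_eq_mul]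
  ring

lemma nsq_smul {ι : Type*} [Fintype ι] (c : ℂ) (x : ι → ℂ) :
    nsq (fun q => c * x q) = Complex.normSq c * nsq x := by
  unfold nsq
  rw [Finset.mul_sum]
  exact Finset.sum_congr rfl fun q _ => Complex.normSq_mul c (x q)

lemma nsq_add_le {ι : Type*} [Fintype ι] (x y : ι → ℂ) :
    nsq (fun q => x q + y q) ≤ (Real.sqrt (nsq x) + Real.sqrt (nsq y)) ^ 2 := by
  have hxy : ∀ q, Complex.normSq (x q + y q)
      ≤ Complex.normSq (x q) + 2 * (‖x q‖ * ‖y q‖)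
        + Complex.normSq (y q) := by
    intro q
    have htri := norm_add_le (x q) (y q)
    rw [← Complex.sq_norm, ← Complex.sq_norm, ← Complex.sq_norm]
    nlinarith [norm_nonneg (x q), norm_nonneg (y q),
      norm_nonneg (x q + y q)]
  have hsum : nsq (fun q => x q + y q)
      ≤ nsq x + 2 * (∑ q, ‖x q‖ * ‖y q‖) + nsq y := by
    unfold nsq
    calc ∑ q, Complex.normSq (x q + y q)
        ≤ ∑ q, (Complex.normSq (x q) + 2 * (‖x q‖ * ‖y q‖)
            + Complex.normSq (y q)) := Finset.sum_le_sum fun q _ => hxy q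
      _ = _ := by
          rw [Finset.sum_add_distrib, Finset.sum_add_distrib, ← Finset.mul_sum]
  have h4 : 0 ≤ ∑ q, ‖x q‖ * ‖y q‖ :=
    Finset.sum_nonneg fun q _ => mul_nonneg (norm_nonneg _) (norm_nonneg _)
  have hcs : ∑ q, ‖x q‖ * ‖y q‖
      ≤ Real.sqrt (nsq x) * Real.sqrt (nsq y) := by
    have h1 := Finset.sum_mul_sq_le_sq_mul_sq Finset.univ
      (fun q => ‖x q‖) (fun q => ‖y q‖)
    have h2 : (∑ q, ‖x q‖ ^ 2) = nsq x := by
      unfold nsq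
      exact Finset.sum_congr rfl fun q _ => Complex.sq_norm _
    have h3 : (∑ q, ‖y q‖ ^ 2) = nsq y := by
      unfold nsq
      exact Finset.sum_congr rfl fun q _ => Complex.sq_norm _
    rw [h2, h3] at h1
    rw [← Real.sqrt_mul (nsq_nonneg x)]
    exact Real.le_sqrt_of_sq_le h1
  have hexp : (Real.sqrt (nsq x) + Real.sqrt (nsq y)) ^ 2
      = nsq x + 2 * (Real.sqrt (nsq x) * Real.sqrt (nsq y)) + nsq y := by
    rw [add_sq, Real.sq_sqrt (nsq_nonneg x), Real.sq_sqrt (nsq_nonneg y)]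
    ring
  rw [hexp]
  linarith

lemma step_decomp (Ai Bj : Matrix (ZMod N) (ZMod N) ℂ) (ai bj : ℂ)
    (β : Fin d → ℂ) (p : Fin d → ZMod N) (f : ZMod N → ℝ) (l : ZMod N)
    (q : ZMod N × Fin d × Fin 2) :
    (opTens N d Bj *ᵥ (ctrlRot N d (fun t => f (t - l)) *ᵥ (opTens N d Ai *ᵥ phi2 N d β p l))) q
        - (ai * bj) * phi5 N d β p f l q
      = (opTens N d Bj *ᵥ (ctrlRot N d (fun t => f (t - l)) *ᵥ
          (opTens N d (Ai - ai • (QFT N)ᴴ) *ᵥ phi2 N d β p l))) q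
        + ai * ((opTens N d (Bj - bj • QFT N) *ᵥ zeta β p f l) q) := by
  have e1 : opTens N d Bj *ᵥ (ctrlRot N d (fun t => f (t - l)) *ᵥ
      (opTens N d (Ai - ai • (QFT N)ᴴ) *ᵥ phi2 N d β p l))
      = fun q => (opTens N d Bj *ᵥ (ctrlRot N d (fun t => f (t - l)) *ᵥ
          (opTens N d Ai *ᵥ phi2 N d β p l))) q
        - ai * ((opTens N d Bj *ᵥ zeta β p f l) q) := by
    rw [opTens_sub_smul, mulVec_sub_smul, ctrlRot_qftH_phi2, mulVec_sub_smul]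
  have e2 : opTens N d (Bj - bj • QFT N) *ᵥ zeta β p f l
      = fun q => (opTens N d Bj *ᵥ zeta β p f l) q - bj * (phi5 N d β p f l q) := by
    rw [opTens_sub_smul, opTens_qft_zeta]
  rw [e1, e2]
  ring

lemma avg_nsq_opTens_phi2 (M : Matrix (ZMod N) (ZMod N) ℂ) (β : Fin d → ℂ)
    (p : Fin d → ZMod N) (hβ : ∑ k, Complex.normSq (β k) = 1) :
    ∑ l : ZMod N, nsq (opTens N d M *ᵥ phi2 N d β p l) = hsSq (M * QFT N) := by
  rw [Finset.sum_congr rfl fun l (_ : l ∈ Finset.univ) => nsq_opTens_phi2 M β p l,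
    Finset.sum_comm]
  calc ∑ k, ∑ l : ZMod N, Complex.normSq (β k)
          * (∑ t, Complex.normSq ((M * QFT N) t (p k + l)))
      = ∑ k, Complex.normSq (β k) * hsSq (M * QFT N) := by
        refine Finset.sum_congr rfl fun k _ => ?_
        rw [← Finset.mul_sum, avg_col (M * QFT N) (p k)]
    _ = hsSq (M * QFT N) := by rw [← Finset.sum_mul, hβ, one_mul]

lemma avg_nsq_opTens_zeta (M : Matrix (ZMod N) (ZMod N) ℂ) (β : Fin d → ℂ)
    (p : Fin d → ZMod N) (f : ZMod N → ℝ) (hβ : ∑ k, Complex.normSq (β k) = 1)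
    (hf : ∀ t, f t ∈ Set.Icc (-1:ℝ) 1) :
    ∑ l : ZMod N, nsq (opTens N d M *ᵥ zeta β p f l) = hsSq M := by
  rw [Finset.sum_congr rfl fun l (_ : l ∈ Finset.univ) => nsq_opTens_zeta M β p f l hf,
    Finset.sum_comm]
  calc ∑ k, ∑ l : ZMod N, Complex.normSq (β k) * (∑ t, Complex.normSq (M t (p k + l)))
      = ∑ k, Complex.normSq (β k) * hsSq M := by
        refine Finset.sum_congr rfl fun k _ => ?_
        rw [← Finset.mul_sum, avg_col M (p k)]
    _ = hsSq M := by rw [← Finset.sum_mul, hβ, one_mul]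

lemma hsSq_nonneg (X : Matrix (ZMod N) (ZMod N) ℂ) : 0 ≤ hsSq X :=
  Finset.sum_nonneg fun _ _ => Finset.sum_nonneg fun _ _ => Complex.normSq_nonneg _

lemma per_term (Ai Bj : Matrix (ZMod N) (ZMod N) ℂ) (ai bj : ℂ) (β : Fin d → ℂ)
    (p : Fin d → ZMod N) (f : ZMod N → ℝ) (l : ZMod N)
    (hβ' : ∑ k, Complex.normSq (β k) = 1) (hf : ∀ t, f t ∈ Set.Icc (-1:ℝ) 1) :
    nsq (opTens N d Bj *ᵥ (ctrlRot N d (fun t => f (t - l)) *ᵥ (opTens N d Ai *ᵥ phi2 N d β p l)))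
      - (Real.sqrt (nsq (opTens N d Bj *ᵥ (ctrlRot N d (fun t => f (t - l)) *ᵥ
            (opTens N d (Ai - ai • (QFT N)ᴴ) *ᵥ phi2 N d β p l))))
        + Real.sqrt (nsq (fun q => ai * ((opTens N d (Bj - bj • QFT N) *ᵥ zeta β p f l) q)))) ^ 2
      ≤ Complex.normSq (∑ q, conj (phi5 N d β p f l q)
          * ((opTens N d Bj *ᵥ (ctrlRot N d (fun t => f (t - l)) *ᵥ
              (opTens N d Ai *ᵥ phi2 N d β p l))) q)) := by
  have hk := key_lower (phi5 N d β p f l)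
    (opTens N d Bj *ᵥ (ctrlRot N d (fun t => f (t - l)) *ᵥ (opTens N d Ai *ᵥ phi2 N d β p l)))
    (ai * bj) (nsq_phi5 β p f l hβ' hf)
  have hdec : nsq (fun q =>
      (opTens N d Bj *ᵥ (ctrlRot N d (fun t => f (t - l)) *ᵥ
        (opTens N d Ai *ᵥ phi2 N d β p l))) q - (ai * bj) * phi5 N d β p f l q)
      ≤ (Real.sqrt (nsq (opTens N d Bj *ᵥ (ctrlRot N d (fun t => f (t - l)) *ᵥ
            (opTens N d (Ai - ai • (QFT N)ᴴ) *ᵥ phi2 N d β p l))))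
        + Real.sqrt (nsq (fun q => ai * ((opTens N d (Bj - bj • QFT N) *ᵥ zeta β p f l) q)))) ^ 2 := by
    have hfun : (fun q =>
        (opTens N d Bj *ᵥ (ctrlRot N d (fun t => f (t - l)) *ᵥ
          (opTens N d Ai *ᵥ phi2 N d β p l))) q - (ai * bj) * phi5 N d β p f l q)
        = fun q => (opTens N d Bj *ᵥ (ctrlRot N d (fun t => f (t - l)) *ᵥ
            (opTens N d (Ai - ai • (QFT N)ᴴ) *ᵥ phi2 N d β p l))) q
          + ai * ((opTens N d (Bj - bj • QFT N) *ᵥ zeta β p f l) q) :=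
      funext fun q => step_decomp Ai Bj ai bj β p f l q
    rw [hfun]
    exact nsq_add_le _ (fun q => ai * ((opTens N d (Bj - bj • QFT N) *ᵥ zeta β p f l) q))
  have hip : ip (phi5 N d β p f l)
      (opTens N d Bj *ᵥ (ctrlRot N d (fun t => f (t - l)) *ᵥ (opTens N d Ai *ᵥ phi2 N d β p l)))
      = ∑ q, conj (phi5 N d β p f l q)
          * ((opTens N d Bj *ᵥ (ctrlRot N d (fun t => f (t - l)) *ᵥ
              (opTens N d Ai *ᵥ phi2 N d β p l))) q) := rfl
  rw [← hip]
  linarith [hk, hdec]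

end Main

end HHLaux

set_option maxHeartbeats 2000000 in
open HHLaux in
/-- Theorem 4.1 (exact-eigenvalue worst-case HHL with average-case correct QFT):
if `C ∈ S3(η1)` and `P ∈ T3(η2)`, the average fidelity of the noisy HHL state at
step 5 against the ideal one is at least `1 − √η1 − √η2`. -/
theorem hhl_exact_case (N : ℕ) [NeZero N] (η1 η2 : ℝ)
    (hη1 : η1 ∈ Set.Icc (0 : ℝ) 1) (hη2 : η2 ∈ Set.Icc (0 : ℝ) 1)
    (I J : Type) [Fintype I] [Fintype J]
    (A : I → Matrix (ZMod N) (ZMod N) ℂ) (B : J → Matrix (ZMod N) (ZMod N) ℂ)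
    (hKA : ∑ i : I, (A i)ᴴ * A i = 1) (hKB : ∑ j : J, (B j)ᴴ * B j = 1)
    (hS3 : ∑ i : I, ‖(A i * QFT N).trace / (N : ℂ)‖ ^ 2 ≥ 1 - η1)
    (hT3 : ∑ j : J, ‖((QFT N)ᴴ * B j).trace / (N : ℂ)‖ ^ 2 ≥ 1 - η2)
    (d : ℕ) (hd : 1 ≤ d) (β : Fin d → ℂ)
    (hβ : ∑ k : Fin d, ‖β k‖ ^ 2 = 1)
    (p : Fin d → ZMod N) (f : ZMod N → ℝ) (hf : ∀ t, f t ∈ Set.Icc (-1 : ℝ) 1) :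
    (1 / N : ℝ) * ∑ l : ZMod N, ∑ i : I, ∑ j : J,
      ‖∑ q : ZMod N × Fin d × Fin 2,
        (starRingEnd ℂ) (phi5 N d β p f l q) *
          ((opTens N d (B j) *ᵥ (ctrlRot N d (fun t => f (t - l)) *ᵥ
            (opTens N d (A i) *ᵥ phi2 N d β p l))) q)‖ ^ 2
      ≥ 1 - Real.sqrt η1 - Real.sqrt η2 := by
  have hNne : (N:ℕ) ≠ 0 := NeZero.ne N
  have hNpos : (0:ℝ) < N := Nat.cast_pos.mpr (Nat.pos_of_ne_zero hNne)
  have hNC : (N:ℂ) ≠ 0 := Nat.cast_ne_zero.mpr hNne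
  have hβ' : ∑ k, Complex.normSq (β k) = 1 := by
    rw [← hβ]
    exact Finset.sum_congr rfl fun k _ => (Complex.sq_norm _).symm
  have hS3' : 1 - η1 ≤ ∑ i, Complex.normSq ((A i * QFT N).trace / (N:ℂ)) := by
    have h := hS3
    rw [Finset.sum_congr rfl fun i (_ : i ∈ Finset.univ) =>
      Complex.sq_norm ((A i * QFT N).trace / (N:ℂ))] at h
    exact h
  have hT3' : 1 - η2 ≤ ∑ j, Complex.normSq (((QFT N)ᴴ * B j).trace / (N:ℂ)) := by
    have h := hT3
    rw [Finset.sum_congr rfl fun j (_ : j ∈ Finset.univ) =>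
      Complex.sq_norm (((QFT N)ᴴ * B j).trace / (N:ℂ))] at h
    exact h
  have htrA : ∀ i, (A i * QFT N).trace = (N:ℂ) * ((A i * QFT N).trace / (N:ℂ)) := by
    intro i
    field_simp
  have htrB : ∀ j, ((QFT N)ᴴ * B j).trace
      = (N:ℂ) * (((QFT N)ᴴ * B j).trace / (N:ℂ)) := by
    intro j
    field_simp
  -- inner HS computations
  have hUinner : ∑ i, hsSq ((A i - ((A i * QFT N).trace / (N:ℂ)) • (QFT N)ᴴ) * QFT N)
      = N - N * ∑ i, Complex.normSq ((A i * QFT N).trace / (N:ℂ)) := by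
    calc ∑ i, hsSq ((A i - ((A i * QFT N).trace / (N:ℂ)) • (QFT N)ᴴ) * QFT N)
        = ∑ i, (hsSq (A i * QFT N) - N * Complex.normSq ((A i * QFT N).trace / (N:ℂ))) := by
          refine Finset.sum_congr rfl fun i _ => ?_
          rw [Matrix.sub_mul, Matrix.smul_mul, qft_unitary]
          exact hsSq_sub_smul_one _ _ (htrA i)
      _ = (∑ i, hsSq (A i * QFT N)) - N * ∑ i, Complex.normSq ((A i * QFT N).trace / (N:ℂ)) := by
          rw [Finset.sum_sub_distrib, ← Finset.mul_sum]
      _ = N - N * ∑ i, Complex.normSq ((A i * QFT N).trace / (N:ℂ)) := by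
          rw [Finset.sum_congr rfl fun i _ => hsSq_mul_qft (A i), sum_hsSq_kraus A hKA]
  have hVinner : ∑ j, hsSq (B j - (((QFT N)ᴴ * B j).trace / (N:ℂ)) • QFT N)
      = N - N * ∑ j, Complex.normSq (((QFT N)ᴴ * B j).trace / (N:ℂ)) := by
    calc ∑ j, hsSq (B j - (((QFT N)ᴴ * B j).trace / (N:ℂ)) • QFT N)
        = ∑ j, (hsSq (B j) - N * Complex.normSq (((QFT N)ᴴ * B j).trace / (N:ℂ))) :=
          Finset.sum_congr rfl fun j _ => hsSq_sub_smul_qft (B j) _ (htrB j)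
      _ = (∑ j, hsSq (B j)) - N * ∑ j, Complex.normSq (((QFT N)ᴴ * B j).trace / (N:ℂ)) := by
          rw [Finset.sum_sub_distrib, ← Finset.mul_sum]
      _ = _ := by rw [sum_hsSq_kraus B hKB]
  have hUinner0 : 0 ≤ (N:ℝ) - N * ∑ i, Complex.normSq ((A i * QFT N).trace / (N:ℂ)) := by
    rw [← hUinner]
    exact Finset.sum_nonneg fun i _ => hsSq_nonneg _
  have hVinner0 : 0 ≤ (N:ℝ) - N * ∑ j, Complex.normSq (((QFT N)ᴴ * B j).trace / (N:ℂ)) := by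
    rw [← hVinner]
    exact Finset.sum_nonneg fun j _ => hsSq_nonneg _
  have hS1nonneg : 0 ≤ ∑ i, Complex.normSq ((A i * QFT N).trace / (N:ℂ)) :=
    Finset.sum_nonneg fun i _ => Complex.normSq_nonneg _
  have hS1le1 : ∑ i, Complex.normSq ((A i * QFT N).trace / (N:ℂ)) ≤ 1 := by nlinarith [hUinner0, hNpos]
  -- the three big sums
  have hUsum : ∑ l : ZMod N, ∑ i : I, ∑ j : J, nsq (opTens N d (B j) *ᵥ (ctrlRot N d (fun t => f (t - l)) *ᵥ (opTens N d (A i - ((A i * QFT N).trace / (N:ℂ)) • (QFT N)ᴴ) *ᵥ phi2 N d β p l)))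
      = N - N * ∑ i, Complex.normSq ((A i * QFT N).trace / (N:ℂ)) := by
    calc ∑ l : ZMod N, ∑ i : I, ∑ j : J, nsq (opTens N d (B j) *ᵥ (ctrlRot N d (fun t => f (t - l)) *ᵥ (opTens N d (A i - ((A i * QFT N).trace / (N:ℂ)) • (QFT N)ᴴ) *ᵥ phi2 N d β p l)))
        = ∑ l : ZMod N, ∑ i : I,
            nsq (opTens N d (A i - ((A i * QFT N).trace / (N:ℂ)) • (QFT N)ᴴ) *ᵥ phi2 N d β p l) := by
          refine Finset.sum_congr rfl fun l _ => Finset.sum_congr rfl fun i _ => ?_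
          rw [sum_nsq_opTens B hKB]
          exact nsq_ctrlRot _ (fun t => hf (t - l)) _
      _ = ∑ i : I, ∑ l : ZMod N,
            nsq (opTens N d (A i - ((A i * QFT N).trace / (N:ℂ)) • (QFT N)ᴴ) *ᵥ phi2 N d β p l) := Finset.sum_comm
      _ = ∑ i : I, hsSq ((A i - ((A i * QFT N).trace / (N:ℂ)) • (QFT N)ᴴ) * QFT N) :=
          Finset.sum_congr rfl fun i _ => avg_nsq_opTens_phi2 _ β p hβ'
      _ = _ := hUinner
  have hVsum : ∑ l : ZMod N, ∑ i : I, ∑ j : J, nsq (fun q => ((A i * QFT N).trace / (N:ℂ)) * ((opTens N d (B j - (((QFT N)ᴴ * B j).trace / (N:ℂ)) • QFT N) *ᵥ zeta β p f l) q))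
      = (∑ i, Complex.normSq ((A i * QFT N).trace / (N:ℂ))) * ((N:ℝ) - N * ∑ j, Complex.normSq (((QFT N)ᴴ * B j).trace / (N:ℂ))) := by
    calc ∑ l : ZMod N, ∑ i : I, ∑ j : J, nsq (fun q => ((A i * QFT N).trace / (N:ℂ)) * ((opTens N d (B j - (((QFT N)ᴴ * B j).trace / (N:ℂ)) • QFT N) *ᵥ zeta β p f l) q))
        = ∑ l : ZMod N, ∑ i : I, ∑ j : J, Complex.normSq ((A i * QFT N).trace / (N:ℂ))
            * nsq (opTens N d (B j - (((QFT N)ᴴ * B j).trace / (N:ℂ)) • QFT N) *ᵥ zeta β p f l) := by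
          refine Finset.sum_congr rfl fun l _ => Finset.sum_congr rfl fun i _ =>
            Finset.sum_congr rfl fun j _ => ?_
          exact nsq_smul _ _
      _ = ∑ l : ZMod N, (∑ i : I, Complex.normSq ((A i * QFT N).trace / (N:ℂ)))
            * (∑ j : J, nsq (opTens N d (B j - (((QFT N)ᴴ * B j).trace / (N:ℂ)) • QFT N) *ᵥ zeta β p f l)) := by
          refine Finset.sum_congr rfl fun l _ => ?_
          rw [Finset.sum_mul_sum]
      _ = (∑ i : I, Complex.normSq ((A i * QFT N).trace / (N:ℂ))) * ∑ l : ZMod N,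
            (∑ j : J, nsq (opTens N d (B j - (((QFT N)ᴴ * B j).trace / (N:ℂ)) • QFT N) *ᵥ zeta β p f l)) := by
          rw [← Finset.mul_sum]
      _ = (∑ i : I, Complex.normSq ((A i * QFT N).trace / (N:ℂ))) * ∑ j : J,
            (∑ l : ZMod N, nsq (opTens N d (B j - (((QFT N)ᴴ * B j).trace / (N:ℂ)) • QFT N) *ᵥ zeta β p f l)) := by
          rw [Finset.sum_comm]
      _ = (∑ i : I, Complex.normSq ((A i * QFT N).trace / (N:ℂ))) * ∑ j : J, hsSq (B j - (((QFT N)ᴴ * B j).trace / (N:ℂ)) • QFT N) := by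
          rw [Finset.sum_congr rfl fun j _ => avg_nsq_opTens_zeta _ β p f hβ' hf]
      _ = _ := by rw [hVinner]
  have hUb : ∑ l : ZMod N, ∑ i : I, ∑ j : J, nsq (opTens N d (B j) *ᵥ (ctrlRot N d (fun t => f (t - l)) *ᵥ (opTens N d (A i - ((A i * QFT N).trace / (N:ℂ)) • (QFT N)ᴴ) *ᵥ phi2 N d β p l))) ≤ N * η1 := by
    rw [hUsum]
    nlinarith [hS3', hNpos]
  have hVb : ∑ l : ZMod N, ∑ i : I, ∑ j : J, nsq (fun q => ((A i * QFT N).trace / (N:ℂ)) * ((opTens N d (B j - (((QFT N)ᴴ * B j).trace / (N:ℂ)) • QFT N) *ᵥ zeta β p f l) q)) ≤ N * η2 := by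
    rw [hVsum]
    have h1 : (N:ℝ) - N * ∑ j, Complex.normSq (((QFT N)ᴴ * B j).trace / (N:ℂ)) ≤ N * η2 := by
      nlinarith [hT3', hNpos]
    nlinarith [hS1nonneg, hS1le1, hVinner0]
  have hU0 : 0 ≤ ∑ l : ZMod N, ∑ i : I, ∑ j : J, nsq (opTens N d (B j) *ᵥ (ctrlRot N d (fun t => f (t - l)) *ᵥ (opTens N d (A i - ((A i * QFT N).trace / (N:ℂ)) • (QFT N)ᴴ) *ᵥ phi2 N d β p l))) :=
    Finset.sum_nonneg fun l _ => Finset.sum_nonneg fun i _ =>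
      Finset.sum_nonneg fun j _ => nsq_nonneg _
  have hV0 : 0 ≤ ∑ l : ZMod N, ∑ i : I, ∑ j : J, nsq (fun q => ((A i * QFT N).trace / (N:ℂ)) * ((opTens N d (B j - (((QFT N)ᴴ * B j).trace / (N:ℂ)) • QFT N) *ᵥ zeta β p f l) q)) :=
    Finset.sum_nonneg fun l _ => Finset.sum_nonneg fun i _ =>
      Finset.sum_nonneg fun j _ => nsq_nonneg _
  -- total norm of Ψ
  have hΨsum : ∑ l : ZMod N, ∑ i : I, ∑ j : J, nsq (opTens N d (B j) *ᵥ (ctrlRot N d (fun t => f (t - l)) *ᵥ (opTens N d (A i) *ᵥ phi2 N d β p l))) = (N:ℝ) := by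
    have h1 : ∀ l : ZMod N, ∑ i : I, ∑ j : J, nsq (opTens N d (B j) *ᵥ (ctrlRot N d (fun t => f (t - l)) *ᵥ (opTens N d (A i) *ᵥ phi2 N d β p l))) = 1 := by
      intro l
      have h2 : ∀ i : I, ∑ j : J, nsq (opTens N d (B j) *ᵥ (ctrlRot N d (fun t => f (t - l)) *ᵥ (opTens N d (A i) *ᵥ phi2 N d β p l)))
          = nsq (opTens N d (A i) *ᵥ phi2 N d β p l) := by
        intro i
        rw [sum_nsq_opTens B hKB]
        exact nsq_ctrlRot _ (fun t => hf (t - l)) _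
      rw [Finset.sum_congr rfl fun i _ => h2 i, sum_nsq_opTens A hKA, nsq_phi2 β p l hβ']
    rw [Finset.sum_congr rfl fun l _ => h1 l]
    simp [Finset.card_univ, ZMod.card]
  -- Cauchy-Schwarz over the triple index
  have flat : ∀ (h : ZMod N → I → J → ℝ),
      ∑ z : ZMod N × I × J, h z.1 z.2.1 z.2.2 = ∑ l, ∑ i, ∑ j, h l i j := by
    intro h
    rw [Fintype.sum_prod_type]
    exact Finset.sum_congr rfl fun l _ => Fintype.sum_prod_type _
  have hCS : ∑ l : ZMod N, ∑ i : I, ∑ j : J, Real.sqrt (nsq (opTens N d (B j) *ᵥ (ctrlRot N d (fun t => f (t - l)) *ᵥ (opTens N d (A i - ((A i * QFT N).trace / (N:ℂ)) • (QFT N)ᴴ) *ᵥ phi2 N d β p l)))) * Real.sqrt (nsq (fun q => ((A i * QFT N).trace / (N:ℂ)) * ((opTens N d (B j - (((QFT N)ᴴ * B j).trace / (N:ℂ)) • QFT N) *ᵥ zeta β p f l) q)))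
      ≤ Real.sqrt (N * η1) * Real.sqrt (N * η2) := by
    have h1 := Finset.sum_mul_sq_le_sq_mul_sq Finset.univ
      (fun z : ZMod N × I × J => Real.sqrt (nsq (opTens N d (B z.2.2) *ᵥ (ctrlRot N d (fun t => f (t - z.1)) *ᵥ (opTens N d (A z.2.1 - ((A z.2.1 * QFT N).trace / (N:ℂ)) • (QFT N)ᴴ) *ᵥ phi2 N d β p z.1)))))
      (fun z : ZMod N × I × J => Real.sqrt (nsq (fun q => ((A z.2.1 * QFT N).trace / (N:ℂ)) * ((opTens N d (B z.2.2 - (((QFT N)ᴴ * B z.2.2).trace / (N:ℂ)) • QFT N) *ᵥ zeta β p f z.1) q))))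
    have h2 : ∑ z : ZMod N × I × J, Real.sqrt (nsq (opTens N d (B z.2.2) *ᵥ (ctrlRot N d (fun t => f (t - z.1)) *ᵥ (opTens N d (A z.2.1 - ((A z.2.1 * QFT N).trace / (N:ℂ)) • (QFT N)ᴴ) *ᵥ phi2 N d β p z.1)))) ^ 2
        = ∑ l : ZMod N, ∑ i : I, ∑ j : J, nsq (opTens N d (B j) *ᵥ (ctrlRot N d (fun t => f (t - l)) *ᵥ (opTens N d (A i - ((A i * QFT N).trace / (N:ℂ)) • (QFT N)ᴴ) *ᵥ phi2 N d β p l))) := by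
      rw [Finset.sum_congr rfl fun z _ => Real.sq_sqrt (nsq_nonneg _)]
      exact flat (fun l i j => nsq (opTens N d (B j) *ᵥ (ctrlRot N d (fun t => f (t - l)) *ᵥ (opTens N d (A i - ((A i * QFT N).trace / (N:ℂ)) • (QFT N)ᴴ) *ᵥ phi2 N d β p l))))
    have h3 : ∑ z : ZMod N × I × J, Real.sqrt (nsq (fun q => ((A z.2.1 * QFT N).trace / (N:ℂ)) * ((opTens N d (B z.2.2 - (((QFT N)ᴴ * B z.2.2).trace / (N:ℂ)) • QFT N) *ᵥ zeta β p f z.1) q))) ^ 2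
        = ∑ l : ZMod N, ∑ i : I, ∑ j : J, nsq (fun q => ((A i * QFT N).trace / (N:ℂ)) * ((opTens N d (B j - (((QFT N)ᴴ * B j).trace / (N:ℂ)) • QFT N) *ᵥ zeta β p f l) q)) := by
      rw [Finset.sum_congr rfl fun z _ => Real.sq_sqrt (nsq_nonneg _)]
      exact flat (fun l i j => nsq (fun q => ((A i * QFT N).trace / (N:ℂ)) * ((opTens N d (B j - (((QFT N)ᴴ * B j).trace / (N:ℂ)) • QFT N) *ᵥ zeta β p f l) q)))
    rw [h2, h3] at h1
    have h5 : ∑ z : ZMod N × I × J, Real.sqrt (nsq (opTens N d (B z.2.2) *ᵥ (ctrlRot N d (fun t => f (t - z.1)) *ᵥ (opTens N d (A z.2.1 - ((A z.2.1 * QFT N).trace / (N:ℂ)) • (QFT N)ᴴ) *ᵥ phi2 N d β p z.1)))) * Real.sqrt (nsq (fun q => ((A z.2.1 * QFT N).trace / (N:ℂ)) * ((opTens N d (B z.2.2 - (((QFT N)ᴴ * B z.2.2).trace / (N:ℂ)) • QFT N) *ᵥ zeta β p f z.1) q)))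
        ≤ Real.sqrt ((∑ l : ZMod N, ∑ i : I, ∑ j : J, nsq (opTens N d (B j) *ᵥ (ctrlRot N d (fun t => f (t - l)) *ᵥ (opTens N d (A i - ((A i * QFT N).trace / (N:ℂ)) • (QFT N)ᴴ) *ᵥ phi2 N d β p l))))
            * (∑ l : ZMod N, ∑ i : I, ∑ j : J, nsq (fun q => ((A i * QFT N).trace / (N:ℂ)) * ((opTens N d (B j - (((QFT N)ᴴ * B j).trace / (N:ℂ)) • QFT N) *ᵥ zeta β p f l) q)))) :=
      Real.le_sqrt_of_sq_le h1
    calc ∑ l : ZMod N, ∑ i : I, ∑ j : J, Real.sqrt (nsq (opTens N d (B j) *ᵥ (ctrlRot N d (fun t => f (t - l)) *ᵥ (opTens N d (A i - ((A i * QFT N).trace / (N:ℂ)) • (QFT N)ᴴ) *ᵥ phi2 N d β p l)))) * Real.sqrt (nsq (fun q => ((A i * QFT N).trace / (N:ℂ)) * ((opTens N d (B j - (((QFT N)ᴴ * B j).trace / (N:ℂ)) • QFT N) *ᵥ zeta β p f l) q)))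
        = ∑ z : ZMod N × I × J, Real.sqrt (nsq (opTens N d (B z.2.2) *ᵥ (ctrlRot N d (fun t => f (t - z.1)) *ᵥ (opTens N d (A z.2.1 - ((A z.2.1 * QFT N).trace / (N:ℂ)) • (QFT N)ᴴ) *ᵥ phi2 N d β p z.1)))) * Real.sqrt (nsq (fun q => ((A z.2.1 * QFT N).trace / (N:ℂ)) * ((opTens N d (B z.2.2 - (((QFT N)ᴴ * B z.2.2).trace / (N:ℂ)) • QFT N) *ᵥ zeta β p f z.1) q))) :=
          (flat (fun l i j => Real.sqrt (nsq (opTens N d (B j) *ᵥ (ctrlRot N d (fun t => f (t - l)) *ᵥ (opTens N d (A i - ((A i * QFT N).trace / (N:ℂ)) • (QFT N)ᴴ) *ᵥ phi2 N d β p l)))) * Real.sqrt (nsq (fun q => ((A i * QFT N).trace / (N:ℂ)) * ((opTens N d (B j - (((QFT N)ᴴ * B j).trace / (N:ℂ)) • QFT N) *ᵥ zeta β p f l) q))))).symm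
      _ ≤ Real.sqrt ((∑ l : ZMod N, ∑ i : I, ∑ j : J, nsq (opTens N d (B j) *ᵥ (ctrlRot N d (fun t => f (t - l)) *ᵥ (opTens N d (A i - ((A i * QFT N).trace / (N:ℂ)) • (QFT N)ᴴ) *ᵥ phi2 N d β p l))))
            * (∑ l : ZMod N, ∑ i : I, ∑ j : J, nsq (fun q => ((A i * QFT N).trace / (N:ℂ)) * ((opTens N d (B j - (((QFT N)ᴴ * B j).trace / (N:ℂ)) • QFT N) *ᵥ zeta β p f l) q)))) := h5
      _ ≤ Real.sqrt ((N * η1) * (N * η2)) := by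
          refine Real.sqrt_le_sqrt ?_
          exact mul_le_mul hUb hVb hV0 (mul_nonneg hNpos.le hη1.1)
      _ = Real.sqrt (N * η1) * Real.sqrt (N * η2) :=
          Real.sqrt_mul (mul_nonneg hNpos.le hη1.1) _
  -- sum of the per-term bound
  have hper : ∀ (l : ZMod N) (i : I) (j : J),
      nsq (opTens N d (B j) *ᵥ (ctrlRot N d (fun t => f (t - l)) *ᵥ (opTens N d (A i) *ᵥ phi2 N d β p l))) - (Real.sqrt (nsq (opTens N d (B j) *ᵥ (ctrlRot N d (fun t => f (t - l)) *ᵥ (opTens N d (A i - ((A i * QFT N).trace / (N:ℂ)) • (QFT N)ᴴ) *ᵥ phi2 N d β p l)))) + Real.sqrt (nsq (fun q => ((A i * QFT N).trace / (N:ℂ)) * ((opTens N d (B j - (((QFT N)ᴴ * B j).trace / (N:ℂ)) • QFT N) *ᵥ zeta β p f l) q)))) ^ 2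
        ≤ Complex.normSq (∑ q, conj (phi5 N d β p f l q) * ((opTens N d (B j) *ᵥ (ctrlRot N d (fun t => f (t - l)) *ᵥ (opTens N d (A i) *ᵥ phi2 N d β p l))) q)) :=
    fun l i j => per_term (A i) (B j) ((A i * QFT N).trace / (N:ℂ)) (((QFT N)ᴴ * B j).trace / (N:ℂ)) β p f l hβ' hf
  have hmain : (N:ℝ)
      - ∑ l : ZMod N, ∑ i : I, ∑ j : J,
          (Real.sqrt (nsq (opTens N d (B j) *ᵥ (ctrlRot N d (fun t => f (t - l)) *ᵥ (opTens N d (A i - ((A i * QFT N).trace / (N:ℂ)) • (QFT N)ᴴ) *ᵥ phi2 N d β p l)))) + Real.sqrt (nsq (fun q => ((A i * QFT N).trace / (N:ℂ)) * ((opTens N d (B j - (((QFT N)ᴴ * B j).trace / (N:ℂ)) • QFT N) *ᵥ zeta β p f l) q)))) ^ 2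
      ≤ ∑ l : ZMod N, ∑ i : I, ∑ j : J, Complex.normSq (∑ q, conj (phi5 N d β p f l q) * ((opTens N d (B j) *ᵥ (ctrlRot N d (fun t => f (t - l)) *ᵥ (opTens N d (A i) *ᵥ phi2 N d β p l))) q)) := by
    have h1 : (N:ℝ)
        - ∑ l : ZMod N, ∑ i : I, ∑ j : J,
            (Real.sqrt (nsq (opTens N d (B j) *ᵥ (ctrlRot N d (fun t => f (t - l)) *ᵥ (opTens N d (A i - ((A i * QFT N).trace / (N:ℂ)) • (QFT N)ᴴ) *ᵥ phi2 N d β p l)))) + Real.sqrt (nsq (fun q => ((A i * QFT N).trace / (N:ℂ)) * ((opTens N d (B j - (((QFT N)ᴴ * B j).trace / (N:ℂ)) • QFT N) *ᵥ zeta β p f l) q)))) ^ 2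
        = ∑ l : ZMod N, ∑ i : I, ∑ j : J,
            (nsq (opTens N d (B j) *ᵥ (ctrlRot N d (fun t => f (t - l)) *ᵥ (opTens N d (A i) *ᵥ phi2 N d β p l))) - (Real.sqrt (nsq (opTens N d (B j) *ᵥ (ctrlRot N d (fun t => f (t - l)) *ᵥ (opTens N d (A i - ((A i * QFT N).trace / (N:ℂ)) • (QFT N)ᴴ) *ᵥ phi2 N d β p l)))) + Real.sqrt (nsq (fun q => ((A i * QFT N).trace / (N:ℂ)) * ((opTens N d (B j - (((QFT N)ᴴ * B j).trace / (N:ℂ)) • QFT N) *ᵥ zeta β p f l) q)))) ^ 2) := by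
      simp only [Finset.sum_sub_distrib]
      rw [hΨsum]
    rw [h1]
    exact Finset.sum_le_sum fun l _ => Finset.sum_le_sum fun i _ =>
      Finset.sum_le_sum fun j _ => hper l i j
  have hQb : ∑ l : ZMod N, ∑ i : I, ∑ j : J,
      (Real.sqrt (nsq (opTens N d (B j) *ᵥ (ctrlRot N d (fun t => f (t - l)) *ᵥ (opTens N d (A i - ((A i * QFT N).trace / (N:ℂ)) • (QFT N)ᴴ) *ᵥ phi2 N d β p l)))) + Real.sqrt (nsq (fun q => ((A i * QFT N).trace / (N:ℂ)) * ((opTens N d (B j - (((QFT N)ᴴ * B j).trace / (N:ℂ)) • QFT N) *ᵥ zeta β p f l) q)))) ^ 2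
      ≤ N * η1 + 2 * (Real.sqrt (N * η1) * Real.sqrt (N * η2)) + N * η2 := by
    have hexp : ∀ (l : ZMod N) (i : I) (j : J),
        (Real.sqrt (nsq (opTens N d (B j) *ᵥ (ctrlRot N d (fun t => f (t - l)) *ᵥ (opTens N d (A i - ((A i * QFT N).trace / (N:ℂ)) • (QFT N)ᴴ) *ᵥ phi2 N d β p l)))) + Real.sqrt (nsq (fun q => ((A i * QFT N).trace / (N:ℂ)) * ((opTens N d (B j - (((QFT N)ᴴ * B j).trace / (N:ℂ)) • QFT N) *ᵥ zeta β p f l) q)))) ^ 2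
          = nsq (opTens N d (B j) *ᵥ (ctrlRot N d (fun t => f (t - l)) *ᵥ (opTens N d (A i - ((A i * QFT N).trace / (N:ℂ)) • (QFT N)ᴴ) *ᵥ phi2 N d β p l))) + 2 * (Real.sqrt (nsq (opTens N d (B j) *ᵥ (ctrlRot N d (fun t => f (t - l)) *ᵥ (opTens N d (A i - ((A i * QFT N).trace / (N:ℂ)) • (QFT N)ᴴ) *ᵥ phi2 N d β p l)))) * Real.sqrt (nsq (fun q => ((A i * QFT N).trace / (N:ℂ)) * ((opTens N d (B j - (((QFT N)ᴴ * B j).trace / (N:ℂ)) • QFT N) *ᵥ zeta β p f l) q)))) + nsq (fun q => ((A i * QFT N).trace / (N:ℂ)) * ((opTens N d (B j - (((QFT N)ᴴ * B j).trace / (N:ℂ)) • QFT N) *ᵥ zeta β p f l) q)) := by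
      intro l i j
      rw [add_sq, Real.sq_sqrt (nsq_nonneg _), Real.sq_sqrt (nsq_nonneg _)]
      ring
    have hsplit : ∑ l : ZMod N, ∑ i : I, ∑ j : J,
        (Real.sqrt (nsq (opTens N d (B j) *ᵥ (ctrlRot N d (fun t => f (t - l)) *ᵥ (opTens N d (A i - ((A i * QFT N).trace / (N:ℂ)) • (QFT N)ᴴ) *ᵥ phi2 N d β p l)))) + Real.sqrt (nsq (fun q => ((A i * QFT N).trace / (N:ℂ)) * ((opTens N d (B j - (((QFT N)ᴴ * B j).trace / (N:ℂ)) • QFT N) *ᵥ zeta β p f l) q)))) ^ 2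
        = (∑ l : ZMod N, ∑ i : I, ∑ j : J, nsq (opTens N d (B j) *ᵥ (ctrlRot N d (fun t => f (t - l)) *ᵥ (opTens N d (A i - ((A i * QFT N).trace / (N:ℂ)) • (QFT N)ᴴ) *ᵥ phi2 N d β p l))))
          + 2 * (∑ l : ZMod N, ∑ i : I, ∑ j : J,
              Real.sqrt (nsq (opTens N d (B j) *ᵥ (ctrlRot N d (fun t => f (t - l)) *ᵥ (opTens N d (A i - ((A i * QFT N).trace / (N:ℂ)) • (QFT N)ᴴ) *ᵥ phi2 N d β p l)))) * Real.sqrt (nsq (fun q => ((A i * QFT N).trace / (N:ℂ)) * ((opTens N d (B j - (((QFT N)ᴴ * B j).trace / (N:ℂ)) • QFT N) *ᵥ zeta β p f l) q))))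
          + (∑ l : ZMod N, ∑ i : I, ∑ j : J, nsq (fun q => ((A i * QFT N).trace / (N:ℂ)) * ((opTens N d (B j - (((QFT N)ᴴ * B j).trace / (N:ℂ)) • QFT N) *ᵥ zeta β p f l) q))) := by
      rw [Finset.sum_congr rfl fun l _ => Finset.sum_congr rfl fun i _ =>
        Finset.sum_congr rfl fun j _ => hexp l i j]
      simp only [Finset.sum_add_distrib, Finset.mul_sum]
    rw [hsplit]
    have h4 : ∑ l : ZMod N, ∑ i : I, ∑ j : J,
        Real.sqrt (nsq (opTens N d (B j) *ᵥ (ctrlRot N d (fun t => f (t - l)) *ᵥ (opTens N d (A i - ((A i * QFT N).trace / (N:ℂ)) • (QFT N)ᴴ) *ᵥ phi2 N d β p l)))) * Real.sqrt (nsq (fun q => ((A i * QFT N).trace / (N:ℂ)) * ((opTens N d (B j - (((QFT N)ᴴ * B j).trace / (N:ℂ)) • QFT N) *ᵥ zeta β p f l) q)))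
        ≤ Real.sqrt (N * η1) * Real.sqrt (N * η2) := hCS
    linarith [hUb, hVb]
  -- final arithmetic
  rw [ge_iff_le]
  have habs : ∀ (l : ZMod N) (i : I) (j : J),
      ‖∑ q : ZMod N × Fin d × Fin 2,
        (starRingEnd ℂ) (phi5 N d β p f l q) * ((opTens N d (B j) *ᵥ (ctrlRot N d (fun t => f (t - l)) *ᵥ (opTens N d (A i) *ᵥ phi2 N d β p l))) q)‖ ^ 2 = Complex.normSq (∑ q, conj (phi5 N d β p f l q) * ((opTens N d (B j) *ᵥ (ctrlRot N d (fun t => f (t - l)) *ᵥ (opTens N d (A i) *ᵥ phi2 N d β p l))) q)) :=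
    fun l i j => Complex.sq_norm _
  rw [Finset.sum_congr rfl fun l _ => Finset.sum_congr rfl fun i _ =>
    Finset.sum_congr rfl fun j _ => habs l i j]
  have hT0 : 0 ≤ ∑ l : ZMod N, ∑ i : I, ∑ j : J, Complex.normSq (∑ q, conj (phi5 N d β p f l q) * ((opTens N d (B j) *ᵥ (ctrlRot N d (fun t => f (t - l)) *ᵥ (opTens N d (A i) *ᵥ phi2 N d β p l))) q)) :=
    Finset.sum_nonneg fun l _ => Finset.sum_nonneg fun i _ =>
      Finset.sum_nonneg fun j _ => Complex.normSq_nonneg _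
  have hrad1 : Real.sqrt ((N:ℝ) * η1) = Real.sqrt N * Real.sqrt η1 :=
    Real.sqrt_mul hNpos.le η1
  have hrad2 : Real.sqrt ((N:ℝ) * η2) = Real.sqrt N * Real.sqrt η2 :=
    Real.sqrt_mul hNpos.le η2
  have hNN : Real.sqrt (N:ℝ) * Real.sqrt (N:ℝ) = N := Real.mul_self_sqrt hNpos.le
  have hid : (N:ℝ) - (N * η1 + 2 * (Real.sqrt (N * η1) * Real.sqrt (N * η2)) + N * η2)
      = N * (1 - (Real.sqrt η1 + Real.sqrt η2) ^ 2) := by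
    rw [hrad1, hrad2]
    have h2 : (Real.sqrt (N:ℝ) * Real.sqrt η1) * (Real.sqrt (N:ℝ) * Real.sqrt η2)
        = (N:ℝ) * (Real.sqrt η1 * Real.sqrt η2) := by
      calc (Real.sqrt (N:ℝ) * Real.sqrt η1) * (Real.sqrt (N:ℝ) * Real.sqrt η2)
          = (Real.sqrt (N:ℝ) * Real.sqrt (N:ℝ)) * (Real.sqrt η1 * Real.sqrt η2) := by ring
        _ = _ := by rw [hNN]
    rw [h2, add_sq, Real.sq_sqrt hη1.1, Real.sq_sqrt hη2.1]
    ring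
  have hT1 : (N:ℝ) * (1 - (Real.sqrt η1 + Real.sqrt η2) ^ 2)
      ≤ ∑ l : ZMod N, ∑ i : I, ∑ j : J, Complex.normSq (∑ q, conj (phi5 N d β p f l q) * ((opTens N d (B j) *ᵥ (ctrlRot N d (fun t => f (t - l)) *ᵥ (opTens N d (A i) *ᵥ phi2 N d β p l))) q)) := by
    rw [← hid]
    linarith [hmain, hQb]
  rcases le_total (Real.sqrt η1 + Real.sqrt η2) 1 with hc | hc
  · have h7 : 1 - (Real.sqrt η1 + Real.sqrt η2) ^ 2
        ≤ (1 / (N:ℝ)) * ∑ l : ZMod N, ∑ i : I, ∑ j : J, Complex.normSq (∑ q, conj (phi5 N d β p f l q) * ((opTens N d (B j) *ᵥ (ctrlRot N d (fun t => f (t - l)) *ᵥ (opTens N d (A i) *ᵥ phi2 N d β p l))) q)) := by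
      have h6 := mul_le_mul_of_nonneg_left hT1 (le_of_lt (one_div_pos.mpr hNpos))
      rw [show (1/(N:ℝ)) * ((N:ℝ) * (1 - (Real.sqrt η1 + Real.sqrt η2) ^ 2))
          = 1 - (Real.sqrt η1 + Real.sqrt η2) ^ 2 from by field_simp] at h6
      exact h6
    have h8 : (Real.sqrt η1 + Real.sqrt η2) ^ 2 ≤ Real.sqrt η1 + Real.sqrt η2 := by
      nlinarith [Real.sqrt_nonneg η1, Real.sqrt_nonneg η2]
    linarith
  · have h9 : 0 ≤ (1/(N:ℝ)) * ∑ l : ZMod N, ∑ i : I, ∑ j : J, Complex.normSq (∑ q, conj (phi5 N d β p f l q) * ((opTens N d (B j) *ᵥ (ctrlRot N d (fun t => f (t - l)) *ᵥ (opTens N d (A i) *ᵥ phi2 N d β p l))) q)) :=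
      mul_nonneg (by positivity) hT0
    linarith
end
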